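/- arXiv:1811.05207 — 5 statements merged into one kernel-verified Lean document; each statement's English description precedes it below -/
import Mathlib

section
/- The map T is injective on E: if φ = (φ_1,…,φ_N) and ψ = (ψ_1,…,ψ_N) belong to E and T_i(φ) = T_i(ψ) m_i-a.e. for every i = 1,…,N, then φ_i = ψ_i m_i-a.e. for every i. -/
open MeasureTheory Filter
open scoped ENNReal

noncomputable section

/-- The density kernel `γ_φ(x) = K(x) exp(∑_j φ_j(x_j))`. -/
def gammaFn {N : ℕ} {X : Fin N → Type*} (K : (∀ i, X i) → ℝ) (φ : ∀ i, X i → ℝ)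
    (x : ∀ i, X i) : ℝ :=
  K x * Real.exp (∑ j, φ j (x j))

/-- `T_i(φ)(x_i) = ∫_{X_{-i}} K(x_i, x_{-i}) exp(∑_j φ_j(x_j)) dm_{-i}(x_{-i})`.
Since every `m j` is a probability measure, integrating over the full product
(with the `i`-th coordinate replaced by `x_i` via `Function.update`) agrees with
integrating over `∏_{j ≠ i} X_j`. -/
def schrT {N : ℕ} {X : Fin N → Type*} [∀ i, MeasurableSpace (X i)]
    (m : ∀ i, Measure (X i)) (K : (∀ i, X i) → ℝ) (φ : ∀ i, X i → ℝ)
    (i : Fin N) (xi : X i) : ℝ :=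
  ∫ y, gammaFn K φ (Function.update y i xi) ∂Measure.pi m

/-- `L_{φ,i}(h)(x_i)`, the conditional-expectation type operator obtained by
linearizing the Schrödinger system. -/
def schrL {N : ℕ} {X : Fin N → Type*} [∀ i, MeasurableSpace (X i)]
    (m : ∀ i, Measure (X i)) (K : (∀ i, X i) → ℝ) (φ h : ∀ i, X i → ℝ)
    (i : Fin N) (xi : X i) : ℝ :=
  (∫ y, gammaFn K φ (Function.update y i xi) *
      ∑ j ∈ Finset.univ.erase i, h j (Function.update y i xi j) ∂Measure.pi m) /
  (∫ y, gammaFn K φ (Function.update y i xi) ∂Measure.pi m)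

/-- A tuple of essentially bounded measurable functions. -/
def BddTuple {N : ℕ} {X : Fin N → Type*} [∀ i, MeasurableSpace (X i)]
    (m : ∀ i, Measure (X i)) (φ : ∀ i, X i → ℝ) : Prop :=
  ∀ i, Measurable (φ i) ∧ MemLp (φ i) ⊤ (m i)

/-- Membership in `E`: essentially bounded measurable tuples with
`∫ φ_i dm_i = 0` for `i = 1, …, N-1` (i.e. all but the last index). -/
def InE {N : ℕ} {X : Fin N → Type*} [∀ i, MeasurableSpace (X i)]
    (m : ∀ i, Measure (X i)) (φ : ∀ i, X i → ℝ) : Prop :=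
  BddTuple m φ ∧ ∀ i : Fin N, (i : ℕ) < N - 1 → ∫ x, φ i x ∂m i = 0

/-- Membership in `F`: essentially bounded measurable tuples whose integrals all coincide. -/
def InF {N : ℕ} {X : Fin N → Type*} [∀ i, MeasurableSpace (X i)]
    (m : ∀ i, Measure (X i)) (μ : ∀ i, X i → ℝ) : Prop :=
  BddTuple m μ ∧ ∀ i j, ∫ x, μ i x ∂m i = ∫ x, μ j x ∂m j

/-- Membership in `F_{++}`: members of `F` which are bounded away from `0`. -/
def InFpp {N : ℕ} {X : Fin N → Type*} [∀ i, MeasurableSpace (X i)]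
    (m : ∀ i, Measure (X i)) (μ : ∀ i, X i → ℝ) : Prop :=
  InF m μ ∧ ∀ i, ∃ c : ℝ, 0 < c ∧ ∀ᵐ x ∂m i, c ≤ μ i x

/-- Membership in `F_{++,M}`: members of `F_{++}` with `1/M ≤ μ_i ≤ M` a.e. -/
def InFppM {N : ℕ} {X : Fin N → Type*} [∀ i, MeasurableSpace (X i)]
    (m : ∀ i, Measure (X i)) (M : ℝ) (μ : ∀ i, X i → ℝ) : Prop :=
  InFpp m μ ∧ ∀ i, ∀ᵐ x ∂m i, 1 / M ≤ μ i x ∧ μ i x ≤ M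

end

section AuxMP

variable {N : ℕ} {X : Fin N → Type*} [∀ i, MeasurableSpace (X i)]
  (m : ∀ i, MeasureTheory.Measure (X i)) [∀ i, MeasureTheory.IsProbabilityMeasure (m i)]

/-- The map `(t, y) ↦ update y i t` is measure preserving. -/
lemma mp_update (i : Fin N) :
    MeasurePreserving (fun p : X i × (∀ j, X j) => Function.update p.2 i p.1)
      ((m i).prod (MeasureTheory.Measure.pi m)) (MeasureTheory.Measure.pi m) := by
  have hmeas : Measurable (fun p : X i × (∀ j, X j) => Function.update p.2 i p.1) :=
    measurable_update'.comp measurable_swap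
  refine ⟨hmeas, ?_⟩
  refine (Measure.pi_eq fun s hs => ?_).symm
  rw [Measure.map_apply hmeas (MeasurableSet.univ_pi hs)]
  have hpre : (fun p : X i × (∀ j, X j) => Function.update p.2 i p.1) ⁻¹' Set.pi Set.univ s
      = (s i) ×ˢ (Set.pi Set.univ (Function.update s i Set.univ)) := by
    ext p
    simp only [Set.mem_preimage, Set.mem_pi, Set.mem_univ, true_implies, Set.mem_prod]
    constructor
    · intro hj
      refine ⟨by simpa using hj i, fun j => ?_⟩
      rcases eq_or_ne j i with rfl | hne
      · simp
      · simpa [Function.update_of_ne hne] using hj j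
    · rintro ⟨h1, h2⟩ j
      rcases eq_or_ne j i with rfl | hne
      · simpa using h1
      · have := h2 j
        rw [Function.update_of_ne hne] at this
        rwa [Function.update_of_ne hne]
  rw [hpre, Measure.prod_prod, Measure.pi_pi]
  rw [← Finset.mul_prod_erase Finset.univ (fun j => m j (s j)) (Finset.mem_univ i)]
  congr 1
  rw [← Finset.mul_prod_erase Finset.univ
    (fun j => m j (Function.update s i Set.univ j)) (Finset.mem_univ i)]
  rw [Function.update_self, measure_univ, one_mul]
  exact Finset.prod_congr rfl fun j hj => by
    rw [Function.update_of_ne (Finset.ne_of_mem_erase hj)]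

end AuxMP

/-- The map `T` is injective on `E`. -/
theorem schrT_injective_on_E
    {N : ℕ} (hN : 2 ≤ N) {X : Fin N → Type*} [∀ i, MeasurableSpace (X i)]
    (m : ∀ i, MeasureTheory.Measure (X i)) [∀ i, MeasureTheory.IsProbabilityMeasure (m i)]
    (K : (∀ i, X i) → ℝ) (a b : ℝ) (ha : 0 < a) (hab : a ≤ b)
    (hK : Measurable K) (hKb : ∀ᵐ x ∂MeasureTheory.Measure.pi m, a ≤ K x ∧ K x ≤ b)
    (φ ψ : ∀ i, X i → ℝ) (hφ : InE m φ) (hψ : InE m ψ)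
    (h : ∀ i, schrT m K φ i =ᵐ[m i] schrT m K ψ i) :
    ∀ i, φ i =ᵐ[m i] ψ i := by
  have hφb := hφ.1
  have hψb := hψ.1
  have habs : ∀ u v : ℝ, |u - v| ≤ |u| + |v| := fun u v => by
    simpa [sub_eq_add_neg, abs_neg] using abs_add_le u (-v)
  -- a.e. bounds on the coordinates
  have hbound : ∀ (χ : ∀ i, X i → ℝ), BddTuple m χ →
      ∃ C : ℝ, ∀ k, ∀ᵐ x ∂m k, |χ k x| ≤ C := by
    intro χ hχ
    have h1 : ∀ k, ∃ C : ℝ, ∀ᵐ x ∂m k, |χ k x| ≤ C := by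
      intro k
      refine ⟨(eLpNormEssSup (χ k) (m k)).toReal, ?_⟩
      have hfin : eLpNormEssSup (χ k) (m k) ≠ ⊤ := by
        have h2 := (hχ k).2.2
        rw [eLpNorm_exponent_top] at h2
        exact h2.ne
      filter_upwards [ae_le_eLpNormEssSup (f := χ k) (μ := m k)] with x hx
      have h3 := ENNReal.toReal_mono hfin hx
      simpa [Real.norm_eq_abs] using h3
    choose C hC using h1
    refine ⟨∑ k, |C k|, fun k => ?_⟩
    filter_upwards [hC k] with x hx
    calc |χ k x| ≤ C k := hx
      _ ≤ |C k| := le_abs_self _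
      _ ≤ ∑ j, |C j| :=
        Finset.single_le_sum (f := fun j => |C j|) (fun j _ => abs_nonneg _) (Finset.mem_univ k)
  obtain ⟨Cφ, hCφ⟩ := hbound φ hφb
  obtain ⟨Cψ, hCψ⟩ := hbound ψ hψb
  -- measurability of sums and gammas
  have hSφm : Measurable fun x : ∀ j, X j => ∑ j, φ j (x j) :=
    Finset.measurable_sum _ fun j _ => (hφb j).1.comp (measurable_pi_apply j)
  have hSψm : Measurable fun x : ∀ j, X j => ∑ j, ψ j (x j) :=
    Finset.measurable_sum _ fun j _ => (hψb j).1.comp (measurable_pi_apply j)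
  have hγφm : Measurable (gammaFn K φ) := hK.mul (Real.measurable_exp.comp hSφm)
  have hγψm : Measurable (gammaFn K ψ) := hK.mul (Real.measurable_exp.comp hSψm)
  -- a.e. bounds on sums over the product space
  have hSb : ∀ (χ : ∀ i, X i → ℝ) (C : ℝ), (∀ k, ∀ᵐ x ∂m k, |χ k x| ≤ C) →
      ∀ᵐ x ∂MeasureTheory.Measure.pi m, |∑ j, χ j (x j)| ≤ N * C := by
    intro χ C hC
    have h1 : ∀ᵐ x ∂MeasureTheory.Measure.pi m, ∀ j, |χ j (x j)| ≤ C :=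
      ae_all_iff.2 fun j => Measure.tendsto_eval_ae_ae.eventually (hC j)
    filter_upwards [h1] with x hx
    calc |∑ j, χ j (x j)| ≤ ∑ j, |χ j (x j)| := Finset.abs_sum_le_sum_abs _ _
      _ ≤ ∑ _j : Fin N, C := Finset.sum_le_sum fun j _ => hx j
      _ = N * C := by simp [Finset.sum_const, Finset.card_univ, nsmul_eq_mul]
  have hSφb := hSb φ Cφ hCφ
  have hSψb := hSb ψ Cψ hCψ
  -- a.e. bounds on gammas
  have hγb : ∀ (χ : ∀ i, X i → ℝ) (C : ℝ),
      (∀ᵐ x ∂MeasureTheory.Measure.pi m, |∑ j, χ j (x j)| ≤ C) →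
      ∀ᵐ x ∂MeasureTheory.Measure.pi m, |gammaFn K χ x| ≤ b * Real.exp C := by
    intro χ C hC
    filter_upwards [hKb, hC] with x hx hs
    have hKpos : 0 < K x := lt_of_lt_of_le ha hx.1
    have he : Real.exp (∑ j, χ j (x j)) ≤ Real.exp C :=
      Real.exp_le_exp.2 (le_trans (le_abs_self _) hs)
    have h1 : |gammaFn K χ x| = K x * Real.exp (∑ j, χ j (x j)) := by
      rw [gammaFn, abs_mul, abs_of_pos hKpos, abs_of_pos (Real.exp_pos _)]
    rw [h1]
    exact mul_le_mul hx.2 he (Real.exp_pos _).le (ha.le.trans hab)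
  have hγφb := hγb φ (N * Cφ) hSφb
  have hγψb := hγb ψ (N * Cψ) hSψb
  -- integrability helper
  have hintM : ∀ (g : (∀ j, X j) → ℝ) (C : ℝ), Measurable g →
      (∀ᵐ x ∂MeasureTheory.Measure.pi m, |g x| ≤ C) →
      Integrable g (MeasureTheory.Measure.pi m) := fun g C hg hgb =>
    Integrable.mono' (integrable_const C) hg.aestronglyMeasurable
      (by simpa [Real.norm_eq_abs] using hgb)
  -- a.e. bound on the difference φ i - ψ i
  have hhb : ∀ i : Fin N, ∀ᵐ t ∂m i, |φ i t - ψ i t| ≤ Cφ + Cψ := by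
    intro i
    filter_upwards [hCφ i, hCψ i] with t h1 h2
    exact (habs _ _).trans (add_le_add h1 h2)
  -- integrability of γ_χ · (φ_i - ψ_i)(x_i) on the product space
  have keyint : ∀ (χ : ∀ i, X i → ℝ), Measurable (gammaFn K χ) → ∀ (Cγ : ℝ),
      (∀ᵐ x ∂MeasureTheory.Measure.pi m, |gammaFn K χ x| ≤ Cγ) → ∀ i : Fin N,
      Integrable (fun x => gammaFn K χ x * (φ i (x i) - ψ i (x i)))
        (MeasureTheory.Measure.pi m) := by
    intro χ hγm Cγ hγ i
    have hhm : Measurable fun t : X i => φ i t - ψ i t := (hφb i).1.sub (hψb i).1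
    refine hintM _ (Cγ * (Cφ + Cψ)) (hγm.mul (hhm.comp (measurable_pi_apply i))) ?_
    filter_upwards [hγ, Measure.tendsto_eval_ae_ae.eventually (hhb i)] with x h1 h2
    rw [abs_mul]
    exact mul_le_mul h1 h2 (abs_nonneg _) ((abs_nonneg _).trans h1)
  -- the key Fubini identity
  have key : ∀ (χ : ∀ i, X i → ℝ), Measurable (gammaFn K χ) → ∀ (Cγ : ℝ),
      (∀ᵐ x ∂MeasureTheory.Measure.pi m, |gammaFn K χ x| ≤ Cγ) → ∀ i : Fin N,
      ∫ t, schrT m K χ i t * (φ i t - ψ i t) ∂m i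
        = ∫ x, gammaFn K χ x * (φ i (x i) - ψ i (x i)) ∂MeasureTheory.Measure.pi m := by
    intro χ hγm Cγ hγ i
    have hhm : Measurable fun t : X i => φ i t - ψ i t := (hφb i).1.sub (hψb i).1
    have hgm : Measurable fun x : ∀ j, X j => gammaFn K χ x * (φ i (x i) - ψ i (x i)) :=
      hγm.mul (hhm.comp (measurable_pi_apply i))
    have hγb' : ∀ᵐ p ∂((m i).prod (MeasureTheory.Measure.pi m)),
        |gammaFn K χ (Function.update p.2 i p.1)| ≤ Cγ := by
      have h0 := hγ
      rw [← (mp_update m i).map_eq] at h0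
      exact ae_of_ae_map (mp_update m i).measurable.aemeasurable h0
    have hhb' : ∀ᵐ p ∂((m i).prod (MeasureTheory.Measure.pi m)),
        |φ i p.1 - ψ i p.1| ≤ Cφ + Cψ := by
      have hmap : Measure.map Prod.fst ((m i).prod (MeasureTheory.Measure.pi m)) = m i := by
        rw [Measure.map_fst_prod]; simp
      have h0 := hhb i
      rw [← hmap] at h0
      exact ae_of_ae_map measurable_fst.aemeasurable h0
    have hint : Integrable (fun p : X i × (∀ j, X j) =>
        gammaFn K χ (Function.update p.2 i p.1) * (φ i p.1 - ψ i p.1))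
        ((m i).prod (MeasureTheory.Measure.pi m)) := by
      refine Integrable.mono' (integrable_const (Cγ * (Cφ + Cψ)))
        ((hγm.comp (mp_update m i).measurable).mul
          (hhm.comp measurable_fst)).aestronglyMeasurable ?_
      filter_upwards [hγb', hhb'] with p h1 h2
      rw [Real.norm_eq_abs, abs_mul]
      exact mul_le_mul h1 h2 (abs_nonneg _) ((abs_nonneg _).trans h1)
    have hfm : AEStronglyMeasurable (fun x : ∀ j, X j =>
        gammaFn K χ x * (φ i (x i) - ψ i (x i)))
        (Measure.map (fun p : X i × (∀ j, X j) => Function.update p.2 i p.1)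
          ((m i).prod (MeasureTheory.Measure.pi m))) := by
      rw [(mp_update m i).map_eq]; exact hgm.aestronglyMeasurable
    have h1 : ∫ x, gammaFn K χ x * (φ i (x i) - ψ i (x i)) ∂MeasureTheory.Measure.pi m
        = ∫ p : X i × (∀ j, X j),
            gammaFn K χ (Function.update p.2 i p.1) * (φ i p.1 - ψ i p.1)
            ∂((m i).prod (MeasureTheory.Measure.pi m)) := by
      conv_lhs => rw [← (mp_update m i).map_eq]
      rw [integral_map (mp_update m i).measurable.aemeasurable hfm]
      simp only [Function.update_self]
    rw [h1, integral_prod _ hint]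
    refine integral_congr_ae (Eventually.of_forall fun t => ?_)
    show schrT m K χ i t * (φ i t - ψ i t)
        = ∫ y, gammaFn K χ (Function.update y i t) * (φ i t - ψ i t) ∂MeasureTheory.Measure.pi m
    rw [integral_mul_const]
    rfl
  -- the integral of (γ_φ - γ_ψ) · ∑ (φ_k - ψ_k)(x_k) vanishes
  have hzero : ∫ x, (gammaFn K φ x - gammaFn K ψ x) * (∑ k, (φ k (x k) - ψ k (x k)))
      ∂MeasureTheory.Measure.pi m = 0 := by
    have e1 : ∀ x : ∀ j, X j,
        (gammaFn K φ x - gammaFn K ψ x) * (∑ k, (φ k (x k) - ψ k (x k)))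
          = ∑ k, (gammaFn K φ x * (φ k (x k) - ψ k (x k))
              - gammaFn K ψ x * (φ k (x k) - ψ k (x k))) := by
      intro x
      rw [Finset.mul_sum]
      exact Finset.sum_congr rfl fun k _ => by ring
    simp_rw [e1]
    have hdiffint : ∀ k ∈ (Finset.univ : Finset (Fin N)), Integrable
        (fun x => gammaFn K φ x * (φ k (x k) - ψ k (x k))
          - gammaFn K ψ x * (φ k (x k) - ψ k (x k))) (MeasureTheory.Measure.pi m) :=
      fun k _ => (keyint φ hγφm _ hγφb k).sub (keyint ψ hγψm _ hγψb k)
    rw [integral_finset_sum _ hdiffint]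
    refine Finset.sum_eq_zero fun k _ => ?_
    rw [integral_sub (keyint φ hγφm _ hγφb k) (keyint ψ hγψm _ hγψb k),
      ← key φ hγφm _ hγφb k, ← key ψ hγψm _ hγψb k]
    have : ∫ t, schrT m K φ k t * (φ k t - ψ k t) ∂m k
        = ∫ t, schrT m K ψ k t * (φ k t - ψ k t) ∂m k :=
      integral_congr_ae ((h k).mono fun t ht => by simp only [ht])
    rw [this, sub_self]
  -- rewrite γ_φ - γ_ψ
  have hgd : ∀ x : ∀ j, X j, gammaFn K φ x - gammaFn K ψ x
      = K x * (Real.exp (∑ j, φ j (x j)) - Real.exp (∑ j, ψ j (x j))) := by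
    intro x; simp only [gammaFn]; ring
  -- nonnegativity
  have hnn : ∀ᵐ x ∂MeasureTheory.Measure.pi m,
      0 ≤ (gammaFn K φ x - gammaFn K ψ x) * (∑ k, (φ k (x k) - ψ k (x k))) := by
    filter_upwards [hKb] with x hx
    rw [hgd x, Finset.sum_sub_distrib, mul_assoc]
    refine mul_nonneg (ha.trans_le hx.1).le ?_
    rcases le_total (∑ j, φ j (x j)) (∑ j, ψ j (x j)) with hle | hle
    · have h1 : Real.exp (∑ j, φ j (x j)) ≤ Real.exp (∑ j, ψ j (x j)) :=
        Real.exp_le_exp.2 hle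
      nlinarith
    · have h1 : Real.exp (∑ j, ψ j (x j)) ≤ Real.exp (∑ j, φ j (x j)) :=
        Real.exp_le_exp.2 hle
      nlinarith
  -- integrability of the product
  have hGint : Integrable
      (fun x => (gammaFn K φ x - gammaFn K ψ x) * (∑ k, (φ k (x k) - ψ k (x k))))
      (MeasureTheory.Measure.pi m) := by
    have hFm : Measurable fun x : ∀ j, X j => ∑ k, (φ k (x k) - ψ k (x k)) :=
      Finset.measurable_sum _ fun k _ =>
        ((hφb k).1.comp (measurable_pi_apply k)).sub ((hψb k).1.comp (measurable_pi_apply k))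
    have hb0 : (0:ℝ) < b := ha.trans_le hab
    refine hintM _ ((b * Real.exp (N * Cφ) + b * Real.exp (N * Cψ)) * (N * Cφ + N * Cψ))
      ((hγφm.sub hγψm).mul hFm) ?_
    filter_upwards [hγφb, hγψb, hSφb, hSψb] with x h1 h2 h3 h4
    rw [abs_mul]
    have e2 : (∑ k, (φ k (x k) - ψ k (x k)))
        = (∑ j, φ j (x j)) - (∑ j, ψ j (x j)) := Finset.sum_sub_distrib _ _
    refine mul_le_mul ((habs _ _).trans (add_le_add h1 h2)) ?_ (abs_nonneg _)
      (add_nonneg (mul_nonneg hb0.le (Real.exp_pos _).le)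
        (mul_nonneg hb0.le (Real.exp_pos _).le))
    rw [e2]
    exact (habs _ _).trans (add_le_add h3 h4)
  -- conclude ∑ (φ_k - ψ_k)(x_k) = 0 a.e.
  have hGzero := (integral_eq_zero_iff_of_nonneg_ae hnn hGint).1 hzero
  have hF : ∀ᵐ x ∂MeasureTheory.Measure.pi m, ∑ k, (φ k (x k) - ψ k (x k)) = 0 := by
    filter_upwards [hGzero, hKb] with x h0 hx
    simp only [Pi.zero_apply] at h0
    by_contra hne
    rw [hgd x, Finset.sum_sub_distrib, mul_assoc] at h0
    have hKpos : 0 < K x := ha.trans_le hx.1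
    have h2 : (Real.exp (∑ j, φ j (x j)) - Real.exp (∑ j, ψ j (x j)))
        * ((∑ j, φ j (x j)) - (∑ j, ψ j (x j))) = 0 := by
      rcases mul_eq_zero.1 h0 with h' | h'
      · exact absurd h' hKpos.ne'
      · exact h'
    rcases lt_trichotomy (∑ j, φ j (x j)) (∑ j, ψ j (x j)) with hlt | he | hgt
    · nlinarith [Real.exp_lt_exp.2 hlt]
    · exact hne (by rw [Finset.sum_sub_distrib, he, sub_self])
    · nlinarith [Real.exp_lt_exp.2 hgt]
  -- each difference is a.e. constant
  have hstep : ∀ j : Fin N, ∃ c : ℝ, ∀ᵐ t ∂m j, φ j t - ψ j t = c := by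
    intro j
    have h1 : ∀ᵐ p ∂((m j).prod (MeasureTheory.Measure.pi m)),
        ∑ k, (φ k (Function.update p.2 j p.1 k) - ψ k (Function.update p.2 j p.1 k)) = 0 := by
      have h0 := hF
      rw [← (mp_update m j).map_eq] at h0
      exact ae_of_ae_map (mp_update m j).measurable.aemeasurable h0
    have h2 : ∀ p : X j × (∀ k, X k),
        ∑ k, (φ k (Function.update p.2 j p.1 k) - ψ k (Function.update p.2 j p.1 k))
          = (φ j p.1 - ψ j p.1) + ∑ k ∈ Finset.univ.erase j, (φ k (p.2 k) - ψ k (p.2 k)) := by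
      intro p
      rw [← Finset.add_sum_erase Finset.univ _ (Finset.mem_univ j), Function.update_self]
      congr 1
      exact Finset.sum_congr rfl fun k hk => by
        rw [Function.update_of_ne (Finset.ne_of_mem_erase hk)]
    simp_rw [h2] at h1
    have h3 := Measure.ae_ae_of_ae_prod h1
    haveI : (ae (m j)).NeBot := ae_neBot.2 (IsProbabilityMeasure.ne_zero (m j))
    haveI : (ae (MeasureTheory.Measure.pi m)).NeBot :=
      ae_neBot.2 (IsProbabilityMeasure.ne_zero _)
    obtain ⟨t₀, ht₀⟩ := h3.exists
    refine ⟨φ j t₀ - ψ j t₀, ?_⟩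
    filter_upwards [h3] with t ht
    obtain ⟨y, hy1, hy2⟩ := (ht.and ht₀).exists
    linarith
  choose c hc using hstep
  -- the constants sum to zero
  haveI : (ae (MeasureTheory.Measure.pi m)).NeBot :=
    ae_neBot.2 (IsProbabilityMeasure.ne_zero _)
  have hsum : ∑ k, c k = 0 := by
    have h1 : ∀ᵐ y ∂MeasureTheory.Measure.pi m, ∀ k, φ k (y k) - ψ k (y k) = c k :=
      ae_all_iff.2 fun k => Measure.tendsto_eval_ae_ae.eventually (hc k)
    obtain ⟨y, hy1, hy2⟩ := (h1.and hF).exists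
    calc ∑ k, c k = ∑ k, (φ k (y k) - ψ k (y k)) :=
          Finset.sum_congr rfl fun k _ => (hy1 k).symm
      _ = 0 := hy2
  -- constants with small index vanish
  have hc0small : ∀ j : Fin N, (j : ℕ) < N - 1 → c j = 0 := by
    intro j hj
    have hintφ : Integrable (φ j) (m j) := (hφb j).2.integrable le_top
    have hintψ : Integrable (ψ j) (m j) := (hψb j).2.integrable le_top
    have h1 : ∫ t, (φ j t - ψ j t) ∂m j = 0 := by
      rw [integral_sub hintφ hintψ, hφ.2 j hj, hψ.2 j hj, sub_self]
    have h2 : ∫ t, (φ j t - ψ j t) ∂m j = c j := by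
      rw [integral_congr_ae (hc j)]
      simp
    rw [← h2, h1]
  -- all constants vanish
  have hc0 : ∀ j, c j = 0 := by
    intro j
    by_cases hj : (j : ℕ) < N - 1
    · exact hc0small j hj
    · have hje : ∀ k ∈ Finset.univ.erase j, c k = 0 := by
        intro k hk
        refine hc0small k ?_
        have hkj : (k : ℕ) ≠ (j : ℕ) := fun hh => Finset.ne_of_mem_erase hk (Fin.ext hh)
        have hk2 := k.2
        have hj2 := j.2
        omega
      have h1 := hsum
      rw [← Finset.add_sum_erase Finset.univ c (Finset.mem_univ j),
        Finset.sum_eq_zero hje, add_zero] at h1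
      exact h1
  intro i
  filter_upwards [hc i] with t ht
  have := hc0 i
  linarith
end

section
/- If φ = (φ_1,…,φ_N) and ψ = (ψ_1,…,ψ_N) are tuples of essentially bounded measurable functions (not necessarily normalized) with T_i(φ) = T_i(ψ) m_i-a.e. for every i = 1,…,N, then Σ_{i=1}^N φ_i(x_i) = Σ_{i=1}^N ψ_i(x_i) for m-a.e. x = (x_1,…,x_N) ∈ X. -/
open MeasureTheory Filter
open scoped ENNReal

section Aux

open MeasureTheory Filter

variable {α : Type*} [MeasurableSpace α] {μ : MeasureTheory.Measure α}

lemma my_integrable_of_ae_bound [IsFiniteMeasure μ] {f : α → ℝ} (hm : Measurable f)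
    {C : ℝ} (h : ∀ᵐ x ∂μ, |f x| ≤ C) : Integrable f μ :=
  (integrable_const C).mono' hm.aestronglyMeasurable (by simpa [Real.norm_eq_abs] using h)

lemma my_exists_ae_abs_le {f : α → ℝ} (hf : MemLp f ⊤ μ) :
    ∃ C : ℝ, ∀ᵐ x ∂μ, |f x| ≤ C := by
  refine ⟨(eLpNormEssSup f μ).toReal, ?_⟩
  have h2 := hf.2
  rw [eLpNorm_exponent_top] at h2
  filter_upwards [ae_le_eLpNormEssSup (f := f) (μ := μ)] with x hx
  have hle : ((‖f x‖₊ : ℝ≥0∞)).toReal ≤ (eLpNormEssSup f μ).toReal :=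
    ENNReal.toReal_mono h2.ne hx
  simpa [Real.norm_eq_abs] using hle

variable {n : ℕ} {X : Fin (n + 1) → Type*} [∀ i, MeasurableSpace (X i)]

lemma my_update_insertNth (i : Fin (n + 1)) (s t : X i) (z : ∀ j, X (i.succAbove j)) :
    Function.update (i.insertNth s z) i t = i.insertNth t z := by
  funext j
  rcases eq_or_ne j i with rfl | hj
  · simp
  · rw [Function.update_of_ne hj]
    obtain ⟨k, rfl⟩ := Fin.exists_succAbove_eq hj
    simp

lemma my_integral_update_pi (m : ∀ i, MeasureTheory.Measure (X i))
    [∀ i, IsProbabilityMeasure (m i)]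
    (i : Fin (n + 1)) {f : (∀ j, X j) → ℝ} (hmeas : Measurable f)
    (hint : Integrable f (MeasureTheory.Measure.pi m)) :
    ∫ x, f x ∂MeasureTheory.Measure.pi m
      = ∫ t, ∫ y, f (Function.update y i t) ∂MeasureTheory.Measure.pi m ∂m i := by
  classical
  set π' : MeasureTheory.Measure (∀ j, X (i.succAbove j)) :=
    MeasureTheory.Measure.pi fun j => m (i.succAbove j) with hπ'
  have mp := MeasureTheory.measurePreserving_piFinSuccAbove m i
  set e := MeasurableEquiv.piFinSuccAbove X i with he
  have hmap : MeasureTheory.Measure.map e.symm ((m i).prod π') = MeasureTheory.Measure.pi m :=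
    (mp.symm e).map_eq
  have hesymm : ∀ (t : X i) (z : ∀ j, X (i.succAbove j)), e.symm (t, z) = i.insertNth t z :=
    fun t z => rfl
  have step2 : ∀ t : X i,
      (∫ y, f (Function.update y i t) ∂MeasureTheory.Measure.pi m)
        = ∫ z, f (i.insertNth t z) ∂π' := by
    intro t
    have hg : Measurable fun z : ∀ j, X (i.succAbove j) => f (i.insertNth t z) := by
      have hz : Measurable fun z : ∀ j, X (i.succAbove j) => e.symm (t, z) :=
        e.symm.measurable.comp measurable_prodMk_left
      simpa [hesymm, Function.comp_def] using hmeas.comp hz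
    have hup : Measurable fun y : ∀ j, X j => Function.update y i t :=
      measurable_update'.comp (measurable_id.prodMk measurable_const)
    have hsnd : MeasureTheory.Measure.map Prod.snd ((m i).prod π') = π' := by
      rw [MeasureTheory.Measure.map_snd_prod]; simp
    calc (∫ y, f (Function.update y i t) ∂MeasureTheory.Measure.pi m)
        = ∫ p, f (Function.update (e.symm p) i t) ∂((m i).prod π') :=
          ((mp.symm e).integral_comp' fun y => f (Function.update y i t)).symm
      _ = ∫ p : X i × ∀ j, X (i.succAbove j), f (i.insertNth t p.2) ∂((m i).prod π') := by
          refine integral_congr_ae (Eventually.of_forall fun p => ?_)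
          show f (Function.update (e.symm p) i t) = f (i.insertNth t p.2)
          rw [show e.symm p = i.insertNth p.1 p.2 from rfl, my_update_insertNth]
      _ = ∫ z, f (i.insertNth t z) ∂π' := by
          have hgsm : AEStronglyMeasurable (fun z => f (i.insertNth t z))
              (MeasureTheory.Measure.map Prod.snd ((m i).prod π')) := hg.aestronglyMeasurable
          conv_rhs => rw [← hsnd]
          rw [integral_map measurable_snd.aemeasurable hgsm]
  have hfcomp : Integrable (fun p : X i × ∀ j, X (i.succAbove j) => f (e.symm p))
      ((m i).prod π') :=
    ((mp.symm e).integrable_comp hmeas.aestronglyMeasurable).2 hint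
  calc ∫ x, f x ∂MeasureTheory.Measure.pi m
      = ∫ p, f (e.symm p) ∂((m i).prod π') := ((mp.symm e).integral_comp' f).symm
    _ = ∫ t, ∫ z, f (e.symm (t, z)) ∂π' ∂m i := integral_prod _ hfcomp
    _ = ∫ t, ∫ y, f (Function.update y i t) ∂MeasureTheory.Measure.pi m ∂m i := by
        refine integral_congr_ae (Eventually.of_forall fun t => ?_)
        show (∫ z, f (e.symm (t, z)) ∂π') = ∫ y, f (Function.update y i t) ∂MeasureTheory.Measure.pi m
        rw [step2 t]
        rfl

end Aux

/-- If `T(φ) = T(ψ)` a.e. for two (not necessarily normalized)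
tuples of essentially bounded measurable functions, then
`∑ φ_i(x_i) = ∑ ψ_i(x_i)` for `m`-a.e. `x`. -/
theorem sum_potentials_unique
    {N : ℕ} (hN : 2 ≤ N) {X : Fin N → Type*} [∀ i, MeasurableSpace (X i)]
    (m : ∀ i, MeasureTheory.Measure (X i)) [∀ i, MeasureTheory.IsProbabilityMeasure (m i)]
    (K : (∀ i, X i) → ℝ) (a b : ℝ) (ha : 0 < a) (hab : a ≤ b)
    (hK : Measurable K) (hKb : ∀ᵐ x ∂MeasureTheory.Measure.pi m, a ≤ K x ∧ K x ≤ b)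
    (φ ψ : ∀ i, X i → ℝ) (hφ : BddTuple m φ) (hψ : BddTuple m ψ)
    (h : ∀ i, schrT m K φ i =ᵐ[m i] schrT m K ψ i) :
    ∀ᵐ x ∂MeasureTheory.Measure.pi m, ∑ i, φ i (x i) = ∑ i, ψ i (x i) := by
  classical
  obtain ⟨n, rfl⟩ : ∃ n, N = n + 1 := ⟨N - 1, by omega⟩
  have hφm : ∀ j, Measurable (φ j) := fun j => (hφ j).1
  have hψm : ∀ j, Measurable (ψ j) := fun j => (hψ j).1
  have hgm : ∀ χ : ∀ i, X i → ℝ, (∀ j, Measurable (χ j)) → Measurable (gammaFn K χ) := by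
    intro χ hχ
    unfold gammaFn
    exact hK.mul ((Finset.measurable_sum Finset.univ fun j _ =>
      (hχ j).comp (measurable_pi_apply j)).exp)
  have hgmφ := hgm φ hφm
  have hgmψ := hgm ψ hψm
  have hb0 : (0:ℝ) < b := lt_of_lt_of_le ha hab
  choose Cφ hCφ using fun j => my_exists_ae_abs_le (hφ j).2
  choose Cψ hCψ using fun j => my_exists_ae_abs_le (hψ j).2
  have hae : ∀ᵐ x ∂MeasureTheory.Measure.pi m,
      (∀ j, |φ j (x j)| ≤ Cφ j) ∧ (∀ j, |ψ j (x j)| ≤ Cψ j) ∧ (a ≤ K x ∧ K x ≤ b) := by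
    refine Filter.Eventually.and ?_ (Filter.Eventually.and ?_ hKb)
    · exact ae_all_iff.2 fun j =>
        (MeasureTheory.Measure.tendsto_eval_ae_ae (μ := m) (i := j)).eventually (hCφ j)
    · exact ae_all_iff.2 fun j =>
        (MeasureTheory.Measure.tendsto_eval_ae_ae (μ := m) (i := j)).eventually (hCψ j)
  set Bφ : ℝ := b * Real.exp (∑ j, Cφ j) with hBφ
  set Bψ : ℝ := b * Real.exp (∑ j, Cψ j) with hBψ
  have hBφ0 : 0 ≤ Bφ := by positivity
  have hBψ0 : 0 ≤ Bψ := by positivity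
  have hbφ : ∀ᵐ x ∂MeasureTheory.Measure.pi m, |gammaFn K φ x| ≤ Bφ := by
    filter_upwards [hae] with x hx
    have h1 : ∑ j, φ j (x j) ≤ ∑ j, Cφ j :=
      Finset.sum_le_sum fun j _ => (abs_le.1 (hx.1 j)).2
    have h3 : 0 ≤ K x := le_trans ha.le hx.2.2.1
    simp only [gammaFn, hBφ, abs_mul, abs_of_nonneg h3,
      abs_of_pos (Real.exp_pos _)]
    exact mul_le_mul hx.2.2.2 (Real.exp_le_exp.2 h1) (Real.exp_pos _).le hb0.le
  have hbψ : ∀ᵐ x ∂MeasureTheory.Measure.pi m, |gammaFn K ψ x| ≤ Bψ := by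
    filter_upwards [hae] with x hx
    have h1 : ∑ j, ψ j (x j) ≤ ∑ j, Cψ j :=
      Finset.sum_le_sum fun j _ => (abs_le.1 (hx.2.1 j)).2
    have h3 : 0 ≤ K x := le_trans ha.le hx.2.2.1
    simp only [gammaFn, hBψ, abs_mul, abs_of_nonneg h3,
      abs_of_pos (Real.exp_pos _)]
    exact mul_le_mul hx.2.2.2 (Real.exp_le_exp.2 h1) (Real.exp_pos _).le hb0.le
  have hdm : ∀ i, Measurable fun x : ∀ j, X j => φ i (x i) - ψ i (x i) := fun i =>
    ((hφm i).comp (measurable_pi_apply i)).sub ((hψm i).comp (measurable_pi_apply i))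
  have hdb : ∀ i, ∀ᵐ x ∂MeasureTheory.Measure.pi m,
      |φ i (x i) - ψ i (x i)| ≤ Cφ i + Cψ i := by
    intro i
    filter_upwards [hae] with x hx
    calc |φ i (x i) - ψ i (x i)| ≤ |φ i (x i)| + |ψ i (x i)| := abs_sub _ _
      _ ≤ Cφ i + Cψ i := add_le_add (hx.1 i) (hx.2.1 i)
  have hintφ : ∀ i, Integrable (fun x => gammaFn K φ x * (φ i (x i) - ψ i (x i)))
      (MeasureTheory.Measure.pi m) := by
    intro i
    refine my_integrable_of_ae_bound (hgmφ.mul (hdm i)) (C := Bφ * (Cφ i + Cψ i)) ?_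
    filter_upwards [hbφ, hdb i] with x h1 h2
    rw [abs_mul]
    exact mul_le_mul h1 h2 (abs_nonneg _) hBφ0
  have hintψ : ∀ i, Integrable (fun x => gammaFn K ψ x * (φ i (x i) - ψ i (x i)))
      (MeasureTheory.Measure.pi m) := by
    intro i
    refine my_integrable_of_ae_bound (hgmψ.mul (hdm i)) (C := Bψ * (Cφ i + Cψ i)) ?_
    filter_upwards [hbψ, hdb i] with x h1 h2
    rw [abs_mul]
    exact mul_le_mul h1 h2 (abs_nonneg _) hBψ0
  have key : ∀ i, ∫ x, (gammaFn K φ x - gammaFn K ψ x) * (φ i (x i) - ψ i (x i))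
      ∂MeasureTheory.Measure.pi m = 0 := by
    intro i
    have hsplit : ∫ x, (gammaFn K φ x - gammaFn K ψ x) * (φ i (x i) - ψ i (x i))
        ∂MeasureTheory.Measure.pi m
        = (∫ x, gammaFn K φ x * (φ i (x i) - ψ i (x i)) ∂MeasureTheory.Measure.pi m)
          - ∫ x, gammaFn K ψ x * (φ i (x i) - ψ i (x i)) ∂MeasureTheory.Measure.pi m := by
      rw [← integral_sub (hintφ i) (hintψ i)]
      refine integral_congr_ae (Eventually.of_forall fun x => ?_)
      simp only [Pi.sub_apply]
      ring
    have eφ : ∫ x, gammaFn K φ x * (φ i (x i) - ψ i (x i)) ∂MeasureTheory.Measure.pi m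
        = ∫ t, schrT m K φ i t * (φ i t - ψ i t) ∂m i := by
      rw [my_integral_update_pi m i (f := fun x => gammaFn K φ x * (φ i (x i) - ψ i (x i))) (hgmφ.mul (hdm i)) (hintφ i)]
      refine integral_congr_ae (Eventually.of_forall fun t => ?_)
      simp only [Function.update_self]
      rw [integral_mul_const]
      rfl
    have eψ : ∫ x, gammaFn K ψ x * (φ i (x i) - ψ i (x i)) ∂MeasureTheory.Measure.pi m
        = ∫ t, schrT m K ψ i t * (φ i t - ψ i t) ∂m i := by
      rw [my_integral_update_pi m i (f := fun x => gammaFn K ψ x * (φ i (x i) - ψ i (x i))) (hgmψ.mul (hdm i)) (hintψ i)]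
      refine integral_congr_ae (Eventually.of_forall fun t => ?_)
      simp only [Function.update_self]
      rw [integral_mul_const]
      rfl
    rw [hsplit, eφ, eψ, sub_eq_zero]
    refine integral_congr_ae ?_
    filter_upwards [h i] with t ht
    rw [ht]
  have hintdiff : ∀ i, Integrable
      (fun x => (gammaFn K φ x - gammaFn K ψ x) * (φ i (x i) - ψ i (x i)))
      (MeasureTheory.Measure.pi m) := by
    intro i
    exact ((hintφ i).sub (hintψ i)).congr
      (Eventually.of_forall fun x => by simp only [Pi.sub_apply]; ring)
  have hGint : Integrable
      (fun x => (gammaFn K φ x - gammaFn K ψ x) * ∑ j, (φ j (x j) - ψ j (x j)))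
      (MeasureTheory.Measure.pi m) := by
    have heq : ∀ x : ∀ j, X j,
        (gammaFn K φ x - gammaFn K ψ x) * ∑ j, (φ j (x j) - ψ j (x j))
        = ∑ j, (gammaFn K φ x - gammaFn K ψ x) * (φ j (x j) - ψ j (x j)) := fun x =>
      Finset.mul_sum _ _ _
    refine (integrable_finset_sum Finset.univ fun j _ => hintdiff j).congr
      (Eventually.of_forall fun x => (heq x).symm)
  have hGzero : ∫ x, (gammaFn K φ x - gammaFn K ψ x) * ∑ j, (φ j (x j) - ψ j (x j))
      ∂MeasureTheory.Measure.pi m = 0 := by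
    have heq : ∀ x : ∀ j, X j,
        (gammaFn K φ x - gammaFn K ψ x) * ∑ j, (φ j (x j) - ψ j (x j))
        = ∑ j, (gammaFn K φ x - gammaFn K ψ x) * (φ j (x j) - ψ j (x j)) := fun x =>
      Finset.mul_sum _ _ _
    rw [integral_congr_ae (Eventually.of_forall heq),
      integral_finset_sum Finset.univ fun j _ => hintdiff j]
    simp [key]
  have hGnn : 0 ≤ᵐ[MeasureTheory.Measure.pi m]
      fun x => (gammaFn K φ x - gammaFn K ψ x) * ∑ j, (φ j (x j) - ψ j (x j)) := by
    filter_upwards [hae] with x hx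
    have hKa : (0:ℝ) < K x := lt_of_lt_of_le ha hx.2.2.1
    have hform : gammaFn K φ x - gammaFn K ψ x
        = K x * (Real.exp (∑ j, φ j (x j)) - Real.exp (∑ j, ψ j (x j))) := by
      simp only [gammaFn]; ring
    have hsum : ∑ j, (φ j (x j) - ψ j (x j)) = (∑ j, φ j (x j)) - ∑ j, ψ j (x j) :=
      Finset.sum_sub_distrib _ _
    show (0:ℝ) ≤ (gammaFn K φ x - gammaFn K ψ x) * ∑ j, (φ j (x j) - ψ j (x j))
    rw [hform, hsum]
    rcases le_total (∑ j, φ j (x j)) (∑ j, ψ j (x j)) with huv | huv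
    · have h1 := Real.exp_le_exp.2 huv
      have h0 := mul_nonneg hKa.le (mul_nonneg (sub_nonneg.2 h1) (sub_nonneg.2 huv))
      nlinarith [h0]
    · have h1 := Real.exp_le_exp.2 huv
      have h0 := mul_nonneg hKa.le (mul_nonneg (sub_nonneg.2 h1) (sub_nonneg.2 huv))
      nlinarith [h0]
  have hG0 := (integral_eq_zero_iff_of_nonneg_ae hGnn hGint).1 hGzero
  filter_upwards [hG0, hae] with x hx hb'
  have hKa : (0:ℝ) < K x := lt_of_lt_of_le ha hb'.2.2.1
  have hx' : (gammaFn K φ x - gammaFn K ψ x) * ∑ j, (φ j (x j) - ψ j (x j)) = 0 := hx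
  have hform : gammaFn K φ x - gammaFn K ψ x
      = K x * (Real.exp (∑ j, φ j (x j)) - Real.exp (∑ j, ψ j (x j))) := by
    simp only [gammaFn]; ring
  have hsum : ∑ j, (φ j (x j) - ψ j (x j)) = (∑ j, φ j (x j)) - ∑ j, ψ j (x j) :=
    Finset.sum_sub_distrib _ _
  rw [hform, hsum] at hx'
  by_contra hne
  rcases lt_or_gt_of_ne hne with hlt | hlt
  · have h1 := Real.exp_lt_exp.2 hlt
    have h0 := mul_pos hKa (mul_pos_of_neg_of_neg (sub_neg.2 h1) (sub_neg.2 hlt))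
    nlinarith [h0]
  · have h1 := Real.exp_lt_exp.2 hlt
    have h0 := mul_pos hKa (mul_pos_of_neg_of_neg (sub_neg.2 h1) (sub_neg.2 hlt))
    nlinarith [h0]
end

section
/- A priori bound on Schrödinger potentials: for every M ≥ 1 there is a constant R_M (depending only on M, N and the bounds a, b on K) such that whenever φ ∈ E satisfies T(φ) ∈ F_{++,M}, one has ‖φ_i‖_{L^∞(m_i)} ≤ R_M for every i = 1,…,N. -/
open MeasureTheory Filter
open scoped ENNReal

section Aux

open Function Set

variable {N : ℕ} {X : Fin N → Type*} [∀ i, MeasurableSpace (X i)]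
  (m : ∀ i, MeasureTheory.Measure (X i)) [∀ i, MeasureTheory.IsProbabilityMeasure (m i)]

lemma measurable_updateFun (i : Fin N) :
    Measurable (fun p : X i × (∀ j, X j) => Function.update p.2 i p.1) :=
  measurable_update'.comp (measurable_snd.prodMk measurable_fst)

lemma measurePreserving_update (i : Fin N) :
    MeasureTheory.MeasurePreserving (fun p : X i × (∀ j, X j) => Function.update p.2 i p.1)
      ((m i).prod (MeasureTheory.Measure.pi m)) (MeasureTheory.Measure.pi m) := by
  refine ⟨measurable_updateFun i, ?_⟩
  refine (MeasureTheory.Measure.pi_eq fun s hs => ?_).symm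
  rw [MeasureTheory.Measure.map_apply (measurable_updateFun i) (MeasurableSet.univ_pi hs)]
  have hpre : (fun p : X i × (∀ j, X j) => Function.update p.2 i p.1) ⁻¹' Set.pi Set.univ s
      = s i ×ˢ Set.pi Set.univ (Function.update s i Set.univ) := by
    ext p
    simp only [Set.mem_preimage, Set.mem_pi, Set.mem_univ, true_implies, Set.mem_prod]
    constructor
    · intro h
      refine ⟨by simpa using h i, fun j => ?_⟩
      rcases eq_or_ne j i with rfl | hj
      · simp
      · simpa [Function.update_of_ne hj] using h j
    · rintro ⟨h1, h2⟩ j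
      rcases eq_or_ne j i with rfl | hj
      · simpa using h1
      · simpa [Function.update_of_ne hj] using h2 j
  rw [hpre, MeasureTheory.Measure.prod_prod, MeasureTheory.Measure.pi_pi]
  have hterm : ∀ j, m j (Function.update s i Set.univ j)
      = Function.update (fun j => m j (s j)) i 1 j := by
    intro j
    rcases eq_or_ne j i with rfl | hj
    · simp
    · simp [Function.update_of_ne hj]
  calc m i (s i) * ∏ j, m j (Function.update s i Set.univ j)
      = m i (s i) * ∏ j, Function.update (fun j => m j (s j)) i 1 j := by
        rw [Finset.prod_congr rfl fun j _ => hterm j]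
    _ = m i (s i) * ∏ j ∈ Finset.univ.erase i, m j (s j) := by
        rw [Finset.prod_update_of_mem (Finset.mem_univ i), one_mul,
          Finset.sdiff_singleton_eq_erase]
    _ = ∏ j, m j (s j) := Finset.mul_prod_erase Finset.univ (fun j => m j (s j)) (Finset.mem_univ i)

lemma ae_ae_update {P : (∀ j, X j) → Prop} (i : Fin N)
    (hP : ∀ᵐ x ∂MeasureTheory.Measure.pi m, P x) :
    ∀ᵐ xi ∂m i, ∀ᵐ y ∂MeasureTheory.Measure.pi m, P (Function.update y i xi) :=
  MeasureTheory.Measure.ae_ae_of_ae_prod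
    ((measurePreserving_update m i).quasiMeasurePreserving.tendsto_ae.eventually hP)

end Aux


/-- A priori bound on Schrödinger potentials: for every `M ≥ 1`
there is `R_M` such that `φ ∈ E` with `T(φ) ∈ F_{++,M}` satisfies
`‖φ_i‖_{L^∞} ≤ R_M` for every `i`. -/
theorem schrodinger_potentials_apriori_bound
    {N : ℕ} (hN : 2 ≤ N) {X : Fin N → Type*} [∀ i, MeasurableSpace (X i)]
    (m : ∀ i, MeasureTheory.Measure (X i)) [∀ i, MeasureTheory.IsProbabilityMeasure (m i)]
    (K : (∀ i, X i) → ℝ) (a b : ℝ) (ha : 0 < a) (hab : a ≤ b)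
    (hK : Measurable K) (hKb : ∀ᵐ x ∂MeasureTheory.Measure.pi m, a ≤ K x ∧ K x ≤ b) :
    ∀ M : ℝ, 1 ≤ M → ∃ R : ℝ, ∀ φ : ∀ i, X i → ℝ,
      InE m φ → InFppM m M (schrT m K φ) →
      ∀ i, eLpNorm (φ i) ⊤ (m i) ≤ ENNReal.ofReal R := by
  intro M hM
  have hM0 : (0:ℝ) < M := lt_of_lt_of_le one_pos hM
  have hb : (0:ℝ) < b := lt_of_lt_of_le ha hab
  set A0 : ℝ := |Real.log M| + |Real.log a| + |Real.log b| with hA0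
  have hA0nn : 0 ≤ A0 := by positivity
  set L : ℝ := 2 * Real.log M + Real.log b - Real.log a with hLdef
  have hLnn : 0 ≤ L := by
    have h1 : 0 ≤ Real.log M := Real.log_nonneg hM
    have h2 : Real.log a ≤ Real.log b := Real.log_le_log ha hab
    simp only [hLdef]; linarith
  have hL2A0 : L ≤ 2 * A0 := by
    have := le_abs_self (Real.log M)
    have := le_abs_self (Real.log b)
    have := neg_abs_le (Real.log a)
    have := abs_nonneg (Real.log a)
    have := abs_nonneg (Real.log b)
    simp only [hLdef, hA0]; linarith
  refine ⟨(2 * N + 1) * A0, ?_⟩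
  intro φ hφ hT i
  obtain ⟨hbdd, hmean⟩ := hφ
  have hmeas : ∀ j, Measurable (φ j) := fun j => (hbdd j).1
  set B : Fin N → ℝ := fun j => (eLpNormEssSup (φ j) (m j)).toReal with hBdef
  have hBnn : ∀ j, 0 ≤ B j := fun j => ENNReal.toReal_nonneg
  have hBj : ∀ j, ∀ᵐ x ∂m j, ‖φ j x‖ ≤ B j := by
    intro j
    have hfin : eLpNormEssSup (φ j) (m j) ≠ ⊤ := by
      have h := (hbdd j).2.2
      rwa [eLpNorm_exponent_top, lt_top_iff_ne_top] at h
    filter_upwards [MeasureTheory.enorm_ae_le_eLpNormEssSup (φ j) (m j)] with x hx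
    have h2 := ENNReal.toReal_mono hfin hx
    simpa using h2
  have hBμ : ∀ᵐ y ∂MeasureTheory.Measure.pi m, ∀ j, ‖φ j (y j)‖ ≤ B j := by
    rw [MeasureTheory.ae_all_iff]
    exact fun j => MeasureTheory.Measure.tendsto_eval_ae_ae.eventually (hBj j)
  set SB : ℝ := ∑ j, B j with hSBdef
  have hsum_bd : ∀ (i' : Fin N) (y : ∀ j, X j), (∀ k, ‖φ k (y k)‖ ≤ B k) →
      |∑ k ∈ Finset.univ.erase i', φ k (y k)| ≤ SB := by
    intro i' y hy
    calc |∑ k ∈ Finset.univ.erase i', φ k (y k)|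
        ≤ ∑ k ∈ Finset.univ.erase i', |φ k (y k)| := Finset.abs_sum_le_sum_abs _ _
      _ ≤ ∑ k ∈ Finset.univ.erase i', B k :=
          Finset.sum_le_sum fun k _ => (Real.norm_eq_abs _ ▸ hy k)
      _ ≤ SB := Finset.sum_le_sum_of_subset_of_nonneg
          (Finset.erase_subset _ _) (fun k _ _ => hBnn k)
  set C : Fin N → ℝ := fun i' =>
    ∫ y, Real.exp (∑ k ∈ Finset.univ.erase i', φ k (y k)) ∂MeasureTheory.Measure.pi m with hCdef
  have hg_meas : ∀ i' : Fin N,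
      Measurable fun y : ∀ j, X j => Real.exp (∑ k ∈ Finset.univ.erase i', φ k (y k)) :=
    fun i' => (Finset.measurable_sum _ fun k _ =>
      (hmeas k).comp (measurable_pi_apply k)).exp
  have hg_int : ∀ i' : Fin N,
      MeasureTheory.Integrable
        (fun y : ∀ j, X j => Real.exp (∑ k ∈ Finset.univ.erase i', φ k (y k)))
        (MeasureTheory.Measure.pi m) := by
    intro i'
    refine MeasureTheory.Integrable.mono' (MeasureTheory.integrable_const (Real.exp SB))
      (hg_meas i').aestronglyMeasurable ?_
    filter_upwards [hBμ] with y hy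
    rw [Real.norm_eq_abs, abs_of_pos (Real.exp_pos _)]
    exact Real.exp_le_exp.2 ((abs_le.1 (hsum_bd i' y hy)).2)
  have hC_lb : ∀ i' : Fin N, Real.exp (-SB) ≤ C i' := by
    intro i'
    have hmono := MeasureTheory.integral_mono_ae
      (MeasureTheory.integrable_const (Real.exp (-SB))) (hg_int i')
      (hBμ.mono fun y hy => Real.exp_le_exp.2 ((abs_le.1 (hsum_bd i' y hy)).1))
    have hconst : (∫ _y : ∀ j, X j, Real.exp (-SB) ∂MeasureTheory.Measure.pi m)
        = Real.exp (-SB) := by simp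
    rw [hconst] at hmono
    exact hmono
  have hCpos : ∀ i' : Fin N, 0 < C i' := fun i' =>
    lt_of_lt_of_le (Real.exp_pos _) (hC_lb i')
  have hsum : ∀ (i' : Fin N) (xi : X i') (y : ∀ j, X j),
      ∑ j, φ j (Function.update y i' xi j)
        = φ i' xi + ∑ j ∈ Finset.univ.erase i', φ j (y j) := by
    intro i' xi y
    rw [← Finset.add_sum_erase Finset.univ _ (Finset.mem_univ i')]
    congr 1
    · rw [Function.update_self]
    · exact Finset.sum_congr rfl fun j hj => by
        rw [Function.update_of_ne (Finset.ne_of_mem_erase hj)]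
  have hfac : ∀ (i' : Fin N) (xi : X i'), schrT m K φ i' xi
      = Real.exp (φ i' xi) * ∫ y, K (Function.update y i' xi) *
          Real.exp (∑ k ∈ Finset.univ.erase i', φ k (y k)) ∂MeasureTheory.Measure.pi m := by
    intro i' xi
    rw [schrT, ← MeasureTheory.integral_const_mul]
    congr 1
    funext y
    rw [gammaFn, hsum i' xi y, Real.exp_add]
    ring
  have key : ∀ i' : Fin N, ∀ᵐ xi ∂m i',
      φ i' xi ≤ Real.log M - Real.log a - Real.log (C i') ∧
      -(Real.log M + Real.log b + Real.log (C i')) ≤ φ i' xi := by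
    intro i'
    have hK2 := ae_ae_update m (P := fun x => a ≤ K x ∧ K x ≤ b) i' hKb
    filter_upwards [hK2, hT.2 i'] with xi hKxi hTxi
    set Ai : ℝ := ∫ y, K (Function.update y i' xi) *
        Real.exp (∑ k ∈ Finset.univ.erase i', φ k (y k)) ∂MeasureTheory.Measure.pi m with hAidef
    have hupd_meas : Measurable fun y : ∀ j, X j => K (Function.update y i' xi) :=
      hK.comp measurable_update_left
    have hint_Kg : MeasureTheory.Integrable
        (fun y : ∀ j, X j => K (Function.update y i' xi) *
          Real.exp (∑ k ∈ Finset.univ.erase i', φ k (y k))) (MeasureTheory.Measure.pi m) := by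
      refine MeasureTheory.Integrable.mono'
        (MeasureTheory.integrable_const (b * Real.exp SB))
        (hupd_meas.mul (hg_meas i')).aestronglyMeasurable ?_
      filter_upwards [hKxi, hBμ] with y hy hy2
      rw [Real.norm_eq_abs, abs_mul, abs_of_pos (Real.exp_pos _),
        abs_of_pos (lt_of_lt_of_le ha hy.1)]
      exact mul_le_mul hy.2 (Real.exp_le_exp.2 ((abs_le.1 (hsum_bd i' y hy2)).2))
        (le_of_lt (Real.exp_pos _)) (le_of_lt hb)
    have hAub : Ai ≤ b * C i' := by
      have hmono := MeasureTheory.integral_mono_ae hint_Kg ((hg_int i').const_mul b) ?_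
      · exact le_trans hmono (le_of_eq (MeasureTheory.integral_const_mul b _))
      · filter_upwards [hKxi] with y hy
        exact mul_le_mul_of_nonneg_right hy.2 (le_of_lt (Real.exp_pos _))
    have hAlb : a * C i' ≤ Ai := by
      have hmono := MeasureTheory.integral_mono_ae ((hg_int i').const_mul a) hint_Kg ?_
      · exact le_trans (le_of_eq (MeasureTheory.integral_const_mul a _).symm) hmono
      · filter_upwards [hKxi] with y hy
        exact mul_le_mul_of_nonneg_right hy.1 (le_of_lt (Real.exp_pos _))
    have hTeq : schrT m K φ i' xi = Real.exp (φ i' xi) * Ai := hfac i' xi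
    obtain ⟨h1, h2⟩ := hTxi
    rw [hTeq] at h1 h2
    have hCpos' := hCpos i'
    constructor
    · have hexp : Real.exp (φ i' xi) ≤ M / (a * C i') := by
        rw [le_div_iff₀ (by positivity)]
        calc Real.exp (φ i' xi) * (a * C i')
            ≤ Real.exp (φ i' xi) * Ai :=
              mul_le_mul_of_nonneg_left hAlb (le_of_lt (Real.exp_pos _))
          _ ≤ M := h2
      have hexp2 : Real.exp (φ i' xi)
          ≤ Real.exp (Real.log M - Real.log a - Real.log (C i')) := by
        rw [Real.exp_sub, Real.exp_sub, Real.exp_log hM0, Real.exp_log ha,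
          Real.exp_log hCpos', div_div]
        exact hexp
      exact Real.exp_le_exp.1 hexp2
    · have hexp : 1 / (M * b * C i') ≤ Real.exp (φ i' xi) := by
        rw [div_le_iff₀ (by positivity)]
        have h3 : 1 / M ≤ Real.exp (φ i' xi) * (b * C i') :=
          le_trans h1 (mul_le_mul_of_nonneg_left hAub (le_of_lt (Real.exp_pos _)))
        rw [div_le_iff₀ hM0] at h3
        nlinarith
      have hexp2 : Real.exp (-(Real.log M + Real.log b + Real.log (C i')))
          ≤ Real.exp (φ i' xi) := by
        rw [Real.exp_neg, Real.exp_add, Real.exp_add, Real.exp_log hM0, Real.exp_log hb,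
          Real.exp_log hCpos', inv_eq_one_div]
        exact hexp
      exact Real.exp_le_exp.1 hexp2
  have hosc : ∀ j : Fin N, (j : ℕ) < N - 1 → ∀ᵐ x ∂m j, |φ j x| ≤ L := by
    intro j hj
    have hint : MeasureTheory.Integrable (φ j) (m j) :=
      MeasureTheory.Integrable.mono' (MeasureTheory.integrable_const (B j))
        (hmeas j).aestronglyMeasurable (hBj j)
    have hαle : -(Real.log M + Real.log b + Real.log (C j)) ≤ 0 := by
      have h := MeasureTheory.integral_mono_ae
        (MeasureTheory.integrable_const (-(Real.log M + Real.log b + Real.log (C j)))) hint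
        ((key j).mono fun x hx => hx.2)
      rw [hmean j hj] at h
      simpa using h
    have hβge : 0 ≤ Real.log M - Real.log a - Real.log (C j) := by
      have h := MeasureTheory.integral_mono_ae hint
        (MeasureTheory.integrable_const (Real.log M - Real.log a - Real.log (C j)))
        ((key j).mono fun x hx => hx.1)
      rw [hmean j hj] at h
      simpa using h
    filter_upwards [key j] with x hx
    rw [abs_le]
    constructor
    · simp only [hLdef]; linarith [hx.2]
    · simp only [hLdef]; linarith [hx.1]
  have hoscμ : ∀ᵐ y ∂MeasureTheory.Measure.pi m,
      ∀ k : Fin N, (k : ℕ) < N - 1 → |φ k (y k)| ≤ L := by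
    rw [MeasureTheory.ae_all_iff]
    intro k
    by_cases hk : (k : ℕ) < N - 1
    · exact (MeasureTheory.Measure.tendsto_eval_ae_ae.eventually (hosc k hk)).mono
        fun y hy _ => hy
    · exact Filter.Eventually.of_forall fun y h => absurd h hk
  have hfinal : ∀ᵐ x ∂m i, ‖φ i x‖ ≤ (2 * N + 1) * A0 := by
    by_cases hi : (i : ℕ) < N - 1
    · filter_upwards [hosc i hi] with x hx
      rw [Real.norm_eq_abs]
      have hN1 : (2:ℝ) ≤ 2 * N + 1 := by
        have h2N : (2:ℝ) ≤ (N:ℝ) := by exact_mod_cast hN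
        nlinarith
      calc |φ i x| ≤ L := hx
        _ ≤ 2 * A0 := hL2A0
        _ ≤ (2 * N + 1) * A0 := mul_le_mul_of_nonneg_right hN1 hA0nn
    · have hCb : |Real.log (C i)| ≤ N * L := by
        have hsb : ∀ᵐ y ∂MeasureTheory.Measure.pi m,
            |∑ k ∈ Finset.univ.erase i, φ k (y k)| ≤ N * L := by
          filter_upwards [hoscμ] with y hy
          have hstep : ∀ k ∈ Finset.univ.erase i, |φ k (y k)| ≤ L := by
            intro k hk
            have hki : k ≠ i := Finset.ne_of_mem_erase hk
            refine hy k ?_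
            have h1 : (k : ℕ) < N := k.isLt
            have h2 : (i : ℕ) = N - 1 := by
              have := i.isLt
              omega
            have h3 : (k : ℕ) ≠ N - 1 := fun h => hki (Fin.ext (by omega))
            omega
          calc |∑ k ∈ Finset.univ.erase i, φ k (y k)|
              ≤ ∑ k ∈ Finset.univ.erase i, |φ k (y k)| := Finset.abs_sum_le_sum_abs _ _
            _ ≤ ∑ k ∈ Finset.univ.erase i, L := Finset.sum_le_sum hstep
            _ = ((Finset.univ.erase i).card : ℝ) * L := by
                rw [Finset.sum_const, nsmul_eq_mul]
            _ ≤ N * L := by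
                refine mul_le_mul_of_nonneg_right ?_ hLnn
                have hcard : (Finset.univ.erase i).card ≤ N := by
                  calc (Finset.univ.erase i).card
                      ≤ (Finset.univ : Finset (Fin N)).card :=
                        Finset.card_le_card (Finset.erase_subset _ _)
                    _ = N := by simp
                exact_mod_cast hcard
        have hCl : Real.exp (-((N:ℝ) * L)) ≤ C i := by
          have hmono := MeasureTheory.integral_mono_ae
            (MeasureTheory.integrable_const (Real.exp (-((N:ℝ) * L)))) (hg_int i)
            (hsb.mono fun y hy => Real.exp_le_exp.2 ((abs_le.1 hy).1))
          have hconst : (∫ _y : ∀ j, X j, Real.exp (-((N:ℝ) * L)) ∂MeasureTheory.Measure.pi m)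
              = Real.exp (-((N:ℝ) * L)) := by simp
          rw [hconst] at hmono
          exact hmono
        have hCu : C i ≤ Real.exp ((N:ℝ) * L) := by
          have hmono := MeasureTheory.integral_mono_ae (hg_int i)
            (MeasureTheory.integrable_const (Real.exp ((N:ℝ) * L)))
            (hsb.mono fun y hy => Real.exp_le_exp.2 ((abs_le.1 hy).2))
          have hconst : (∫ _y : ∀ j, X j, Real.exp ((N:ℝ) * L) ∂MeasureTheory.Measure.pi m)
              = Real.exp ((N:ℝ) * L) := by simp
          rw [hconst] at hmono
          exact hmono
        rw [abs_le]
        constructor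
        · rw [← Real.exp_le_exp, Real.exp_log (hCpos i)]
          exact hCl
        · rw [Real.log_le_iff_le_exp (hCpos i)]
          exact hCu
      filter_upwards [key i] with x hx
      rw [Real.norm_eq_abs, abs_le]
      have h1 := le_abs_self (Real.log M)
      have h2 := neg_abs_le (Real.log M)
      have h3 := le_abs_self (Real.log a)
      have h4 := neg_abs_le (Real.log a)
      have h5 := le_abs_self (Real.log b)
      have h6 := neg_abs_le (Real.log b)
      have h7 := abs_le.1 hCb
      have hNL : (N:ℝ) * L ≤ 2 * N * A0 := by
        have hN0 : (0:ℝ) ≤ N := Nat.cast_nonneg N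
        calc (N:ℝ) * L ≤ (N:ℝ) * (2 * A0) := mul_le_mul_of_nonneg_left hL2A0 hN0
          _ = 2 * N * A0 := by ring
      obtain ⟨hx1, hx2⟩ := hx
      have hexpand : (2 * (N:ℝ) + 1) * A0 = 2 * N * A0 + A0 := by ring
      rw [hexpand, hA0]
      rw [hA0] at hNL
      constructor
      · linarith [abs_nonneg (Real.log b), abs_nonneg (Real.log a), abs_nonneg (Real.log M)]
      · linarith [abs_nonneg (Real.log b), abs_nonneg (Real.log a), abs_nonneg (Real.log M)]
  rw [eLpNorm_exponent_top]
  exact MeasureTheory.eLpNormEssSup_le_of_ae_bound hfinal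
end

section
/- L² Lipschitz estimate for the Schrödinger map: for every M ≥ 1 there is a constant C_M such that whenever φ, ψ ∈ E satisfy T(φ) = μ and T(ψ) = ν with μ, ν ∈ F_{++,M}, one has (Σ_{i=1}^N ‖φ_i − ψ_i‖²_{L²(m_i)})^{1/2} ≤ C_M (Σ_{i=1}^N ‖μ_i − ν_i‖²_{L²(m_i)})^{1/2}. -/
open MeasureTheory Filter
open scoped ENNReal

open MeasureTheory Filter Function Set
open scoped ENNReal

noncomputable section

namespace SMLaux

/-- `M² b / a`. -/
def C2 (a b M : ℝ) : ℝ := M ^ 2 * b / a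

/-- Upper bound for the products `P i`. -/
def Phi (N : ℕ) (a b M : ℝ) : ℝ := max (M / a) ((C2 a b M) ^ N)

/-- Uniform a.e. lower bound for `exp (φ i z)`. -/
def Elo (N : ℕ) (a b M : ℝ) : ℝ := 1 / (M * b * Phi N a b M)

theorem one_le_C2 {a b M : ℝ} (ha : 0 < a) (hab : a ≤ b) (hM : 1 ≤ M) : 1 ≤ C2 a b M := by
  rw [C2, le_div_iff₀ ha]; nlinarith [sq_nonneg (M-1), sq_nonneg M]

theorem Phi_pos {a b M : ℝ} (ha : 0 < a) (hab : a ≤ b) (hM : 1 ≤ M) {N : ℕ} :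
    0 < Phi N a b M :=
  lt_max_iff.mpr (Or.inl (by positivity))

theorem Elo_pos {a b M : ℝ} (ha : 0 < a) (hab : a ≤ b) (hM : 1 ≤ M) {N : ℕ} :
    0 < Elo N a b M := by
  have hb : 0 < b := lt_of_lt_of_le ha hab
  have hM0 : (0:ℝ) < M := lt_of_lt_of_le one_pos hM
  have := Phi_pos ha hab hM (N := N)
  rw [Elo]; positivity

variable {N : ℕ} {X : Fin N → Type*} [∀ i, MeasurableSpace (X i)]
  (m : ∀ i, Measure (X i)) [∀ i, IsProbabilityMeasure (m i)]

theorem updMP (i : Fin N) :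
    MeasurePreserving (fun p : X i × (∀ j, X j) => Function.update p.2 i p.1)
      ((m i).prod (Measure.pi m)) (Measure.pi m) := by
  have hF : Measurable fun p : X i × (∀ j, X j) => Function.update p.2 i p.1 :=
    measurable_update'.comp (measurable_snd.prodMk measurable_fst)
  constructor
  · exact hF
  · refine (Measure.pi_eq fun s hs => ?_).symm
    rw [Measure.map_apply hF (MeasurableSet.univ_pi hs)]
    have hpre : (fun p : X i × (∀ j, X j) => Function.update p.2 i p.1) ⁻¹' (univ.pi s)
        = s i ×ˢ univ.pi (Function.update s i univ) := by
      ext ⟨z, y⟩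
      simp only [mem_preimage, Set.mem_pi, mem_univ, true_implies, Set.mem_prod]
      constructor
      · intro h
        refine ⟨by simpa using h i, fun j => ?_⟩
        rcases eq_or_ne j i with rfl | hj
        · simp
        · simpa [Function.update_of_ne hj] using h j
      · rintro ⟨h1, h2⟩ j
        rcases eq_or_ne j i with rfl | hj
        · simpa using h1
        · simpa [Function.update_of_ne hj] using h2 j
    rw [hpre, Measure.prod_prod, Measure.pi_pi]
    have h2 : (∏ j, m j (Function.update s i univ j))
        = ∏ j ∈ Finset.univ.erase i, m j (s j) := by
      rw [← Finset.mul_prod_erase Finset.univ _ (Finset.mem_univ i)]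
      rw [Function.update_self, measure_univ, one_mul]
      exact Finset.prod_congr rfl fun j hj => by
        rw [Function.update_of_ne (Finset.ne_of_mem_erase hj)]
    rw [h2, ← Finset.mul_prod_erase Finset.univ _ (Finset.mem_univ i)]

theorem ae_update (i : Fin N) {p : (∀ j, X j) → Prop}
    (hp : ∀ᵐ x ∂Measure.pi m, p x) :
    ∀ᵐ z ∂m i, ∀ᵐ y ∂Measure.pi m, p (Function.update y i z) :=
  Measure.ae_ae_of_ae_prod ((updMP m i).quasiMeasurePreserving.ae hp)

theorem ae_eval (i : Fin N) {p : X i → Prop} (hp : ∀ᵐ z ∂m i, p z) :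
    ∀ᵐ x ∂Measure.pi m, p (x i) := by
  rw [ae_iff] at hp ⊢
  exact Measure.pi_eval_preimage_null _ hp

theorem integral_update (i : Fin N) {f : (∀ j, X j) → ℝ}
    (hf : Integrable f (Measure.pi m)) :
    ∫ z, ∫ y, f (Function.update y i z) ∂Measure.pi m ∂m i = ∫ x, f x ∂Measure.pi m := by
  have hint : Integrable (fun p : X i × (∀ j, X j) => f (Function.update p.2 i p.1))
      ((m i).prod (Measure.pi m)) :=
    ((updMP m i).integrable_comp hf.aestronglyMeasurable).mpr hf
  have hF : Measurable fun p : X i × (∀ j, X j) => Function.update p.2 i p.1 :=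
    measurable_update'.comp (measurable_snd.prodMk measurable_fst)
  have hfm' : AEStronglyMeasurable f
      (Measure.map (fun p : X i × (∀ j, X j) => Function.update p.2 i p.1)
        ((m i).prod (Measure.pi m))) := by
    rw [(updMP m i).map_eq]; exact hf.aestronglyMeasurable
  have h1 := MeasureTheory.integral_map (φ := fun p : X i × (∀ j, X j) =>
    Function.update p.2 i p.1) hF.aemeasurable hfm'
  rw [(updMP m i).map_eq] at h1
  rw [h1, integral_prod _ hint]

theorem integrable_of_bound {α : Type*} [MeasurableSpace α] {μ : Measure α}
    [IsFiniteMeasure μ] {f : α → ℝ} (hm : AEStronglyMeasurable f μ) (C : ℝ)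
    (h : ∀ᵐ x ∂μ, |f x| ≤ C) : Integrable f μ :=
  ⟨hm, HasFiniteIntegral.of_bounded (C := C) (by simpa [Real.norm_eq_abs] using h)⟩

theorem exists_bound {α : Type*} [MeasurableSpace α] {μ : Measure α} {f : α → ℝ}
    (h : MemLp f ⊤ μ) : ∃ C : ℝ, 0 ≤ C ∧ ∀ᵐ x ∂μ, |f x| ≤ C := by
  refine ⟨(eLpNormEssSup f μ).toReal, ENNReal.toReal_nonneg, ?_⟩
  have hlt : eLpNormEssSup f μ < ⊤ := by
    simpa [eLpNorm_exponent_top] using h.eLpNorm_lt_top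
  filter_upwards [enorm_ae_le_eLpNormEssSup f μ] with x hx
  have := ENNReal.toReal_mono hlt.ne hx
  simpa [Real.norm_eq_abs] using this

theorem integral_pi_prod (f : ∀ j, X j → ℝ) :
    ∫ x, ∏ j, f j (x j) ∂Measure.pi m = ∏ j, ∫ z, f j z ∂m j := by
  letI : ∀ i, MeasureSpace (X i) := fun i => ⟨m i⟩
  haveI : ∀ i, SigmaFinite (volume : Measure (X i)) := fun i =>
    inferInstanceAs (SigmaFinite (m i))
  exact MeasureTheory.integral_fintype_prod_eq_prod f

theorem integral_eval (i : Fin N) (g : X i → ℝ) :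
    ∫ x, g (x i) ∂Measure.pi m = ∫ z, g z ∂m i := by
  have h := integral_pi_prod m (Function.update (fun j (_ : X j) => (1 : ℝ)) i g)
  have h1 : ∀ x : ∀ j, X j,
      (∏ j, Function.update (fun j (_ : X j) => (1 : ℝ)) i g j (x j)) = g (x i) := by
    intro x
    refine Finset.prod_eq_single_of_mem i (Finset.mem_univ i) (fun j _ hj => ?_) |>.trans ?_
    · rw [Function.update_of_ne hj]
    · rw [Function.update_self]
  have h2 : (∏ j, ∫ z, Function.update (fun j (_ : X j) => (1 : ℝ)) i g j z ∂m j)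
      = ∫ z, g z ∂m i := by
    refine Finset.prod_eq_single_of_mem i (Finset.mem_univ i) (fun j _ hj => ?_) |>.trans ?_
    · rw [Function.update_of_ne hj]; simp
    · rw [Function.update_self]
  rw [← h2, ← h]
  exact integral_congr_ae (Eventually.of_forall fun x => (h1 x).symm)


theorem prod_eq_mul_of_ne {M : Type*} [CommMonoid M] {i j : Fin N} (hij : i ≠ j) (F : Fin N → M)
    (h : ∀ k, k ≠ i → k ≠ j → F k = 1) : ∏ k, F k = F i * F j := by
  rw [← Finset.mul_prod_erase Finset.univ F (Finset.mem_univ i)]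
  congr 1
  rw [← Finset.mul_prod_erase (Finset.univ.erase i) F
    (Finset.mem_erase.mpr ⟨hij.symm, Finset.mem_univ j⟩)]
  have h1 : ∏ k ∈ (Finset.univ.erase i).erase j, F k = 1 :=
    Finset.prod_eq_one fun k hk => h k
      (Finset.ne_of_mem_erase (Finset.mem_of_mem_erase hk)) (Finset.ne_of_mem_erase hk)
  rw [h1, mul_one]

theorem integral_eval_mul {i j : Fin N} (hij : i ≠ j) (g : X i → ℝ) (g' : X j → ℝ) :
    ∫ x, g (x i) * g' (x j) ∂Measure.pi m = (∫ z, g z ∂m i) * ∫ z, g' z ∂m j := by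
  set F : ∀ k, X k → ℝ :=
    Function.update (Function.update (fun k (_ : X k) => (1 : ℝ)) i g) j g' with hF
  have hFi : F i = g := by rw [hF, Function.update_of_ne hij, Function.update_self]
  have hFj : F j = g' := by rw [hF, Function.update_self]
  have hFo : ∀ k, k ≠ i → k ≠ j → F k = fun _ => 1 := fun k hki hkj => by
    rw [hF, Function.update_of_ne hkj, Function.update_of_ne hki]
  have h := integral_pi_prod m F
  have h1 : ∀ x : ∀ k, X k, (∏ k, F k (x k)) = g (x i) * g' (x j) := by
    intro x
    rw [prod_eq_mul_of_ne hij (fun k => F k (x k))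
      (fun k hk1 hk2 => congrFun (hFo k hk1 hk2) (x k)), hFi, hFj]
  have h2 : (∏ k, ∫ z, F k z ∂m k) = (∫ z, g z ∂m i) * ∫ z, g' z ∂m j := by
    rw [prod_eq_mul_of_ne hij _ (fun k hk1 hk2 => by simp [hFo k hk1 hk2]), hFi, hFj]
  rw [← h2, ← h]
  exact integral_congr_ae (Eventually.of_forall fun x => (h1 x).symm)

theorem cauchy_schwarz {α : Type*} [MeasurableSpace α] {μ : Measure α} [IsFiniteMeasure μ]
    {f g : α → ℝ} (hf : AEStronglyMeasurable f μ) (hg : AEStronglyMeasurable g μ)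
    {Cf Cg : ℝ} (hCf : 0 ≤ Cf) (hCg : 0 ≤ Cg)
    (hbf : ∀ᵐ x ∂μ, |f x| ≤ Cf) (hbg : ∀ᵐ x ∂μ, |g x| ≤ Cg) :
    ∫ x, f x * g x ∂μ ≤ Real.sqrt (∫ x, f x ^ 2 ∂μ) * Real.sqrt (∫ x, g x ^ 2 ∂μ) := by
  have hpq : Real.HolderConjugate 2 2 := Real.HolderConjugate.two_two
  have hf2 : MemLp (fun x => ‖f x‖) (ENNReal.ofReal 2) μ :=
    MemLp.of_bound hf.norm Cf (by simpa [Real.norm_eq_abs, abs_abs] using hbf)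
  have hg2 : MemLp (fun x => ‖g x‖) (ENNReal.ofReal 2) μ :=
    MemLp.of_bound hg.norm Cg (by simpa [Real.norm_eq_abs, abs_abs] using hbg)
  have key := integral_mul_le_Lp_mul_Lq_of_nonneg hpq
    (Eventually.of_forall fun x => norm_nonneg (f x))
    (Eventually.of_forall fun x => norm_nonneg (g x)) hf2 hg2
  have habs : ∀ (h : α → ℝ), ∫ x, ‖h x‖ ^ (2:ℝ) ∂μ = ∫ x, h x ^ 2 ∂μ := by
    intro h
    refine integral_congr_ae (Eventually.of_forall fun x => ?_)
    show ‖h x‖ ^ (2:ℝ) = h x ^ 2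
    rw [show ((2:ℝ)) = ((2:ℕ):ℝ) by norm_num, Real.rpow_natCast]
    simp [Real.norm_eq_abs, sq_abs]
  rw [habs f, habs g] at key
  have h1 : ∫ x, f x * g x ∂μ ≤ ∫ x, ‖f x‖ * ‖g x‖ ∂μ := by
    refine integral_mono_ae ?_ ?_ ?_
    · refine integrable_of_bound (hf.mul hg) (Cf * Cg) ?_
      filter_upwards [hbf, hbg] with x h1 h2
      rw [abs_mul]
      exact mul_le_mul h1 h2 (abs_nonneg _) hCf
    · refine integrable_of_bound (hf.norm.mul hg.norm) (Cf * Cg) ?_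
      filter_upwards [hbf, hbg] with x h1 h2
      rw [abs_mul, abs_norm, abs_norm]
      exact mul_le_mul h1 h2 (norm_nonneg _) hCf
    · exact Eventually.of_forall fun x => by
        calc f x * g x ≤ |f x * g x| := le_abs_self _
        _ = ‖f x‖ * ‖g x‖ := by rw [abs_mul]; rfl
  calc ∫ x, f x * g x ∂μ ≤ ∫ x, ‖f x‖ * ‖g x‖ ∂μ := h1
  _ ≤ (∫ x, f x ^ 2 ∂μ) ^ (1/(2:ℝ)) * (∫ x, g x ^ 2 ∂μ) ^ (1/(2:ℝ)) := key
  _ = Real.sqrt (∫ x, f x ^ 2 ∂μ) * Real.sqrt (∫ x, g x ^ 2 ∂μ) := by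
      rw [← Real.sqrt_eq_rpow, ← Real.sqrt_eq_rpow]

theorem exp_sq_le_aux {c u v : ℝ} (hc : c ≤ Real.exp u) (huv : u ≤ v) :
    c * (v - u) ^ 2 ≤ (Real.exp v - Real.exp u) * (v - u) := by
  have h1 : Real.exp u * Real.exp (v - u) = Real.exp v := by
    rw [← Real.exp_add]; ring_nf
  have h2 := Real.add_one_le_exp (v - u)
  nlinarith [Real.exp_pos u, sq_nonneg (v - u), mul_nonneg (Real.exp_pos u).le (sub_nonneg.mpr huv)]

theorem exp_sq_le {c u v : ℝ} (hu : c ≤ Real.exp u) (hv : c ≤ Real.exp v) :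
    c * (v - u) ^ 2 ≤ (Real.exp v - Real.exp u) * (v - u) := by
  rcases le_total u v with h | h
  · exact exp_sq_le_aux hu h
  · have := exp_sq_le_aux hv h
    nlinarith [this]


theorem ae_pi_bound {φ : ∀ j, X j → ℝ} {B : Fin N → ℝ}
    (h : ∀ j, ∀ᵐ z ∂m j, |φ j z| ≤ B j) :
    ∀ᵐ x ∂Measure.pi m, ∀ j, |φ j (x j)| ≤ B j :=
  ae_all_iff.mpr fun j => ae_eval m j (h j)

theorem gamma_update (K : (∀ i, X i) → ℝ) (φ : ∀ i, X i → ℝ) (i : Fin N) (z : X i)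
    (y : ∀ j, X j) :
    gammaFn K φ (Function.update y i z)
      = Real.exp (φ i z) * (K (Function.update y i z) *
          ∏ j ∈ Finset.univ.erase i, Real.exp (φ j (y j))) := by
  unfold gammaFn
  rw [Real.exp_sum, ← Finset.mul_prod_erase Finset.univ _ (Finset.mem_univ i),
    Function.update_self]
  have h1 : ∏ j ∈ Finset.univ.erase i, Real.exp (φ j (Function.update y i z j))
      = ∏ j ∈ Finset.univ.erase i, Real.exp (φ j (y j)) :=
    Finset.prod_congr rfl fun j hj => by
      rw [Function.update_of_ne (Finset.ne_of_mem_erase hj)]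
  rw [h1]; ring


theorem apriori (K : (∀ i, X i) → ℝ) {a b M : ℝ} (ha : 0 < a) (hab : a ≤ b)
    (hM : 1 ≤ M) (hK : Measurable K)
    (hKb : ∀ᵐ x ∂Measure.pi m, a ≤ K x ∧ K x ≤ b)
    {φ μf : ∀ i, X i → ℝ} (hφ : InE m φ) (hμ : InFppM m M μf)
    (hT : ∀ i, schrT m K φ i =ᵐ[m i] μf i) :
    ∀ i, ∀ᵐ z ∂m i, Elo N a b M ≤ Real.exp (φ i z) := by
  have hb : 0 < b := lt_of_lt_of_le ha hab
  have hM0 : (0:ℝ) < M := lt_of_lt_of_le one_pos hM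
  choose B hB0 hBae using fun j => exists_bound (hφ.1 j).2
  have hmeas : ∀ j, Measurable (φ j) := fun j => (hφ.1 j).1
  have hexp_meas : ∀ j, Measurable fun z => Real.exp (φ j z) := fun j =>
    Real.measurable_exp.comp (hmeas j)
  have hφint : ∀ j, Integrable (φ j) (m j) := fun j =>
    integrable_of_bound (hmeas j).aestronglyMeasurable (B j) (hBae j)
  have hexp_int : ∀ j, Integrable (fun z => Real.exp (φ j z)) (m j) := fun j =>
    integrable_of_bound (hexp_meas j).aestronglyMeasurable (Real.exp (B j)) <| by
      filter_upwards [hBae j] with z hz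
      rw [abs_of_pos (Real.exp_pos _)]
      exact Real.exp_le_exp.mpr (le_trans (le_abs_self _) hz)
  set E : Fin N → ℝ := fun j => ∫ z, Real.exp (φ j z) ∂m j with hE
  have hEpos : ∀ j, 0 < E j := by
    intro j
    have hmono : Real.exp (-B j) ≤ E j := by
      have hae : ∀ᵐ z ∂m j, Real.exp (-B j) ≤ Real.exp (φ j z) := by
        filter_upwards [hBae j] with z hz
        exact Real.exp_le_exp.mpr (neg_le_of_abs_le hz)
      have := integral_mono_ae (integrable_const (Real.exp (-B j))) (hexp_int j) hae
      simpa using this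
    exact lt_of_lt_of_le (Real.exp_pos _) hmono
  set P : Fin N → ℝ := fun i => ∏ j ∈ Finset.univ.erase i, E j with hP
  have hPpos : ∀ i, 0 < P i := fun i => Finset.prod_pos fun j _ => hEpos j
  -- step 1 : the sandwich
  have sandwich : ∀ i, ∀ᵐ z ∂m i,
      a * P i * Real.exp (φ i z) ≤ μf i z ∧ μf i z ≤ b * P i * Real.exp (φ i z) := by
    intro i
    -- the constant integral of the product over the remaining coordinates
    have hprod_meas : Measurable fun y : ∀ k, X k =>
        ∏ j ∈ Finset.univ.erase i, Real.exp (φ j (y j)) :=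
      Finset.measurable_prod _ fun j _ =>
        Real.measurable_exp.comp ((hmeas j).comp (measurable_pi_apply j))
    have hXae : ∀ᵐ y ∂Measure.pi m, ∀ j, |φ j (y j)| ≤ B j := ae_pi_bound m hBae
    have hprod_bd : ∀ᵐ y ∂Measure.pi m,
        |∏ j ∈ Finset.univ.erase i, Real.exp (φ j (y j))|
          ≤ ∏ j ∈ Finset.univ.erase i, Real.exp (B j) := by
      filter_upwards [hXae] with y hy
      rw [abs_of_pos (Finset.prod_pos fun j _ => Real.exp_pos _)]
      exact Finset.prod_le_prod (fun j _ => (Real.exp_pos _).le)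
        (fun j _ => Real.exp_le_exp.mpr (le_trans (le_abs_self _) (hy j)))
    have hPint : Integrable (fun y : ∀ k, X k =>
        ∏ j ∈ Finset.univ.erase i, Real.exp (φ j (y j))) (Measure.pi m) :=
      integrable_of_bound hprod_meas.aestronglyMeasurable _ hprod_bd
    have hJ : (∫ y, ∏ j ∈ Finset.univ.erase i, Real.exp (φ j (y j)) ∂Measure.pi m)
        = P i := by
      set F : ∀ k, X k → ℝ :=
        Function.update (fun j (t : X j) => Real.exp (φ j t)) i (fun _ => 1) with hFdef
      have hFi : F i = fun _ => 1 := Function.update_self _ _ _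
      have hFo : ∀ j, j ≠ i → F j = fun t => Real.exp (φ j t) := fun j hj =>
        Function.update_of_ne hj _ _
      have hptw : ∀ y : ∀ k, X k, (∏ j, F j (y j))
          = ∏ j ∈ Finset.univ.erase i, Real.exp (φ j (y j)) := by
        intro y
        rw [← Finset.mul_prod_erase Finset.univ (fun j => F j (y j)) (Finset.mem_univ i)]
        rw [show F i (y i) = 1 from congrFun hFi (y i), one_mul]
        exact Finset.prod_congr rfl fun j hj =>
          congrFun (hFo j (Finset.ne_of_mem_erase hj)) (y j)
      have h := integral_pi_prod m F
      have hv : (∏ j, ∫ z, F j z ∂m j) = P i := by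
        rw [← Finset.mul_prod_erase Finset.univ _ (Finset.mem_univ i)]
        have h1 : ∫ z, F i z ∂m i = 1 := by rw [show F i = fun _ => (1:ℝ) from hFi]; simp
        rw [h1, one_mul, hP]
        exact Finset.prod_congr rfl fun j hj => by
          rw [show F j = fun t => Real.exp (φ j t) from hFo j (Finset.ne_of_mem_erase hj)]
      rw [← hv, ← h]
      exact integral_congr_ae (Eventually.of_forall fun y => (hptw y).symm)
    filter_upwards [hT i, ae_update m i hKb] with z hTz hKz
    have hGmeas : Measurable fun y : ∀ k, X k => K (Function.update y i z) *
        ∏ j ∈ Finset.univ.erase i, Real.exp (φ j (y j)) :=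
      (hK.comp measurable_update_left).mul hprod_meas
    have hGint : Integrable (fun y : ∀ k, X k => K (Function.update y i z) *
        ∏ j ∈ Finset.univ.erase i, Real.exp (φ j (y j))) (Measure.pi m) := by
      refine integrable_of_bound hGmeas.aestronglyMeasurable
        (b * ∏ j ∈ Finset.univ.erase i, Real.exp (B j)) ?_
      filter_upwards [hKz, hprod_bd] with y h1 h2
      rw [abs_mul]
      refine mul_le_mul ?_ h2 (abs_nonneg _) hb.le
      rw [abs_of_pos (lt_of_lt_of_le ha h1.1)]
      exact h1.2
    have hdecomp : schrT m K φ i z = Real.exp (φ i z) *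
        ∫ y, K (Function.update y i z) *
          ∏ j ∈ Finset.univ.erase i, Real.exp (φ j (y j)) ∂Measure.pi m := by
      unfold schrT
      rw [show (fun y : ∀ k, X k => gammaFn K φ (Function.update y i z))
        = fun y => Real.exp (φ i z) * (K (Function.update y i z) *
            ∏ j ∈ Finset.univ.erase i, Real.exp (φ j (y j)))
        from funext fun y => gamma_update K φ i z y]
      exact integral_const_mul _ _
    have hlow : a * P i ≤ ∫ y, K (Function.update y i z) *
        ∏ j ∈ Finset.univ.erase i, Real.exp (φ j (y j)) ∂Measure.pi m := by
      have := integral_mono_ae (hPint.const_mul a) hGint ?_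
      · rw [integral_const_mul, hJ] at this; exact this
      · filter_upwards [hKz] with y h1
        exact mul_le_mul_of_nonneg_right h1.1
          (Finset.prod_nonneg fun j _ => (Real.exp_pos _).le)
    have hhigh : (∫ y, K (Function.update y i z) *
        ∏ j ∈ Finset.univ.erase i, Real.exp (φ j (y j)) ∂Measure.pi m) ≤ b * P i := by
      have := integral_mono_ae hGint (hPint.const_mul b) ?_
      · rw [integral_const_mul, hJ] at this; exact this
      · filter_upwards [hKz] with y h1
        exact mul_le_mul_of_nonneg_right h1.2
          (Finset.prod_nonneg fun j _ => (Real.exp_pos _).le)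
    constructor
    · calc a * P i * Real.exp (φ i z) = Real.exp (φ i z) * (a * P i) := by ring
      _ ≤ Real.exp (φ i z) * ∫ y, K (Function.update y i z) *
            ∏ j ∈ Finset.univ.erase i, Real.exp (φ j (y j)) ∂Measure.pi m :=
          mul_le_mul_of_nonneg_left hlow (Real.exp_pos _).le
      _ = schrT m K φ i z := hdecomp.symm
      _ = μf i z := hTz
    · calc μf i z = schrT m K φ i z := hTz.symm
      _ = Real.exp (φ i z) * ∫ y, K (Function.update y i z) *
            ∏ j ∈ Finset.univ.erase i, Real.exp (φ j (y j)) ∂Measure.pi m := hdecomp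
      _ ≤ Real.exp (φ i z) * (b * P i) :=
          mul_le_mul_of_nonneg_left hhigh (Real.exp_pos _).le
      _ = b * P i * Real.exp (φ i z) := by ring
  -- step 2 : combine with the `F_{++,M}` bounds
  have star : ∀ i, ∀ᵐ z ∂m i,
      a * P i * Real.exp (φ i z) ≤ M ∧ 1/M ≤ b * P i * Real.exp (φ i z) := by
    intro i
    filter_upwards [sandwich i, hμ.2 i] with z h1 h2
    exact ⟨le_trans h1.1 h2.2, le_trans h2.1 h1.2⟩
  -- step 3 : bounds on `P i` for the zero-mean indices
  have hPbounds : ∀ i : Fin N, (i : ℕ) < N - 1 → 1/(M*b) ≤ P i ∧ P i ≤ M/a := by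
    intro i hi
    have hz := hφ.2 i hi
    constructor
    · have hdown : ∀ᵐ z ∂m i, Real.log (1/(M * b * P i)) ≤ φ i z := by
        filter_upwards [star i] with z h
        have hpos1 : (0:ℝ) < M * b * P i := mul_pos (mul_pos hM0 hb) (hPpos i)
        have hE1 : 1 ≤ M * (b * P i * Real.exp (φ i z)) := by
          have h7 := mul_le_mul_of_nonneg_left h.2 hM0.le
          rwa [show M * (1/M) = 1 from by field_simp] at h7
        have h3 : 1/(M * b * P i) ≤ Real.exp (φ i z) := by
          rw [div_le_iff₀ hpos1]
          nlinarith [hE1]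
        exact (Real.log_le_iff_le_exp (one_div_pos.mpr hpos1)).mpr h3
      have h5 : Real.log (1/(M * b * P i)) ≤ 0 := by
        have := integral_mono_ae (integrable_const _) (hφint i) hdown
        rw [hz] at this; simpa using this
      have hpos1 : (0:ℝ) < M * b * P i := mul_pos (mul_pos hM0 hb) (hPpos i)
      have h6 : 1/(M * b * P i) ≤ 1 :=
        (Real.log_nonpos_iff (one_div_pos.mpr hpos1).le).mp h5
      rw [div_le_iff₀ (mul_pos hM0 hb)]
      rw [div_le_one hpos1] at h6
      nlinarith [hPpos i]
    · have hup : ∀ᵐ z ∂m i, φ i z ≤ Real.log (M / (a * P i)) := by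
        filter_upwards [star i] with z h
        have hpos2 : (0:ℝ) < a * P i := mul_pos ha (hPpos i)
        have h3 : Real.exp (φ i z) ≤ M / (a * P i) := by
          rw [le_div_iff₀ hpos2]
          nlinarith [h.1]
        exact (Real.le_log_iff_exp_le (div_pos hM0 hpos2)).mpr h3
      have h5 : (0:ℝ) ≤ Real.log (M / (a * P i)) := by
        have := integral_mono_ae (hφint i) (integrable_const _) hup
        rw [hz] at this; simpa using this
      have hpos2 : (0:ℝ) < a * P i := mul_pos ha (hPpos i)
      have h6 : (1:ℝ) ≤ M / (a * P i) :=
        (Real.log_nonneg_iff (div_pos hM0 hpos2)).mp h5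
      rw [one_le_div hpos2] at h6
      rw [le_div_iff₀ ha]
      nlinarith
  -- step 4 : bounds on `E j` for the zero-mean indices
  have hEbounds : ∀ j : Fin N, (j : ℕ) < N - 1 → E j ≤ C2 a b M := by
    intro j hj
    obtain ⟨hP1, hP2⟩ := hPbounds j hj
    have hptw : ∀ᵐ z ∂m j, Real.exp (φ j z) ≤ C2 a b M := by
      filter_upwards [star j] with z h
      have hP1' : 1 ≤ M * b * P j := by
        rw [div_le_iff₀ (mul_pos hM0 hb)] at hP1
        nlinarith
      rw [C2, le_div_iff₀ ha]
      nlinarith [mul_le_mul_of_nonneg_left h.1 (mul_pos hM0 hb).le,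
        mul_nonneg (mul_nonneg (Real.exp_pos (φ j z)).le ha.le) (sub_nonneg.mpr hP1'),
        Real.exp_pos (φ j z)]
    have := integral_mono_ae (hexp_int j) (integrable_const _) hptw
    simpa using this
  -- step 5 : upper bound for all `P i`
  have hPall : ∀ i, P i ≤ Phi N a b M := by
    intro i
    by_cases hi : (i : ℕ) < N - 1
    · exact le_trans (hPbounds i hi).2 (le_max_left _ _)
    · have hiv : (i : ℕ) = N - 1 := by have := i.isLt; omega
      have hj' : ∀ j ∈ Finset.univ.erase i, (j : ℕ) < N - 1 := by
        intro j hj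
        have hji : j ≠ i := Finset.ne_of_mem_erase hj
        have hne : (j : ℕ) ≠ N - 1 := fun hc => hji (Fin.ext (by rw [hc, hiv]))
        have := j.isLt; omega
      calc P i ≤ ∏ _j ∈ Finset.univ.erase i, C2 a b M :=
            Finset.prod_le_prod (fun j _ => (hEpos j).le)
              (fun j hj => hEbounds j (hj' j hj))
      _ = (C2 a b M) ^ (Finset.univ.erase i).card := Finset.prod_const _
      _ ≤ (C2 a b M) ^ N := by
          refine pow_le_pow_right₀ (one_le_C2 ha hab hM) ?_
          calc (Finset.univ.erase i).card ≤ Finset.univ.card :=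
              Finset.card_le_card (Finset.erase_subset _ _)
          _ = N := by simp
      _ ≤ Phi N a b M := le_max_right _ _
  -- step 6 : conclusion
  intro i
  filter_upwards [star i] with z h
  have hPhi := Phi_pos ha hab hM (N := N)
  have hpos3 : (0:ℝ) < M * b * Phi N a b M := mul_pos (mul_pos hM0 hb) hPhi
  rw [Elo, div_le_iff₀ hpos3]
  have hE1 : 1 ≤ M * (b * P i * Real.exp (φ i z)) := by
    have h7 := mul_le_mul_of_nonneg_left h.2 hM0.le
    rwa [show M * (1/M) = 1 from by field_simp] at h7
  nlinarith [hE1, mul_nonneg (mul_nonneg (mul_nonneg hM0.le hb.le)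
    (Real.exp_pos (φ i z)).le) (sub_nonneg.mpr (hPall i))]


theorem gamma_meas {K : (∀ i, X i) → ℝ} (hK : Measurable K) {φ : ∀ i, X i → ℝ}
    (hφm : ∀ j, Measurable (φ j)) : Measurable (gammaFn K φ) :=
  hK.mul (Real.measurable_exp.comp
    (Finset.measurable_sum _ fun j _ => (hφm j).comp (measurable_pi_apply j)))

theorem gamma_bound {K : (∀ i, X i) → ℝ} {b : ℝ}
    (hKb : ∀ᵐ x ∂Measure.pi m, |K x| ≤ b) {φ : ∀ i, X i → ℝ} {Bφ : Fin N → ℝ}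
    (hBφ : ∀ j, ∀ᵐ z ∂m j, |φ j z| ≤ Bφ j) :
    ∀ᵐ x ∂Measure.pi m, |gammaFn K φ x| ≤ b * Real.exp (∑ j, Bφ j) := by
  filter_upwards [hKb, ae_pi_bound m hBφ] with x h1 h2
  show |K x * Real.exp (∑ j, φ j (x j))| ≤ _
  rw [abs_mul, abs_of_pos (Real.exp_pos _)]
  exact mul_le_mul h1
    (Real.exp_le_exp.mpr (Finset.sum_le_sum fun j _ => le_trans (le_abs_self _) (h2 j)))
    (Real.exp_pos _).le (le_trans (abs_nonneg _) h1)

theorem gamma_mul_integrable {K : (∀ i, X i) → ℝ} (hK : Measurable K) {b : ℝ}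
    (hKb : ∀ᵐ x ∂Measure.pi m, |K x| ≤ b)
    {φ : ∀ i, X i → ℝ} (hφm : ∀ j, Measurable (φ j)) {Bφ : Fin N → ℝ}
    (hBφ : ∀ j, ∀ᵐ z ∂m j, |φ j z| ≤ Bφ j)
    (i : Fin N) {g : X i → ℝ} (hg : Measurable g) {Cg : ℝ}
    (hCg : ∀ᵐ z ∂m i, |g z| ≤ Cg) :
    Integrable (fun x => gammaFn K φ x * g (x i)) (Measure.pi m) := by
  refine integrable_of_bound
    (((gamma_meas hK hφm).mul (hg.comp (measurable_pi_apply i))).aestronglyMeasurable)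
    ((b * Real.exp (∑ j, Bφ j)) * Cg) ?_
  filter_upwards [gamma_bound m hKb hBφ, ae_eval m i hCg] with x h1 h3
  rw [abs_mul]
  exact mul_le_mul h1 h3 (abs_nonneg _)
    (le_trans (abs_nonneg (gammaFn K φ x)) h1)

theorem gamma_pair {K : (∀ i, X i) → ℝ} (hK : Measurable K) {b : ℝ}
    (hKb : ∀ᵐ x ∂Measure.pi m, |K x| ≤ b)
    {φ : ∀ i, X i → ℝ} (hφm : ∀ j, Measurable (φ j)) {Bφ : Fin N → ℝ}
    (hBφ : ∀ j, ∀ᵐ z ∂m j, |φ j z| ≤ Bφ j)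
    (i : Fin N) {g : X i → ℝ} (hg : Measurable g) {Cg : ℝ}
    (hCg : ∀ᵐ z ∂m i, |g z| ≤ Cg) :
    ∫ x, gammaFn K φ x * g (x i) ∂Measure.pi m
      = ∫ z, schrT m K φ i z * g z ∂m i := by
  have hfint := gamma_mul_integrable m hK hKb hφm hBφ i hg hCg
  calc ∫ x, gammaFn K φ x * g (x i) ∂Measure.pi m
      = ∫ z, ∫ y, gammaFn K φ (Function.update y i z) *
          g (Function.update y i z i) ∂Measure.pi m ∂m i :=
        (integral_update m i hfint).symm
  _ = ∫ z, schrT m K φ i z * g z ∂m i := by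
      refine integral_congr_ae (Eventually.of_forall fun z => ?_)
      show (∫ y, gammaFn K φ (Function.update y i z) *
          g (Function.update y i z i) ∂Measure.pi m) = schrT m K φ i z * g z
      simp_rw [Function.update_self]
      rw [integral_mul_const]
      rfl

end SMLaux

end


/-- `L²` Lipschitz estimate for the Schrödinger map. -/
theorem schrodinger_map_L2_lipschitz
    {N : ℕ} (hN : 2 ≤ N) {X : Fin N → Type*} [∀ i, MeasurableSpace (X i)]
    (m : ∀ i, MeasureTheory.Measure (X i)) [∀ i, MeasureTheory.IsProbabilityMeasure (m i)]
    (K : (∀ i, X i) → ℝ) (a b : ℝ) (ha : 0 < a) (hab : a ≤ b)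
    (hK : Measurable K) (hKb : ∀ᵐ x ∂MeasureTheory.Measure.pi m, a ≤ K x ∧ K x ≤ b) :
    ∀ M : ℝ, 1 ≤ M → ∃ C : ℝ, ∀ φ ψ μ ν : ∀ i, X i → ℝ,
      InE m φ → InE m ψ → InFppM m M μ → InFppM m M ν →
      (∀ i, schrT m K φ i =ᵐ[m i] μ i) → (∀ i, schrT m K ψ i =ᵐ[m i] ν i) →
      Real.sqrt (∑ i, ∫ x, (φ i x - ψ i x) ^ 2 ∂m i) ≤
        C * Real.sqrt (∑ i, ∫ x, (μ i x - ν i x) ^ 2 ∂m i) := by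
  intro M hM
  classical
  have hb : 0 < b := lt_of_lt_of_le ha hab
  have hM0 : (0:ℝ) < M := lt_of_lt_of_le one_pos hM
  have hElo : 0 < SMLaux.Elo N a b M := SMLaux.Elo_pos ha hab hM
  set eL := SMLaux.Elo N a b M with heL
  set κ := a * eL ^ N with hκdef
  have hκ : 0 < κ := by positivity
  refine ⟨1/κ, ?_⟩
  intro φ ψ μf νf hφ hψ hμ hν hTφ hTψ
  -- measurability
  have hφm : ∀ j, Measurable (φ j) := fun j => (hφ.1 j).1
  have hψm : ∀ j, Measurable (ψ j) := fun j => (hψ.1 j).1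
  have hμm : ∀ j, Measurable (μf j) := fun j => (hμ.1.1.1 j).1
  have hνm : ∀ j, Measurable (νf j) := fun j => (hν.1.1.1 j).1
  -- a.e. bounds
  choose Bφ hBφ0 hBφ using fun j => SMLaux.exists_bound (hφ.1 j).2
  choose Bψ hBψ0 hBψ using fun j => SMLaux.exists_bound (hψ.1 j).2
  choose Bμ hBμ0 hBμ using fun j => SMLaux.exists_bound (hμ.1.1.1 j).2
  choose Bν hBν0 hBν using fun j => SMLaux.exists_bound (hν.1.1.1 j).2
  -- the difference tuple
  set h : ∀ j, X j → ℝ := fun j z => ψ j z - φ j z with hhdef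
  have hhm : ∀ j, Measurable (h j) := fun j => (hψm j).sub (hφm j)
  set Bh : Fin N → ℝ := fun j => Bψ j + Bφ j with hBhdef
  have hBh0 : ∀ j, 0 ≤ Bh j := fun j => add_nonneg (hBψ0 j) (hBφ0 j)
  have hBh : ∀ j, ∀ᵐ z ∂m j, |h j z| ≤ Bh j := fun j => by
    filter_upwards [hBφ j, hBψ j] with z h1 h2
    have h3 := norm_sub_le (ψ j z) (φ j z)
    simp only [Real.norm_eq_abs] at h3
    exact le_trans h3 (add_le_add h2 h1)
  have hφint : ∀ j, Integrable (φ j) (m j) := fun j =>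
    SMLaux.integrable_of_bound (hφm j).aestronglyMeasurable (Bφ j) (hBφ j)
  have hψint : ∀ j, Integrable (ψ j) (m j) := fun j =>
    SMLaux.integrable_of_bound (hψm j).aestronglyMeasurable (Bψ j) (hBψ j)
  -- zero means
  have hmean : ∀ i : Fin N, (i : ℕ) < N - 1 → ∫ z, h i z ∂m i = 0 := by
    intro i hi
    have : ∫ z, h i z ∂m i = (∫ z, ψ i z ∂m i) - ∫ z, φ i z ∂m i :=
      integral_sub (hψint i) (hφint i)
    rw [this, hψ.2 i hi, hφ.2 i hi, sub_zero]
  -- integrability of the cross terms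
  have hterm_int : ∀ i j : Fin N,
      Integrable (fun x : ∀ k, X k => h i (x i) * h j (x j)) (Measure.pi m) := by
    intro i j
    refine SMLaux.integrable_of_bound
      (((hhm i).comp (measurable_pi_apply i)).mul
        ((hhm j).comp (measurable_pi_apply j))).aestronglyMeasurable
      (Bh i * Bh j) ?_
    filter_upwards [SMLaux.ae_eval m i (hBh i), SMLaux.ae_eval m j (hBh j)] with x h1 h2
    rw [abs_mul]
    exact mul_le_mul h1 h2 (abs_nonneg _) (hBh0 i)
  have hterm_val : ∀ i j : Fin N,
      (∫ x, h i (x i) * h j (x j) ∂Measure.pi m)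
        = if i = j then ∫ z, h i z ^ 2 ∂m i else 0 := by
    intro i j
    by_cases hij : i = j
    · subst hij
      rw [if_pos rfl]
      simp_rw [pow_two]
      exact SMLaux.integral_eval m i (fun z => h i z * h i z)
    · rw [if_neg hij, SMLaux.integral_eval_mul m hij (h i) (h j)]
      rcases lt_or_ge (i : ℕ) (N - 1) with hi | hi
      · rw [hmean i hi, zero_mul]
      · have hj : (j : ℕ) < N - 1 := by
          have hiv : (i : ℕ) = N - 1 := by have := i.isLt; omega
          have hne : (j : ℕ) ≠ N - 1 := fun hc => hij (Fin.ext (by rw [hiv, hc])).symm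
          have := j.isLt; omega
        rw [hmean j hj, mul_zero]
  -- orthogonality
  have horth : ∫ x, (∑ j, h j (x j)) ^ 2 ∂Measure.pi m = ∑ i, ∫ z, h i z ^ 2 ∂m i := by
    calc ∫ x, (∑ j, h j (x j)) ^ 2 ∂Measure.pi m
        = ∫ x, ∑ i, ∑ j, h i (x i) * h j (x j) ∂Measure.pi m :=
          integral_congr_ae (Filter.Eventually.of_forall fun x => by
            show (∑ j, h j (x j)) ^ 2 = ∑ i, ∑ j, h i (x i) * h j (x j)
            rw [pow_two, Finset.sum_mul_sum])
      _ = ∑ i, ∑ j, ∫ x, h i (x i) * h j (x j) ∂Measure.pi m := by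
          rw [integral_finset_sum _
            (fun i _ => integrable_finset_sum _ (fun j _ => hterm_int i j))]
          exact Finset.sum_congr rfl fun i _ =>
            integral_finset_sum _ (fun j _ => hterm_int i j)
      _ = ∑ i, ∑ j, if i = j then ∫ z, h i z ^ 2 ∂m i else 0 :=
          Finset.sum_congr rfl fun i _ => Finset.sum_congr rfl fun j _ => hterm_val i j
      _ = ∑ i, ∫ z, h i z ^ 2 ∂m i := by
          refine Finset.sum_congr rfl fun i _ => ?_
          simp
  -- bounds for the gammas
  have hKb' : ∀ᵐ x ∂Measure.pi m, |K x| ≤ b := by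
    filter_upwards [hKb] with x hx
    rw [abs_of_pos (lt_of_lt_of_le ha hx.1)]
    exact hx.2
  have hγφm : Measurable (gammaFn K φ) := SMLaux.gamma_meas hK hφm
  have hγψm : Measurable (gammaFn K ψ) := SMLaux.gamma_meas hK hψm
  have hγφb := SMLaux.gamma_bound m hKb' hBφ
  have hγψb := SMLaux.gamma_bound m hKb' hBψ
  -- the key pointwise inequality
  have hkey : ∀ᵐ x ∂Measure.pi m, κ * (∑ j, h j (x j)) ^ 2
      ≤ (gammaFn K ψ x - gammaFn K φ x) * (∑ j, h j (x j)) := by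
    have hEφ := SMLaux.apriori m K ha hab hM hK hKb hφ hμ hTφ
    have hEψ := SMLaux.apriori m K ha hab hM hK hKb hψ hν hTψ
    have h1 : ∀ᵐ x ∂Measure.pi m, ∀ j, eL ≤ Real.exp (φ j (x j)) :=
      ae_all_iff.mpr fun j => SMLaux.ae_eval m j (hEφ j)
    have h2 : ∀ᵐ x ∂Measure.pi m, ∀ j, eL ≤ Real.exp (ψ j (x j)) :=
      ae_all_iff.mpr fun j => SMLaux.ae_eval m j (hEψ j)
    filter_upwards [hKb, h1, h2] with x hx hx1 hx2
    have hu : eL ^ N ≤ Real.exp (∑ j, φ j (x j)) := by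
      calc eL ^ N = ∏ _j : Fin N, eL := by simp
      _ ≤ ∏ j, Real.exp (φ j (x j)) :=
          Finset.prod_le_prod (fun _ _ => hElo.le) (fun j _ => hx1 j)
      _ = Real.exp (∑ j, φ j (x j)) := (Real.exp_sum _ _).symm
    have hv : eL ^ N ≤ Real.exp (∑ j, ψ j (x j)) := by
      calc eL ^ N = ∏ _j : Fin N, eL := by simp
      _ ≤ ∏ j, Real.exp (ψ j (x j)) :=
          Finset.prod_le_prod (fun _ _ => hElo.le) (fun j _ => hx2 j)
      _ = Real.exp (∑ j, ψ j (x j)) := (Real.exp_sum _ _).symm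
    have hsplit : (∑ j, h j (x j)) = (∑ j, ψ j (x j)) - ∑ j, φ j (x j) := by
      rw [← Finset.sum_sub_distrib]
    have hcore := SMLaux.exp_sq_le hu hv
    have hnn : 0 ≤ (Real.exp (∑ j, ψ j (x j)) - Real.exp (∑ j, φ j (x j)))
        * ((∑ j, ψ j (x j)) - ∑ j, φ j (x j)) := le_trans (by positivity) hcore
    have hgγ : gammaFn K ψ x - gammaFn K φ x
        = K x * (Real.exp (∑ j, ψ j (x j)) - Real.exp (∑ j, φ j (x j))) := by
      show K x * Real.exp (∑ j, ψ j (x j)) - K x * Real.exp (∑ j, φ j (x j)) = _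
      ring
    rw [hsplit, hgγ, hκdef]
    calc a * eL ^ N * ((∑ j, ψ j (x j)) - ∑ j, φ j (x j)) ^ 2
        = a * (eL ^ N * ((∑ j, ψ j (x j)) - ∑ j, φ j (x j)) ^ 2) := by ring
      _ ≤ a * ((Real.exp (∑ j, ψ j (x j)) - Real.exp (∑ j, φ j (x j)))
            * ((∑ j, ψ j (x j)) - ∑ j, φ j (x j))) :=
          mul_le_mul_of_nonneg_left hcore ha.le
      _ ≤ K x * ((Real.exp (∑ j, ψ j (x j)) - Real.exp (∑ j, φ j (x j)))
            * ((∑ j, ψ j (x j)) - ∑ j, φ j (x j))) :=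
          mul_le_mul_of_nonneg_right hx.1 hnn
      _ = K x * (Real.exp (∑ j, ψ j (x j)) - Real.exp (∑ j, φ j (x j)))
            * ((∑ j, ψ j (x j)) - ∑ j, φ j (x j)) := by ring
  -- integrability of the quantities in the key inequality
  have hShm : Measurable fun x : ∀ k, X k => ∑ j, h j (x j) :=
    Finset.measurable_sum _ fun j _ => (hhm j).comp (measurable_pi_apply j)
  have hShb : ∀ᵐ x ∂Measure.pi m, |∑ j, h j (x j)| ≤ ∑ j, Bh j := by
    filter_upwards [SMLaux.ae_pi_bound m hBh] with x hx
    exact le_trans (Finset.abs_sum_le_sum_abs _ _) (Finset.sum_le_sum fun j _ => hx j)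
  have hSh2int : Integrable (fun x : ∀ k, X k => (∑ j, h j (x j)) ^ 2) (Measure.pi m) := by
    refine SMLaux.integrable_of_bound (hShm.pow_const 2).aestronglyMeasurable
      ((∑ j, Bh j) ^ 2) ?_
    filter_upwards [hShb] with x hx
    rw [abs_of_nonneg (sq_nonneg _)]
    calc (∑ j, h j (x j)) ^ 2 = |∑ j, h j (x j)| ^ 2 := (sq_abs _).symm
    _ ≤ (∑ j, Bh j) ^ 2 := by gcongr
  have hdiff_int : Integrable
      (fun x => (gammaFn K ψ x - gammaFn K φ x) * (∑ j, h j (x j))) (Measure.pi m) := by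
    refine SMLaux.integrable_of_bound
      (((hγψm.sub hγφm).mul hShm).aestronglyMeasurable)
      ((b * Real.exp (∑ j, Bψ j) + b * Real.exp (∑ j, Bφ j)) * ∑ j, Bh j) ?_
    filter_upwards [hγφb, hγψb, hShb] with x g1 g2 g3
    rw [abs_mul]
    refine mul_le_mul ?_ g3 (abs_nonneg _) (by positivity)
    calc |gammaFn K ψ x - gammaFn K φ x| ≤ |gammaFn K ψ x| + |gammaFn K φ x| := abs_sub _ _
    _ ≤ _ := add_le_add g2 g1
  -- (A) : κ · ∑ ‖h‖² ≤ ∫ (γψ − γφ)·Sh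
  have hA : κ * (∑ i, ∫ z, h i z ^ 2 ∂m i)
      ≤ ∫ x, (gammaFn K ψ x - gammaFn K φ x) * (∑ j, h j (x j)) ∂Measure.pi m := by
    rw [← horth]
    calc κ * ∫ x, (∑ j, h j (x j)) ^ 2 ∂Measure.pi m
        = ∫ x, κ * (∑ j, h j (x j)) ^ 2 ∂Measure.pi m := (integral_const_mul κ _).symm
      _ ≤ _ := integral_mono_ae (hSh2int.const_mul κ) hdiff_int hkey
  -- (B) : the integral identity
  have hμhint : ∀ i, Integrable (fun z => μf i z * h i z) (m i) := by
    intro i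
    refine SMLaux.integrable_of_bound ((hμm i).mul (hhm i)).aestronglyMeasurable
      (Bμ i * Bh i) ?_
    filter_upwards [hBμ i, hBh i] with z h1 h2
    rw [abs_mul]; exact mul_le_mul h1 h2 (abs_nonneg _) (hBμ0 i)
  have hνhint : ∀ i, Integrable (fun z => νf i z * h i z) (m i) := by
    intro i
    refine SMLaux.integrable_of_bound ((hνm i).mul (hhm i)).aestronglyMeasurable
      (Bν i * Bh i) ?_
    filter_upwards [hBν i, hBh i] with z h1 h2
    rw [abs_mul]; exact mul_le_mul h1 h2 (abs_nonneg _) (hBν0 i)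
  have hsumφ : ∫ x, gammaFn K φ x * (∑ j, h j (x j)) ∂Measure.pi m
      = ∑ i, ∫ z, μf i z * h i z ∂m i := by
    calc ∫ x, gammaFn K φ x * (∑ j, h j (x j)) ∂Measure.pi m
        = ∫ x, ∑ j, gammaFn K φ x * h j (x j) ∂Measure.pi m :=
          integral_congr_ae (Filter.Eventually.of_forall fun x => by
            show gammaFn K φ x * (∑ j, h j (x j)) = ∑ j, gammaFn K φ x * h j (x j)
            rw [Finset.mul_sum])
      _ = ∑ j, ∫ x, gammaFn K φ x * h j (x j) ∂Measure.pi m :=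
          integral_finset_sum _ fun j _ =>
            SMLaux.gamma_mul_integrable m hK hKb' hφm hBφ j (hhm j) (hBh j)
      _ = ∑ j, ∫ z, schrT m K φ j z * h j z ∂m j :=
          Finset.sum_congr rfl fun j _ =>
            SMLaux.gamma_pair m hK hKb' hφm hBφ j (hhm j) (hBh j)
      _ = ∑ i, ∫ z, μf i z * h i z ∂m i := by
          refine Finset.sum_congr rfl fun j _ => integral_congr_ae ?_
          filter_upwards [hTφ j] with z hz
          rw [hz]
  have hsumψ : ∫ x, gammaFn K ψ x * (∑ j, h j (x j)) ∂Measure.pi m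
      = ∑ i, ∫ z, νf i z * h i z ∂m i := by
    calc ∫ x, gammaFn K ψ x * (∑ j, h j (x j)) ∂Measure.pi m
        = ∫ x, ∑ j, gammaFn K ψ x * h j (x j) ∂Measure.pi m :=
          integral_congr_ae (Filter.Eventually.of_forall fun x => by
            show gammaFn K ψ x * (∑ j, h j (x j)) = ∑ j, gammaFn K ψ x * h j (x j)
            rw [Finset.mul_sum])
      _ = ∑ j, ∫ x, gammaFn K ψ x * h j (x j) ∂Measure.pi m :=
          integral_finset_sum _ fun j _ =>
            SMLaux.gamma_mul_integrable m hK hKb' hψm hBψ j (hhm j) (hBh j)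
      _ = ∑ j, ∫ z, schrT m K ψ j z * h j z ∂m j :=
          Finset.sum_congr rfl fun j _ =>
            SMLaux.gamma_pair m hK hKb' hψm hBψ j (hhm j) (hBh j)
      _ = ∑ i, ∫ z, νf i z * h i z ∂m i := by
          refine Finset.sum_congr rfl fun j _ => integral_congr_ae ?_
          filter_upwards [hTψ j] with z hz
          rw [hz]
  have hγφSh_int : Integrable
      (fun x => gammaFn K φ x * (∑ j, h j (x j))) (Measure.pi m) := by
    refine SMLaux.integrable_of_bound ((hγφm.mul hShm).aestronglyMeasurable)
      ((b * Real.exp (∑ j, Bφ j)) * ∑ j, Bh j) ?_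
    filter_upwards [hγφb, hShb] with x g1 g3
    rw [abs_mul]
    exact mul_le_mul g1 g3 (abs_nonneg _) (by positivity)
  have hγψSh_int : Integrable
      (fun x => gammaFn K ψ x * (∑ j, h j (x j))) (Measure.pi m) := by
    refine SMLaux.integrable_of_bound ((hγψm.mul hShm).aestronglyMeasurable)
      ((b * Real.exp (∑ j, Bψ j)) * ∑ j, Bh j) ?_
    filter_upwards [hγψb, hShb] with x g1 g3
    rw [abs_mul]
    exact mul_le_mul g1 g3 (abs_nonneg _) (by positivity)
  have hB : ∫ x, (gammaFn K ψ x - gammaFn K φ x) * (∑ j, h j (x j)) ∂Measure.pi m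
      = ∑ i, ∫ z, (νf i z - μf i z) * h i z ∂m i := by
    have e1 : (fun x => (gammaFn K ψ x - gammaFn K φ x) * (∑ j, h j (x j)))
        = fun x => gammaFn K ψ x * (∑ j, h j (x j))
            - gammaFn K φ x * (∑ j, h j (x j)) := funext fun x => by ring
    rw [e1, integral_sub hγψSh_int hγφSh_int, hsumψ, hsumφ, ← Finset.sum_sub_distrib]
    refine Finset.sum_congr rfl fun i _ => ?_
    rw [← integral_sub (hνhint i) (hμhint i)]
    exact integral_congr_ae (Filter.Eventually.of_forall fun z => by ring)
  -- (C) : Cauchy–Schwarz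
  have hCS : ∑ i, ∫ z, (νf i z - μf i z) * h i z ∂m i
      ≤ Real.sqrt (∑ i, ∫ z, (μf i z - νf i z) ^ 2 ∂m i)
        * Real.sqrt (∑ i, ∫ z, h i z ^ 2 ∂m i) := by
    have hper : ∀ i, ∫ z, (νf i z - μf i z) * h i z ∂m i
        ≤ Real.sqrt (∫ z, (νf i z - μf i z) ^ 2 ∂m i)
          * Real.sqrt (∫ z, h i z ^ 2 ∂m i) := by
      intro i
      refine SMLaux.cauchy_schwarz ((hνm i).sub (hμm i)).aestronglyMeasurable
        (hhm i).aestronglyMeasurable (add_nonneg (hBν0 i) (hBμ0 i)) (hBh0 i) ?_ (hBh i)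
      filter_upwards [hBν i, hBμ i] with z h1 h2
      have h3 := norm_sub_le (νf i z) (μf i z)
      simp only [Real.norm_eq_abs] at h3
      exact le_trans h3 (add_le_add h1 h2)
    have hdnn : ∀ i, 0 ≤ ∫ z, (νf i z - μf i z) ^ 2 ∂m i := fun i =>
      integral_nonneg fun z => sq_nonneg _
    have hhnn : ∀ i, 0 ≤ ∫ z, h i z ^ 2 ∂m i := fun i =>
      integral_nonneg fun z => sq_nonneg _
    have hfin := Finset.sum_mul_sq_le_sq_mul_sq Finset.univ
      (fun i => Real.sqrt (∫ z, (νf i z - μf i z) ^ 2 ∂m i))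
      (fun i => Real.sqrt (∫ z, h i z ^ 2 ∂m i))
    have hsq : ∀ i : Fin N, Real.sqrt (∫ z, (νf i z - μf i z) ^ 2 ∂m i) ^ 2
        = ∫ z, (νf i z - μf i z) ^ 2 ∂m i := fun i => Real.sq_sqrt (hdnn i)
    have hsq' : ∀ i : Fin N, Real.sqrt (∫ z, h i z ^ 2 ∂m i) ^ 2
        = ∫ z, h i z ^ 2 ∂m i := fun i => Real.sq_sqrt (hhnn i)
    calc ∑ i, ∫ z, (νf i z - μf i z) * h i z ∂m i
        ≤ ∑ i, Real.sqrt (∫ z, (νf i z - μf i z) ^ 2 ∂m i)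
            * Real.sqrt (∫ z, h i z ^ 2 ∂m i) := Finset.sum_le_sum fun i _ => hper i
      _ ≤ Real.sqrt (∑ i, ∫ z, (νf i z - μf i z) ^ 2 ∂m i)
            * Real.sqrt (∑ i, ∫ z, h i z ^ 2 ∂m i) := by
          have hs0 : 0 ≤ ∑ i, Real.sqrt (∫ z, (νf i z - μf i z) ^ 2 ∂m i)
              * Real.sqrt (∫ z, h i z ^ 2 ∂m i) :=
            Finset.sum_nonneg fun i _ =>
              mul_nonneg (Real.sqrt_nonneg _) (Real.sqrt_nonneg _)
          rw [← Real.sqrt_sq hs0, ← Real.sqrt_mul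
            (Finset.sum_nonneg fun i _ => hdnn i)]
          refine Real.sqrt_le_sqrt ?_
          calc (∑ i, Real.sqrt (∫ z, (νf i z - μf i z) ^ 2 ∂m i)
              * Real.sqrt (∫ z, h i z ^ 2 ∂m i)) ^ 2
              ≤ (∑ i, Real.sqrt (∫ z, (νf i z - μf i z) ^ 2 ∂m i) ^ 2)
                * ∑ i, Real.sqrt (∫ z, h i z ^ 2 ∂m i) ^ 2 := hfin
            _ = (∑ i, ∫ z, (νf i z - μf i z) ^ 2 ∂m i)
                * ∑ i, ∫ z, h i z ^ 2 ∂m i := by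
                rw [Finset.sum_congr rfl fun i _ => hsq i,
                  Finset.sum_congr rfl fun i _ => hsq' i]
      _ = Real.sqrt (∑ i, ∫ z, (μf i z - νf i z) ^ 2 ∂m i)
            * Real.sqrt (∑ i, ∫ z, h i z ^ 2 ∂m i) := by
          congr 1
          refine congrArg Real.sqrt (Finset.sum_congr rfl fun i _ => ?_)
          exact integral_congr_ae (Filter.Eventually.of_forall fun z => by ring)
  -- conclusion
  have hS0 : 0 ≤ ∑ i, ∫ z, h i z ^ 2 ∂m i :=
    Finset.sum_nonneg fun i _ => integral_nonneg fun z => sq_nonneg _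
  have hfinal : κ * (∑ i, ∫ z, h i z ^ 2 ∂m i)
      ≤ Real.sqrt (∑ i, ∫ z, (μf i z - νf i z) ^ 2 ∂m i)
        * Real.sqrt (∑ i, ∫ z, h i z ^ 2 ∂m i) :=
    le_trans hA (le_trans (le_of_eq hB) hCS)
  have hgoal_eq : (∑ i, ∫ x, (φ i x - ψ i x) ^ 2 ∂m i) = ∑ i, ∫ z, h i z ^ 2 ∂m i :=
    Finset.sum_congr rfl fun i _ =>
      integral_congr_ae (Filter.Eventually.of_forall fun z => by
        show (φ i z - ψ i z) ^ 2 = (ψ i z - φ i z) ^ 2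
        ring)
  rw [hgoal_eq]
  rcases eq_or_lt_of_le (Real.sqrt_nonneg (∑ i, ∫ z, h i z ^ 2 ∂m i)) with hz | hz
  · rw [← hz]
    positivity
  · have hSq : (∑ i, ∫ z, h i z ^ 2 ∂m i)
        = Real.sqrt (∑ i, ∫ z, h i z ^ 2 ∂m i)
          * Real.sqrt (∑ i, ∫ z, h i z ^ 2 ∂m i) := (Real.mul_self_sqrt hS0).symm
    rw [hSq] at hfinal
    have hstep : κ * Real.sqrt (∑ i, ∫ z, h i z ^ 2 ∂m i)
        ≤ Real.sqrt (∑ i, ∫ z, (μf i z - νf i z) ^ 2 ∂m i) := by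
      nlinarith [hfinal, hz]
    calc Real.sqrt (∑ i, ∫ z, h i z ^ 2 ∂m i)
        ≤ Real.sqrt (∑ i, ∫ z, (μf i z - νf i z) ^ 2 ∂m i) / κ :=
          (le_div_iff₀ hκ).mpr (by nlinarith [hstep])
      _ = 1 / κ * Real.sqrt (∑ i, ∫ z, (μf i z - νf i z) ^ 2 ∂m i) := by ring
end

section
/- L^∞ Lipschitz estimate for the Schrödinger map: for every M ≥ 1 there is a constant C_M such that whenever φ, ψ ∈ E satisfy T(φ) = μ and T(ψ) = ν with μ, ν ∈ F_{++,M}, one has max_i ‖φ_i − ψ_i‖_{L^∞(m_i)} ≤ C_M max_i ‖μ_i − ν_i‖_{L^∞(m_i)}. -/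
open MeasureTheory Filter
open scoped ENNReal

open MeasureTheory Filter Function
open scoped ENNReal
noncomputable section
namespace SchrAux

variable {N : ℕ} {X : Fin N → Type*} [∀ i, MeasurableSpace (X i)]
  (m : ∀ i, Measure (X i)) [∀ i, IsProbabilityMeasure (m i)]

theorem measurePreserving_eval (j : Fin N) :
    MeasurePreserving (fun y : ∀ k, X k => y j) (Measure.pi m) (m j) := by
  refine ⟨measurable_pi_apply j, ?_⟩
  refine Measure.ext fun s hs => ?_
  rw [Measure.map_apply (measurable_pi_apply j) hs, Set.eval_preimage, Measure.pi_pi]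
  refine Finset.prod_eq_single_of_mem j (Finset.mem_univ j) (fun k _ hk => ?_) |>.trans ?_
  · simp [Function.update_of_ne hk]
  · simp

theorem measurePreserving_update (i : Fin N) :
    MeasurePreserving (fun p : X i × (∀ j, X j) => Function.update p.2 i p.1)
      ((m i).prod (Measure.pi m)) (Measure.pi m) := by
  have hmeas : Measurable (fun p : X i × (∀ j, X j) => Function.update p.2 i p.1) :=
    measurable_update'.comp (measurable_snd.prodMk measurable_fst)
  refine ⟨hmeas, ?_⟩
  refine Eq.symm ?_
  apply Measure.pi_eq
  intro s hs
  rw [Measure.map_apply hmeas (MeasurableSet.univ_pi hs)]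
  have hpre : (fun p : X i × (∀ j, X j) => Function.update p.2 i p.1) ⁻¹' Set.pi Set.univ s
      = s i ×ˢ Set.pi Set.univ (Function.update s i Set.univ) := by
    ext p
    simp only [Set.mem_preimage, Set.mem_pi, Set.mem_univ, true_implies, Set.mem_prod]
    constructor
    · intro h
      refine ⟨by simpa using h i, fun j => ?_⟩
      by_cases hj : j = i
      · subst hj; simp
      · simpa [Function.update_of_ne hj] using h j
    · rintro ⟨h1, h2⟩ j
      by_cases hj : j = i
      · subst hj; simpa using h1
      · have := h2 j
        simpa [Function.update_of_ne hj] using this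
  rw [hpre, Measure.prod_prod, Measure.pi_pi]
  have h2 : (∏ j, m j (Function.update s i Set.univ j)) = ∏ j ∈ Finset.univ.erase i, m j (s j) := by
    rw [← Finset.mul_prod_erase Finset.univ _ (Finset.mem_univ i)]
    simp only [Function.update_self, measure_univ, one_mul]
    exact Finset.prod_congr rfl fun j hj => by
      rw [Function.update_of_ne (Finset.ne_of_mem_erase hj)]
  rw [h2, ← Finset.mul_prod_erase Finset.univ _ (Finset.mem_univ i)]

theorem integral_update_pi (i : Fin N) {F : (∀ j, X j) → ℝ}
    (hF : AEStronglyMeasurable F (Measure.pi m)) (hInt : Integrable F (Measure.pi m)) :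
    ∫ x, F x ∂Measure.pi m = ∫ xi, ∫ y, F (Function.update y i xi) ∂Measure.pi m ∂m i := by
  have h := measurePreserving_update m i
  have hmap : ∫ p : X i × (∀ j, X j), F (Function.update p.2 i p.1)
      ∂((m i).prod (Measure.pi m)) = ∫ x, F x ∂Measure.pi m := by
    rw [← integral_map h.measurable.aemeasurable (by rwa [h.map_eq]), h.map_eq]
  rw [← hmap]
  exact integral_prod _ ((h.integrable_comp hF).mpr hInt)

theorem ae_update_pi (i : Fin N) {p : (∀ j, X j) → Prop}
    (h : ∀ᵐ x ∂Measure.pi m, p x) :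
    ∀ᵐ xi ∂m i, ∀ᵐ y ∂Measure.pi m, p (Function.update y i xi) := by
  have h2 : ∀ᵐ q ∂((m i).prod (Measure.pi m)), p (Function.update q.2 i q.1) :=
    (measurePreserving_update m i).quasiMeasurePreserving.ae h
  exact Measure.ae_ae_of_ae_prod h2

theorem ae_eval_pi (j : Fin N) {p : X j → Prop} (h : ∀ᵐ t ∂m j, p t) :
    ∀ᵐ y ∂Measure.pi m, p (y j) :=
  (measurePreserving_eval m j).quasiMeasurePreserving.ae h

theorem integral_eval_pi (j : Fin N) {g : X j → ℝ} (hg : AEStronglyMeasurable g (m j)) :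
    ∫ y, g (y j) ∂Measure.pi m = ∫ t, g t ∂m j := by
  have h := measurePreserving_eval m j
  rw [← h.map_eq, integral_map h.measurable.aemeasurable (h.map_eq ▸ hg)]




variable {N : ℕ} {X : Fin N → Type*} [∀ i, MeasurableSpace (X i)]
  {m : ∀ i, Measure (X i)} [∀ i, IsProbabilityMeasure (m i)]

/-! ### Generic helpers -/

theorem integrable_of_ae_bound {α : Type*} [MeasurableSpace α] {μ : Measure α}
    [IsFiniteMeasure μ] {f : α → ℝ} (c : ℝ)
    (hm : AEStronglyMeasurable f μ) (h : ∀ᵐ x ∂μ, |f x| ≤ c) : Integrable f μ :=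
  Integrable.mono' (integrable_const c) hm (h.mono fun x hx => by rwa [Real.norm_eq_abs])

theorem memLp_top_bound {α : Type*} [MeasurableSpace α] {μ : Measure α} {f : α → ℝ}
    (h : MemLp f ⊤ μ) : ∀ᵐ x ∂μ, |f x| ≤ (eLpNorm f ⊤ μ).toReal := by
  have h1 : ∀ᵐ x ∂μ, (‖f x‖₊ : ℝ≥0∞) ≤ eLpNormEssSup f μ := ae_le_eLpNormEssSup
  have h2 : eLpNormEssSup f μ ≠ ⊤ := by
    have := h.eLpNorm_lt_top
    rwa [eLpNorm_exponent_top, lt_top_iff_ne_top] at this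
  filter_upwards [h1] with x hx
  have := ENNReal.toReal_mono h2 hx
  rw [eLpNorm_exponent_top]
  simpa [Real.norm_eq_abs] using this

theorem abs_le_amgm (x ε : ℝ) (hε : 0 < ε) : |x| ≤ ε / 2 + x ^ 2 / (2 * ε) := by
  rw [div_add_div _ _ (by positivity) (by positivity : (2:ℝ) * ε ≠ 0)]
  rw [le_div_iff₀ (by positivity)]
  nlinarith [sq_nonneg (|x| - ε), sq_abs x, abs_nonneg x]

theorem exp_strict {s t r : ℝ} (h1 : r ≤ Real.exp s) (h2 : r ≤ Real.exp t) :
    r * (s - t) ^ 2 ≤ (Real.exp s - Real.exp t) * (s - t) := by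
  have key : ∀ p q : ℝ, q ≤ p → r ≤ Real.exp q →
      r * (p - q) ^ 2 ≤ (Real.exp p - Real.exp q) * (p - q) := by
    intro p q hpq hrq
    have hu : (0:ℝ) ≤ p - q := sub_nonneg.2 hpq
    have k1 : Real.exp q * (p - q) ≤ Real.exp p - Real.exp q := by
      have h3 := Real.add_one_le_exp (p - q)
      calc Real.exp q * (p - q) ≤ Real.exp q * (Real.exp (p - q) - 1) :=
            mul_le_mul_of_nonneg_left (by linarith) (Real.exp_pos q).le
        _ = Real.exp p - Real.exp q := by
            rw [mul_sub, ← Real.exp_add, mul_one]; ring_nf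
    calc r * (p - q) ^ 2 ≤ Real.exp q * (p - q) ^ 2 :=
          mul_le_mul_of_nonneg_right hrq (sq_nonneg _)
      _ = (Real.exp q * (p - q)) * (p - q) := by ring
      _ ≤ (Real.exp p - Real.exp q) * (p - q) := mul_le_mul_of_nonneg_right k1 hu
  rcases le_total t s with h | h
  · exact key s t h h2
  · have e1 : (Real.exp s - Real.exp t) * (s - t) = (Real.exp t - Real.exp s) * (t - s) := by ring
    have e2 : (s - t) ^ 2 = (t - s) ^ 2 := by ring
    rw [e1, e2]
    exact key t s h h1

theorem exp_lip {c s t : ℝ} (hs : s ≤ c) (ht : t ≤ c) :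
    |Real.exp s - Real.exp t| ≤ Real.exp c * |s - t| := by
  rcases le_total t s with h | h
  · rw [abs_of_nonneg (sub_nonneg.2 (Real.exp_le_exp.2 h)), abs_of_nonneg (sub_nonneg.2 h)]
    have h1 : Real.exp s - Real.exp t ≤ Real.exp s * (s - t) := by
      have hes : Real.exp t = Real.exp s * Real.exp (t - s) := by
        rw [← Real.exp_add]; ring_nf
      nlinarith [Real.add_one_le_exp (t - s), Real.exp_pos s]
    have h2 : Real.exp s * (s - t) ≤ Real.exp c * (s - t) :=
      mul_le_mul_of_nonneg_right (Real.exp_le_exp.2 hs) (sub_nonneg.2 h)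
    linarith
  · rw [abs_of_nonpos (sub_nonpos.2 (Real.exp_le_exp.2 h)), abs_of_nonpos (sub_nonpos.2 h)]
    have h1 : Real.exp t - Real.exp s ≤ Real.exp t * (t - s) := by
      have hes : Real.exp s = Real.exp t * Real.exp (s - t) := by
        rw [← Real.exp_add]; ring_nf
      nlinarith [Real.add_one_le_exp (s - t), Real.exp_pos t]
    have h2 : Real.exp t * (t - s) ≤ Real.exp c * (t - s) :=
      mul_le_mul_of_nonneg_right (Real.exp_le_exp.2 ht) (sub_nonneg.2 h)
    linarith

theorem log_lip {r u v : ℝ} (hr : 0 < r) (hu : r ≤ u) (hv : r ≤ v) :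
    |Real.log u - Real.log v| ≤ |u - v| / r := by
  have hupos : 0 < u := lt_of_lt_of_le hr hu
  have hvpos : 0 < v := lt_of_lt_of_le hr hv
  have key : ∀ p q : ℝ, r ≤ p → r ≤ q → q ≤ p → Real.log p - Real.log q ≤ (p - q) / r := by
    intro p q hp hq hpq
    have hppos : 0 < p := lt_of_lt_of_le hr hp
    have hqpos : 0 < q := lt_of_lt_of_le hr hq
    have h1 : Real.log p - Real.log q = Real.log (p / q) := (Real.log_div hppos.ne' hqpos.ne').symm
    have h2 : Real.log (p / q) ≤ p / q - 1 := Real.log_le_sub_one_of_pos (by positivity)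
    have h3 : p / q - 1 = (p - q) / q := by field_simp
    have h4 : (p - q) / q ≤ (p - q) / r := by
      apply div_le_div_of_nonneg_left (by linarith) hr hq
    linarith
  rcases le_total v u with h | h
  · rw [abs_of_nonneg (sub_nonneg.2 (Real.log_le_log hvpos h)),
      abs_of_nonneg (sub_nonneg.2 h)]
    exact key u v hu hv h
  · rw [abs_sub_comm, abs_sub_comm u v,
      abs_of_nonneg (sub_nonneg.2 (Real.log_le_log hupos h)),
      abs_of_nonneg (sub_nonneg.2 h)]
    exact key v u hv hu h



variable {N : ℕ} {X : Fin N → Type*} [∀ i, MeasurableSpace (X i)]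
  {m : ∀ i, Measure (X i)} [∀ i, IsProbabilityMeasure (m i)]
  {K : (∀ i, X i) → ℝ} {φ : ∀ i, X i → ℝ} {a b c : ℝ}

def Afun (m : ∀ i, Measure (X i)) (K : (∀ i, X i) → ℝ) (φ : ∀ i, X i → ℝ)
    (i : Fin N) (xi : X i) : ℝ :=
  ∫ y, K (Function.update y i xi) * Real.exp (∑ j ∈ Finset.univ.erase i, φ j (y j)) ∂Measure.pi m

def Rfun (m : ∀ i, Measure (X i)) (φ : ∀ i, X i → ℝ) (i : Fin N) : ℝ :=
  ∫ y, Real.exp (∑ j ∈ Finset.univ.erase i, φ j (y j)) ∂Measure.pi m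

theorem meas_sum (hφ : ∀ j, Measurable (φ j)) (s : Finset (Fin N)) :
    Measurable fun y : ∀ k, X k => ∑ j ∈ s, φ j (y j) :=
  Finset.measurable_sum s fun j _ => (hφ j).comp (measurable_pi_apply j)

theorem meas_gamma (hK : Measurable K) (hφ : ∀ j, Measurable (φ j)) :
    Measurable (gammaFn K φ) :=
  hK.mul (Real.measurable_exp.comp (meas_sum hφ Finset.univ))

theorem sum_abs_le (hc : 0 ≤ c) (y : ∀ k, X k) (s : Finset (Fin N))
    (h : ∀ j ∈ s, |φ j (y j)| ≤ c) : |∑ j ∈ s, φ j (y j)| ≤ N * c := by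
  calc |∑ j ∈ s, φ j (y j)| ≤ ∑ j ∈ s, |φ j (y j)| := Finset.abs_sum_le_sum_abs _ _
    _ ≤ ∑ _j ∈ s, c := Finset.sum_le_sum h
    _ = s.card * c := by rw [Finset.sum_const, nsmul_eq_mul]
    _ ≤ N * c := by
        have h1 : (s.card : ℝ) ≤ N := by
          have := s.card_le_univ
          simp only [Finset.card_univ, Fintype.card_fin] at this
          exact_mod_cast this
        exact mul_le_mul_of_nonneg_right h1 hc

theorem ae_pi_abs_le (hbd : ∀ j, ∀ᵐ x ∂m j, |φ j x| ≤ c) :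
    ∀ᵐ y ∂Measure.pi m, ∀ j, |φ j (y j)| ≤ c :=
  ae_all_iff.2 fun j => ae_eval_pi m j (hbd j)

theorem gamma_bounds (ha : 0 < a) (hKb : ∀ᵐ x ∂Measure.pi m, a ≤ K x ∧ K x ≤ b)
    (hbd : ∀ j, ∀ᵐ x ∂m j, |φ j x| ≤ c) (hc : 0 ≤ c) :
    ∀ᵐ x ∂Measure.pi m, a * Real.exp (-(N * c)) ≤ gammaFn K φ x ∧
      gammaFn K φ x ≤ b * Real.exp (N * c) ∧ |gammaFn K φ x| ≤ b * Real.exp (N * c) := by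
  filter_upwards [hKb, ae_pi_abs_le hbd] with x h1 h2
  have hs := sum_abs_le hc x Finset.univ fun j _ => h2 j
  have he1 : Real.exp (-(N * c)) ≤ Real.exp (∑ j, φ j (x j)) :=
    Real.exp_le_exp.2 (by cases abs_le.1 hs; linarith)
  have he2 : Real.exp (∑ j, φ j (x j)) ≤ Real.exp (N * c) :=
    Real.exp_le_exp.2 (by cases abs_le.1 hs; linarith)
  have hb0 : 0 < b := lt_of_lt_of_le ha (le_trans h1.1 h1.2 |> fun _ => h1.1.trans h1.2) |>.trans_le le_rfl
  refine ⟨?_, ?_, ?_⟩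
  · unfold gammaFn
    calc a * Real.exp (-(N * c)) ≤ a * Real.exp (∑ j, φ j (x j)) :=
          mul_le_mul_of_nonneg_left he1 ha.le
      _ ≤ K x * Real.exp (∑ j, φ j (x j)) :=
          mul_le_mul_of_nonneg_right h1.1 (Real.exp_pos _).le
  · unfold gammaFn
    calc K x * Real.exp (∑ j, φ j (x j)) ≤ b * Real.exp (∑ j, φ j (x j)) :=
          mul_le_mul_of_nonneg_right h1.2 (Real.exp_pos _).le
      _ ≤ b * Real.exp (N * c) := mul_le_mul_of_nonneg_left he2 hb0.le
  · rw [abs_of_nonneg]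
    · calc gammaFn K φ x = K x * Real.exp (∑ j, φ j (x j)) := rfl
        _ ≤ b * Real.exp (∑ j, φ j (x j)) :=
            mul_le_mul_of_nonneg_right h1.2 (Real.exp_pos _).le
        _ ≤ b * Real.exp (N * c) := mul_le_mul_of_nonneg_left he2 hb0.le
    · exact mul_nonneg (le_trans ha.le h1.1) (Real.exp_pos _).le

theorem integrable_gamma (ha : 0 < a) (hK : Measurable K)
    (hKb : ∀ᵐ x ∂Measure.pi m, a ≤ K x ∧ K x ≤ b)
    (hφm : ∀ j, Measurable (φ j)) (hbd : ∀ j, ∀ᵐ x ∂m j, |φ j x| ≤ c) (hc : 0 ≤ c) :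
    Integrable (gammaFn K φ) (Measure.pi m) :=
  integrable_of_ae_bound (b * Real.exp (N * c)) (meas_gamma hK hφm).aestronglyMeasurable
    ((gamma_bounds ha hKb hbd hc).mono fun x hx => hx.2.2)

theorem schrT_eq (K : (∀ i, X i) → ℝ) (φ : ∀ i, X i → ℝ) (i : Fin N) (xi : X i) :
    schrT m K φ i xi = Real.exp (φ i xi) * Afun m K φ i xi := by
  unfold schrT Afun
  rw [← integral_const_mul]
  congr 1
  funext y
  unfold gammaFn
  rw [← Finset.add_sum_erase Finset.univ (fun j => φ j (Function.update y i xi j))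
    (Finset.mem_univ i), Function.update_self, Real.exp_add]
  have h : ∑ j ∈ Finset.univ.erase i, φ j (Function.update y i xi j)
      = ∑ j ∈ Finset.univ.erase i, φ j (y j) :=
    Finset.sum_congr rfl fun j hj => by rw [Function.update_of_ne (Finset.ne_of_mem_erase hj)]
  rw [h]; ring

theorem expsum_bounds (hbd : ∀ j, ∀ᵐ x ∂m j, |φ j x| ≤ c) (hc : 0 ≤ c) (s : Finset (Fin N)) :
    ∀ᵐ y ∂Measure.pi m, Real.exp (-(N * c)) ≤ Real.exp (∑ j ∈ s, φ j (y j)) ∧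
      Real.exp (∑ j ∈ s, φ j (y j)) ≤ Real.exp (N * c) := by
  filter_upwards [ae_pi_abs_le hbd] with y h2
  have hs := sum_abs_le hc y s fun j _ => h2 j
  exact ⟨Real.exp_le_exp.2 (by cases abs_le.1 hs; linarith),
    Real.exp_le_exp.2 (by cases abs_le.1 hs; linarith)⟩

theorem integrable_expsum (hφm : ∀ j, Measurable (φ j))
    (hbd : ∀ j, ∀ᵐ x ∂m j, |φ j x| ≤ c) (hc : 0 ≤ c) (s : Finset (Fin N)) :
    Integrable (fun y : ∀ k, X k => Real.exp (∑ j ∈ s, φ j (y j))) (Measure.pi m) := by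
  refine integrable_of_ae_bound (Real.exp (N * c))
    (Real.measurable_exp.comp (meas_sum hφm s)).aestronglyMeasurable ?_
  filter_upwards [expsum_bounds hbd hc s] with y hy
  rw [abs_of_nonneg (Real.exp_pos _).le]
  exact hy.2

theorem Rfun_bounds (hφm : ∀ j, Measurable (φ j))
    (hbd : ∀ j, ∀ᵐ x ∂m j, |φ j x| ≤ c) (hc : 0 ≤ c) (i : Fin N) :
    Real.exp (-(N * c)) ≤ Rfun m φ i ∧ Rfun m φ i ≤ Real.exp (N * c) := by
  have hint := integrable_expsum hφm hbd hc (Finset.univ.erase i)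
  have hb := expsum_bounds hbd hc (Finset.univ.erase i)
  constructor
  · calc Real.exp (-(N * c)) = ∫ _y, Real.exp (-(N * c)) ∂Measure.pi m := by simp
      _ ≤ Rfun m φ i := integral_mono_ae (integrable_const _) hint (hb.mono fun y hy => hy.1)
  · calc Rfun m φ i ≤ ∫ _y, Real.exp (N * c) ∂Measure.pi m :=
        integral_mono_ae hint (integrable_const _) (hb.mono fun y hy => hy.2)
      _ = Real.exp (N * c) := by simp

theorem Rfun_pos (hφm : ∀ j, Measurable (φ j))
    (hbd : ∀ j, ∀ᵐ x ∂m j, |φ j x| ≤ c) (hc : 0 ≤ c) (i : Fin N) :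
    0 < Rfun m φ i :=
  lt_of_lt_of_le (Real.exp_pos _) (Rfun_bounds hφm hbd hc i).1

theorem Afun_R_bounds (ha : 0 < a) (hK : Measurable K)
    (hKb : ∀ᵐ x ∂Measure.pi m, a ≤ K x ∧ K x ≤ b)
    (hφm : ∀ j, Measurable (φ j)) (hbd : ∀ j, ∀ᵐ x ∂m j, |φ j x| ≤ c) (hc : 0 ≤ c) (i : Fin N) :
    ∀ᵐ xi ∂m i, a * Rfun m φ i ≤ Afun m K φ i xi ∧ Afun m K φ i xi ≤ b * Rfun m φ i := by
  have hb0 : 0 < b := by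
    have := hKb.exists
    obtain ⟨x, hx⟩ := this
    linarith [hx.1, hx.2]
  filter_upwards [ae_update_pi m i hKb] with xi hxi
  have hEint := integrable_expsum hφm hbd hc (Finset.univ.erase i)
  have hEbd := expsum_bounds hbd hc (Finset.univ.erase i)
  have hKEm : Measurable fun y : ∀ k, X k =>
      K (Function.update y i xi) * Real.exp (∑ j ∈ Finset.univ.erase i, φ j (y j)) :=
    (hK.comp measurable_update_left).mul
      (Real.measurable_exp.comp (meas_sum hφm (Finset.univ.erase i)))
  have hKEint : Integrable (fun y : ∀ k, X k =>
      K (Function.update y i xi) * Real.exp (∑ j ∈ Finset.univ.erase i, φ j (y j)))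
      (Measure.pi m) := by
    refine integrable_of_ae_bound (b * Real.exp (N * c)) hKEm.aestronglyMeasurable ?_
    filter_upwards [hxi, hEbd] with y h1 h2
    rw [abs_mul, abs_of_nonneg (le_trans ha.le h1.1), abs_of_nonneg (Real.exp_pos _).le]
    exact mul_le_mul h1.2 h2.2 (Real.exp_pos _).le hb0.le
  constructor
  · rw [show a * Rfun m φ i
        = ∫ y, a * Real.exp (∑ j ∈ Finset.univ.erase i, φ j (y j)) ∂Measure.pi m
      from (integral_const_mul _ _).symm]
    refine integral_mono_ae (hEint.const_mul a) hKEint ?_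
    filter_upwards [hxi] with y h1
    exact mul_le_mul_of_nonneg_right h1.1 (Real.exp_pos _).le
  · rw [show b * Rfun m φ i
        = ∫ y, b * Real.exp (∑ j ∈ Finset.univ.erase i, φ j (y j)) ∂Measure.pi m
      from (integral_const_mul _ _).symm]
    refine integral_mono_ae hKEint (hEint.const_mul b) ?_
    filter_upwards [hxi] with y h1
    exact mul_le_mul_of_nonneg_right h1.2 (Real.exp_pos _).le

theorem integral_eval_mul (i : Fin N) {g : X i → ℝ} {G : (∀ j, X j) → ℝ}
    (hg : Measurable g) (hG : Measurable G) {cg cG : ℝ}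
    (hgb : ∀ᵐ t ∂m i, |g t| ≤ cg) (hGb : ∀ᵐ x ∂Measure.pi m, |G x| ≤ cG) :
    ∫ x, g (x i) * G x ∂Measure.pi m
      = ∫ xi, g xi * (∫ y, G (Function.update y i xi) ∂Measure.pi m) ∂m i := by
  obtain ⟨t0, ht0⟩ := hgb.exists
  have hcg : 0 ≤ cg := le_trans (abs_nonneg _) ht0
  have hFm : Measurable fun x : ∀ j, X j => g (x i) * G x :=
    (hg.comp (measurable_pi_apply i)).mul hG
  have hFint : Integrable (fun x : ∀ j, X j => g (x i) * G x) (Measure.pi m) := by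
    refine integrable_of_ae_bound (cg * cG) hFm.aestronglyMeasurable ?_
    filter_upwards [ae_eval_pi m i hgb, hGb] with x h1 h2
    rw [abs_mul]
    exact mul_le_mul h1 h2 (abs_nonneg _) hcg
  rw [integral_update_pi m i hFm.aestronglyMeasurable hFint]
  refine integral_congr_ae (Eventually.of_forall fun xi => ?_)
  simp only [Function.update_self]
  exact integral_const_mul _ _

theorem integral_eval_mul_gamma (ha : 0 < a) (hK : Measurable K)
    (hKb : ∀ᵐ x ∂Measure.pi m, a ≤ K x ∧ K x ≤ b)
    (hφm : ∀ j, Measurable (φ j)) (hbd : ∀ j, ∀ᵐ x ∂m j, |φ j x| ≤ c) (hc : 0 ≤ c)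
    (i : Fin N) {g : X i → ℝ} {cg : ℝ} (hg : Measurable g) (hgb : ∀ᵐ t ∂m i, |g t| ≤ cg) :
    ∫ x, g (x i) * gammaFn K φ x ∂Measure.pi m = ∫ xi, g xi * schrT m K φ i xi ∂m i :=
  integral_eval_mul i hg (meas_gamma hK hφm) hgb
    ((gamma_bounds ha hKb hbd hc).mono fun x hx => hx.2.2)

theorem integral_gamma_eq (ha : 0 < a) (hK : Measurable K)
    (hKb : ∀ᵐ x ∂Measure.pi m, a ≤ K x ∧ K x ≤ b)
    (hφm : ∀ j, Measurable (φ j)) (hbd : ∀ j, ∀ᵐ x ∂m j, |φ j x| ≤ c) (hc : 0 ≤ c)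
    (i : Fin N) :
    ∫ x, gammaFn K φ x ∂Measure.pi m = ∫ xi, schrT m K φ i xi ∂m i :=
  integral_update_pi m i (meas_gamma hK hφm).aestronglyMeasurable
    (integrable_gamma ha hK hKb hφm hbd hc)

theorem integral_sq_sum {Δ : ∀ i, X i → ℝ} (hm : ∀ j, Measurable (Δ j))
    (hbd : ∀ j, ∀ᵐ x ∂m j, |Δ j x| ≤ c) (hc : 0 ≤ c)
    (hzero : ∀ i j : Fin N, i ≠ j → (∫ x, Δ i x ∂m i) = 0 ∨ (∫ x, Δ j x ∂m j) = 0) :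
    ∫ x, (∑ i, Δ i (x i)) ^ 2 ∂Measure.pi m = ∑ i, ∫ t, (Δ i t) ^ 2 ∂m i := by
  have hintprod : ∀ i j : Fin N,
      Integrable (fun x : ∀ k, X k => Δ i (x i) * Δ j (x j)) (Measure.pi m) := by
    intro i j
    refine integrable_of_ae_bound (c * c)
      (((hm i).comp (measurable_pi_apply i)).mul
        ((hm j).comp (measurable_pi_apply j))).aestronglyMeasurable ?_
    filter_upwards [ae_eval_pi m i (hbd i), ae_eval_pi m j (hbd j)] with x h1 h2
    rw [abs_mul]
    exact mul_le_mul h1 h2 (abs_nonneg _) hc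
  have hprod_ne : ∀ i j : Fin N, i ≠ j →
      ∫ x, Δ i (x i) * Δ j (x j) ∂Measure.pi m = (∫ t, Δ i t ∂m i) * (∫ t, Δ j t ∂m j) := by
    intro i j hij
    rw [integral_eval_mul (G := fun x : ∀ k, X k => Δ j (x j)) i (hm i)
      ((hm j).comp (measurable_pi_apply j)) (hbd i) (ae_eval_pi m j (hbd j))]
    have hinner : ∀ xi : X i,
        (∫ y, Δ j (Function.update y i xi j) ∂Measure.pi m) = ∫ t, Δ j t ∂m j := by
      intro xi
      have h1 : (fun y : ∀ k, X k => Δ j (Function.update y i xi j))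
          = fun y : ∀ k, X k => Δ j (y j) := by
        funext y; rw [Function.update_of_ne (Ne.symm hij)]
      rw [h1, integral_eval_pi m j (hm j).aestronglyMeasurable]
    simp_rw [hinner]
    rw [integral_mul_const]
  have hprod_eq : ∀ i : Fin N,
      ∫ x, Δ i (x i) * Δ i (x i) ∂Measure.pi m = ∫ t, (Δ i t) ^ 2 ∂m i := by
    intro i
    have h1 : (fun x : ∀ k, X k => Δ i (x i) * Δ i (x i))
        = fun x : ∀ k, X k => (Δ i (x i)) ^ 2 := by
      funext x; rw [sq]
    rw [h1, integral_eval_pi m i (g := fun t => (Δ i t) ^ 2)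
      ((hm i).pow_const 2).aestronglyMeasurable]
  have hexp : (fun x : ∀ k, X k => (∑ i, Δ i (x i)) ^ 2)
      = fun x => ∑ i : Fin N, ∑ j : Fin N, Δ i (x i) * Δ j (x j) := by
    funext x
    rw [sq, Finset.sum_mul_sum]
  rw [hexp, integral_finset_sum _ fun i _ => integrable_finset_sum _ fun j _ => hintprod i j]
  refine Finset.sum_congr rfl fun i _ => ?_
  rw [integral_finset_sum _ fun j _ => hintprod i j]
  rw [Finset.sum_eq_single i ?_ ?_]
  · exact hprod_eq i
  · intro j _ hj
    rw [hprod_ne i j (Ne.symm hj)]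
    rcases hzero i j (Ne.symm hj) with h | h <;> rw [h] <;> ring
  · intro h; exact absurd (Finset.mem_univ i) h

def omegaC (a b M : ℝ) : ℝ := 2 * Real.log M + Real.log b - Real.log a

def aprioriB (N : ℕ) (a b M : ℝ) : ℝ :=
  (N + 1) * omegaC a b M + Real.log M + |Real.log a| + |Real.log b|

theorem omegaC_nonneg (ha : 0 < a) (hab : a ≤ b) {M : ℝ} (hM : 1 ≤ M) : 0 ≤ omegaC a b M := by
  have h1 : Real.log a ≤ Real.log b := Real.log_le_log ha hab
  have h2 : 0 ≤ Real.log M := Real.log_nonneg hM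
  unfold omegaC; linarith

theorem aprioriB_nonneg (ha : 0 < a) (hab : a ≤ b) {M : ℝ} (hM : 1 ≤ M) :
    0 ≤ aprioriB N a b M := by
  have h := omegaC_nonneg ha hab hM
  have h2 : 0 ≤ Real.log M := Real.log_nonneg hM
  have h3 : (0:ℝ) ≤ N + 1 := by positivity
  unfold aprioriB
  have := abs_nonneg (Real.log a)
  have := abs_nonneg (Real.log b)
  nlinarith

theorem apriori {M : ℝ} (ha : 0 < a) (hab : a ≤ b) (hM : 1 ≤ M) (hK : Measurable K)
    (hKb : ∀ᵐ x ∂Measure.pi m, a ≤ K x ∧ K x ≤ b)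
    {μ : ∀ i, X i → ℝ} (hφ : InE m φ) (hμ : InFppM m M μ)
    (hT : ∀ i, schrT m K φ i =ᵐ[m i] μ i) :
    ∀ i, ∀ᵐ x ∂m i, |φ i x| ≤ aprioriB N a b M := by
  classical
  have hM0 : (0:ℝ) < M := lt_of_lt_of_le one_pos hM
  have hb0 : (0:ℝ) < b := lt_of_lt_of_le ha hab
  have hφm : ∀ j, Measurable (φ j) := fun j => (hφ.1 j).1
  have hμm : ∀ j, Measurable (μ j) := fun j => (hμ.1.1.1 j).1
  have hμbd : ∀ j, ∀ᵐ x ∂m j, 1 / M ≤ μ j x ∧ μ j x ≤ M := hμ.2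
  set c : ℝ := ∑ j, (eLpNorm (φ j) ⊤ (m j)).toReal with hc_def
  have hc0 : 0 ≤ c := Finset.sum_nonneg fun j _ => ENNReal.toReal_nonneg
  have hbd : ∀ j, ∀ᵐ x ∂m j, |φ j x| ≤ c := by
    intro j
    filter_upwards [memLp_top_bound (hφ.1 j).2] with x hx
    exact hx.trans (Finset.single_le_sum (f := fun j => (eLpNorm (φ j) ⊤ (m j)).toReal)
      (fun j _ => ENNReal.toReal_nonneg) (Finset.mem_univ j))
  set ω : ℝ := omegaC a b M with hω_def
  have hω0 : 0 ≤ ω := omegaC_nonneg ha hab hM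
  have hlogM : 0 ≤ Real.log M := Real.log_nonneg hM
  -- the interval bound, for every index
  have hinterval : ∀ i : Fin N, ∀ᵐ xi ∂m i,
      -(Real.log M + Real.log b + Real.log (Rfun m φ i)) ≤ φ i xi ∧
        φ i xi ≤ Real.log M - Real.log a - Real.log (Rfun m φ i) := by
    intro i
    have hR : 0 < Rfun m φ i := Rfun_pos hφm hbd hc0 i
    filter_upwards [Afun_R_bounds ha hK hKb hφm hbd hc0 i, hT i, hμbd i] with xi hA hTi hμi
    have hid : Real.exp (φ i xi) * Afun m K φ i xi = μ i xi := by
      rw [← schrT_eq]; exact hTi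
    have h1 : Real.exp (φ i xi) ≤ M / (a * Rfun m φ i) := by
      rw [le_div_iff₀ (by positivity)]
      calc Real.exp (φ i xi) * (a * Rfun m φ i)
          ≤ Real.exp (φ i xi) * Afun m K φ i xi :=
            mul_le_mul_of_nonneg_left hA.1 (Real.exp_pos _).le
        _ = μ i xi := hid
        _ ≤ M := hμi.2
    have h2 : 1 / (M * (b * Rfun m φ i)) ≤ Real.exp (φ i xi) := by
      rw [div_le_iff₀ (by positivity)]
      have h3 : 1 / M ≤ Real.exp (φ i xi) * (b * Rfun m φ i) := by
        calc 1 / M ≤ μ i xi := hμi.1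
          _ = Real.exp (φ i xi) * Afun m K φ i xi := hid.symm
          _ ≤ Real.exp (φ i xi) * (b * Rfun m φ i) :=
              mul_le_mul_of_nonneg_left hA.2 (Real.exp_pos _).le
      rw [div_le_iff₀ hM0] at h3
      linarith [mul_le_mul_of_nonneg_right h3 (le_of_lt hM0)]
    constructor
    · have h4 := Real.log_le_log (by positivity) h2
      rw [Real.log_exp, one_div, Real.log_inv,
        Real.log_mul hM0.ne' (by positivity), Real.log_mul hb0.ne' hR.ne'] at h4
      linarith
    · have h4 := Real.log_le_log (Real.exp_pos _) h1
      rw [Real.log_exp, Real.log_div hM0.ne' (by positivity),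
        Real.log_mul ha.ne' hR.ne'] at h4
      linarith
  -- mean-zero indices
  have hmain : ∀ i : Fin N, (i : ℕ) < N - 1 → ∀ᵐ xi ∂m i, |φ i xi| ≤ ω := by
    intro i hi
    set lo : ℝ := -(Real.log M + Real.log b + Real.log (Rfun m φ i)) with hlo_def
    set hi' : ℝ := Real.log M - Real.log a - Real.log (Rfun m φ i) with hhi_def
    have hωeq : hi' - lo = ω := by rw [hhi_def, hlo_def, hω_def]; unfold omegaC; ring
    have hint : Integrable (φ i) (m i) :=
      integrable_of_ae_bound c (hφm i).aestronglyMeasurable (hbd i)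
    have hmean : ∫ x, φ i x ∂m i = 0 := hφ.2 i hi
    have hlo0 : lo ≤ 0 := by
      have h5 := integral_mono_ae (integrable_const lo) hint
        ((hinterval i).mono fun xi h => h.1)
      rw [hmean, integral_const] at h5
      simpa using h5
    have hhi0 : 0 ≤ hi' := by
      have h5 := integral_mono_ae hint (integrable_const hi')
        ((hinterval i).mono fun xi h => h.2)
      rw [hmean, integral_const] at h5
      simpa using h5
    filter_upwards [hinterval i] with xi h
    rw [abs_le]
    constructor <;> [linarith [h.1]; linarith [h.2]]
  intro i
  by_cases hcase : (i : ℕ) < N - 1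
  · filter_upwards [hmain i hcase] with xi h
    refine h.trans ?_
    unfold aprioriB
    rw [← hω_def]
    have := abs_nonneg (Real.log a)
    have := abs_nonneg (Real.log b)
    have hN0 : (0:ℝ) ≤ N := Nat.cast_nonneg N
    have hexp : ((N : ℝ) + 1) * ω = N * ω + ω := by ring
    nlinarith [mul_nonneg hN0 hω0]
  -- the last index
  · set lo : ℝ := -(Real.log M + Real.log b + Real.log (Rfun m φ i)) with hlo_def
    set hi' : ℝ := Real.log M - Real.log a - Real.log (Rfun m φ i) with hhi_def
    have hωeq : hi' - lo = ω := by rw [hhi_def, hlo_def, hω_def]; unfold omegaC; ring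
    have hiN : (i : ℕ) = N - 1 := le_antisymm (Nat.le_pred_of_lt i.isLt) (not_lt.1 hcase)
    set Z : ℝ := ∫ x, gammaFn K φ x ∂Measure.pi m with hZ_def
    have hγint : Integrable (gammaFn K φ) (Measure.pi m) :=
      integrable_gamma ha hK hKb hφm hbd hc0
    have hμint : Integrable (μ i) (m i) := by
      refine integrable_of_ae_bound M (hμm i).aestronglyMeasurable ?_
      filter_upwards [hμbd i] with x hx
      rw [abs_le]
      constructor
      · have : 0 < 1 / M := by positivity
        linarith [hx.1]
      · exact hx.2
    have hZμ : Z = ∫ xi, μ i xi ∂m i := by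
      rw [hZ_def, integral_gamma_eq ha hK hKb hφm hbd hc0 i]
      exact integral_congr_ae (hT i)
    have hZbounds : 1 / M ≤ Z ∧ Z ≤ M := by
      rw [hZμ]
      constructor
      · have h5 := integral_mono_ae (integrable_const (1 / M)) hμint
          ((hμbd i).mono fun xi h => h.1)
        rw [integral_const] at h5
        simpa using h5
      · have h5 := integral_mono_ae hμint (integrable_const M)
          ((hμbd i).mono fun xi h => h.2)
        rw [integral_const] at h5
        simpa using h5
    have hother : ∀ᵐ x ∂Measure.pi m, ∀ j, j ≠ i → |φ j (x j)| ≤ ω := by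
      rw [ae_all_iff]
      intro j
      by_cases hj : j = i
      · subst hj
        exact Eventually.of_forall fun x h => absurd rfl h
      · have hjne : (j : ℕ) ≠ (i : ℕ) := fun h => hj (Fin.ext h)
        have hjlt : (j : ℕ) < N - 1 :=
          lt_of_le_of_ne (Nat.le_pred_of_lt j.isLt) (hiN ▸ hjne)
        exact (ae_eval_pi m j (hmain j hjlt)).mono fun x hx _ => hx
    have hφiv : ∀ᵐ x ∂Measure.pi m, lo ≤ φ i (x i) ∧ φ i (x i) ≤ hi' :=
      ae_eval_pi m i (hinterval i)
    have hsum : ∀ᵐ x ∂Measure.pi m,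
        lo - N * ω ≤ ∑ j, φ j (x j) ∧ ∑ j, φ j (x j) ≤ hi' + N * ω := by
      filter_upwards [hother, hφiv] with x h2 h3
      have hsplit : ∑ j, φ j (x j)
          = φ i (x i) + ∑ j ∈ Finset.univ.erase i, φ j (x j) :=
        (Finset.add_sum_erase Finset.univ (fun j => φ j (x j)) (Finset.mem_univ i)).symm
      have habs : |∑ j ∈ Finset.univ.erase i, φ j (x j)| ≤ N * ω :=
        sum_abs_le hω0 x (Finset.univ.erase i) fun j hj =>
          h2 j (Finset.ne_of_mem_erase hj)
      rw [abs_le] at habs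
      constructor <;> [linarith [h3.1, habs.1, hsplit] ; linarith [h3.2, habs.2, hsplit]]
    have hZub : Z ≤ b * Real.exp (hi' + N * ω) := by
      rw [hZ_def]
      have h5 := integral_mono_ae hγint (integrable_const (b * Real.exp (hi' + N * ω))) ?_
      · rw [integral_const] at h5
        simpa using h5
      · filter_upwards [hKb, hsum] with x h1 h2
        calc gammaFn K φ x = K x * Real.exp (∑ j, φ j (x j)) := rfl
          _ ≤ b * Real.exp (hi' + N * ω) :=
            mul_le_mul h1.2 (Real.exp_le_exp.2 h2.2) (Real.exp_pos _).le hb0.le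
    have hZlb : a * Real.exp (lo - N * ω) ≤ Z := by
      rw [hZ_def]
      have h5 := integral_mono_ae (integrable_const (a * Real.exp (lo - N * ω))) hγint ?_
      · rw [integral_const] at h5
        simpa using h5
      · filter_upwards [hKb, hsum] with x h1 h2
        calc a * Real.exp (lo - N * ω)
            ≤ K x * Real.exp (∑ j, φ j (x j)) :=
              mul_le_mul h1.1 (Real.exp_le_exp.2 h2.1) (Real.exp_pos _).le
                (le_trans ha.le h1.1)
          _ = gammaFn K φ x := rfl
    -- transfer to bounds on hi' and lo
    have hhi_lb : -(Real.log M + Real.log b) - N * ω ≤ hi' := by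
      have h6 : 1 / (M * b) ≤ Real.exp (hi' + N * ω) := by
        rw [div_le_iff₀ (by positivity)]
        have := hZbounds.1
        rw [div_le_iff₀ hM0] at this
        nlinarith [Real.exp_pos (hi' + N * ω), hZub]
      have h7 := Real.log_le_log (by positivity) h6
      rw [Real.log_exp, one_div, Real.log_inv, Real.log_mul hM0.ne' hb0.ne'] at h7
      linarith
    have hlo_ub : lo ≤ Real.log M - Real.log a + N * ω := by
      have h6 : Real.exp (lo - N * ω) ≤ M / a := by
        rw [le_div_iff₀ ha]
        nlinarith [hZlb, hZbounds.2]
      have h7 := Real.log_le_log (Real.exp_pos _) h6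
      rw [Real.log_exp, Real.log_div hM0.ne' ha.ne'] at h7
      linarith
    filter_upwards [hinterval i] with xi h
    rw [abs_le]
    unfold aprioriB
    rw [← hω_def]
    have ha1 := le_abs_self (Real.log a)
    have ha2 := neg_abs_le (Real.log a)
    have hb1 := le_abs_self (Real.log b)
    have hb2 := neg_abs_le (Real.log b)
    have hexp : ((N : ℝ) + 1) * ω = N * ω + ω := by ring
    constructor
    · have : lo ≥ hi' - ω := by linarith
      have h8 : φ i xi ≥ -(Real.log M + Real.log b) - N * ω - ω := by linarith [h.1]
      linarith
    · have : hi' ≤ lo + ω := by linarith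
      have h8 : φ i xi ≤ Real.log M - Real.log a + N * ω + ω := by linarith [h.2]
      linarith
end SchrAux
end

set_option maxHeartbeats 1000000

/-- `L^∞` Lipschitz estimate for the Schrödinger map. -/
theorem schrodinger_map_Linfty_lipschitz
    {N : ℕ} (hN : 2 ≤ N) {X : Fin N → Type*} [∀ i, MeasurableSpace (X i)]
    (m : ∀ i, MeasureTheory.Measure (X i)) [∀ i, MeasureTheory.IsProbabilityMeasure (m i)]
    (K : (∀ i, X i) → ℝ) (a b : ℝ) (ha : 0 < a) (hab : a ≤ b)
    (hK : Measurable K) (hKb : ∀ᵐ x ∂MeasureTheory.Measure.pi m, a ≤ K x ∧ K x ≤ b) :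
    ∀ M : ℝ, 1 ≤ M → ∃ C : ℝ, ∀ φ ψ μ ν : ∀ i, X i → ℝ,
      InE m φ → InE m ψ → InFppM m M μ → InFppM m M ν →
      (∀ i, schrT m K φ i =ᵐ[m i] μ i) → (∀ i, schrT m K ψ i =ᵐ[m i] ν i) →
      ⨆ i, eLpNorm (fun x => φ i x - ψ i x) ⊤ (m i) ≤
        ENNReal.ofReal C * ⨆ i, eLpNorm (fun x => μ i x - ν i x) ⊤ (m i) := by
  classical
  intro M hM
  have hM0 : (0:ℝ) < M := lt_of_lt_of_le one_pos hM
  have hb0 : (0:ℝ) < b := lt_of_lt_of_le ha hab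
  have hN0 : (0:ℝ) < N := by positivity
  set B : ℝ := SchrAux.aprioriB N a b M with hB_def
  have hB0 : 0 ≤ B := SchrAux.aprioriB_nonneg ha hab hM
  set κ : ℝ := a * Real.exp (-(N * B)) with hκ_def
  have hκ0 : 0 < κ := by positivity
  set c5 : ℝ := b * Real.exp (N * B) / (a * Real.exp (-(N * B))) with hc5_def
  have hc50 : 0 < c5 := by positivity
  set C : ℝ := (4 / 3) * (M + c5 ^ 2 * N ^ 2 / κ + 1) with hC_def
  have hC0 : 0 ≤ C := by positivity
  refine ⟨C, ?_⟩
  intro φ ψ μ ν hφ hψ hμ hν hTφ hTψ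
  set P := MeasureTheory.Measure.pi m with hP_def
  have hφm : ∀ j, Measurable (φ j) := fun j => (hφ.1 j).1
  have hψm : ∀ j, Measurable (ψ j) := fun j => (hψ.1 j).1
  have hμm : ∀ j, Measurable (μ j) := fun j => (hμ.1.1.1 j).1
  have hνm : ∀ j, Measurable (ν j) := fun j => (hν.1.1.1 j).1
  have hφB : ∀ i, ∀ᵐ x ∂m i, |φ i x| ≤ B := SchrAux.apriori ha hab hM hK hKb hφ hμ hTφ
  have hψB : ∀ i, ∀ᵐ x ∂m i, |ψ i x| ≤ B := SchrAux.apriori ha hab hM hK hKb hψ hν hTψ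
  set Δ : ∀ i, X i → ℝ := fun i x => φ i x - ψ i x with hΔ_def
  have hΔm : ∀ i, Measurable (Δ i) := fun i => (hφm i).sub (hψm i)
  have hΔbd : ∀ i, ∀ᵐ x ∂m i, |Δ i x| ≤ 2 * B := by
    intro i
    filter_upwards [hφB i, hψB i] with x h1 h2
    calc |Δ i x| ≤ |φ i x| + |ψ i x| := abs_sub _ _
      _ ≤ 2 * B := by linarith
  have h2B0 : (0:ℝ) ≤ 2 * B := by linarith
  -- the L∞ norms
  set Sμν := ⨆ i, eLpNorm (fun x => μ i x - ν i x) ⊤ (m i) with hSμν_def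
  set SΔ := ⨆ i, eLpNorm (fun x => φ i x - ψ i x) ⊤ (m i) with hSΔ_def
  have hSμν_fin : Sμν < ⊤ := by
    have h1 : ∀ i, eLpNorm (fun x => μ i x - ν i x) ⊤ (m i) < ⊤ := fun i =>
      ((hμ.1.1.1 i).2.sub (hν.1.1.1 i).2).eLpNorm_lt_top
    calc Sμν ≤ ∑ i, eLpNorm (fun x => μ i x - ν i x) ⊤ (m i) :=
          iSup_le fun i => Finset.single_le_sum
            (f := fun j => eLpNorm (fun x => μ j x - ν j x) ⊤ (m j))
            (fun j _ => zero_le) (Finset.mem_univ i)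
      _ < ⊤ := by
          rw [show ((⊤ : ℝ≥0∞) = ∞) from rfl]
          exact ENNReal.sum_lt_top.2 fun i _ => h1 i
  have hSΔ_fin : SΔ < ⊤ := by
    have h1 : ∀ i, eLpNorm (fun x => φ i x - ψ i x) ⊤ (m i) < ⊤ := fun i =>
      ((hφ.1 i).2.sub (hψ.1 i).2).eLpNorm_lt_top
    calc SΔ ≤ ∑ i, eLpNorm (fun x => φ i x - ψ i x) ⊤ (m i) :=
          iSup_le fun i => Finset.single_le_sum
            (f := fun j => eLpNorm (fun x => φ j x - ψ j x) ⊤ (m j))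
            (fun j _ => zero_le) (Finset.mem_univ i)
      _ < ⊤ := by
          rw [show ((⊤ : ℝ≥0∞) = ∞) from rfl]
          exact ENNReal.sum_lt_top.2 fun i _ => h1 i
  set δ : ℝ := Sμν.toReal with hδ_def
  set D : ℝ := SΔ.toReal with hD_def
  have hδ0 : 0 ≤ δ := ENNReal.toReal_nonneg
  have hD0 : 0 ≤ D := ENNReal.toReal_nonneg
  have hδbd : ∀ i, ∀ᵐ x ∂m i, |μ i x - ν i x| ≤ δ := by
    intro i
    filter_upwards [SchrAux.memLp_top_bound ((hμ.1.1.1 i).2.sub (hν.1.1.1 i).2)] with x hx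
    refine hx.trans (ENNReal.toReal_mono hSμν_fin.ne ?_)
    exact le_iSup (fun i => eLpNorm (fun x => μ i x - ν i x) ⊤ (m i)) i
  have hDbd : ∀ i, ∀ᵐ x ∂m i, |Δ i x| ≤ D := by
    intro i
    filter_upwards [SchrAux.memLp_top_bound ((hφ.1 i).2.sub (hψ.1 i).2)] with x hx
    refine hx.trans (ENNReal.toReal_mono hSΔ_fin.ne ?_)
    exact le_iSup (fun i => eLpNorm (fun x => φ i x - ψ i x) ⊤ (m i)) i
  -- reduce the goal to `D ≤ C * δ`
  suffices hDC : D ≤ C * δ by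
    calc SΔ = ENNReal.ofReal D := (ENNReal.ofReal_toReal hSΔ_fin.ne).symm
      _ ≤ ENNReal.ofReal (C * δ) := ENNReal.ofReal_le_ofReal hDC
      _ = ENNReal.ofReal C * ENNReal.ofReal δ := ENNReal.ofReal_mul hC0
      _ ≤ ENNReal.ofReal C * Sμν := mul_le_mul_right ENNReal.ofReal_toReal_le _
  -- useful a.e. facts on the product space
  have haeφ : ∀ᵐ x ∂P, ∀ j, |φ j (x j)| ≤ B := SchrAux.ae_pi_abs_le hφB
  have haeψ : ∀ᵐ x ∂P, ∀ j, |ψ j (x j)| ≤ B := SchrAux.ae_pi_abs_le hψB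
  have haeΔ : ∀ᵐ x ∂P, ∀ j, |Δ j (x j)| ≤ 2 * B := SchrAux.ae_pi_abs_le hΔbd
  have hγφint : MeasureTheory.Integrable (gammaFn K φ) P :=
    SchrAux.integrable_gamma ha hK hKb hφm hφB hB0
  have hγψint : MeasureTheory.Integrable (gammaFn K ψ) P :=
    SchrAux.integrable_gamma ha hK hKb hψm hψB hB0
  have hγφbd := SchrAux.gamma_bounds ha hKb hφB hB0
  have hγψbd := SchrAux.gamma_bounds ha hKb hψB hB0
  -- integrals of squares
  set I : ℝ := ∑ i, ∫ t, (Δ i t) ^ 2 ∂m i with hI_def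
  have hsqint : ∀ i, MeasureTheory.Integrable (fun t => (Δ i t) ^ 2) (m i) := by
    intro i
    refine SchrAux.integrable_of_ae_bound ((2*B)*(2*B))
      ((hΔm i).pow_const 2).aestronglyMeasurable ?_
    filter_upwards [hΔbd i] with x hx
    rw [abs_pow]
    calc |Δ i x| ^ 2 ≤ (2*B) ^ 2 := pow_le_pow_left₀ (abs_nonneg _) hx 2
      _ = (2*B)*(2*B) := sq (2*B)
  have hΔint : ∀ i, MeasureTheory.Integrable (Δ i) (m i) := fun i =>
    SchrAux.integrable_of_ae_bound (2*B) (hΔm i).aestronglyMeasurable (hΔbd i)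
  have hφint : ∀ i, MeasureTheory.Integrable (φ i) (m i) := fun i =>
    SchrAux.integrable_of_ae_bound B (hφm i).aestronglyMeasurable (hφB i)
  have hψint : ∀ i, MeasureTheory.Integrable (ψ i) (m i) := fun i =>
    SchrAux.integrable_of_ae_bound B (hψm i).aestronglyMeasurable (hψB i)
  have hmean : ∀ i : Fin N, (i : ℕ) < N - 1 → ∫ t, Δ i t ∂m i = 0 := by
    intro i hi
    have h1 : ∫ t, Δ i t ∂m i = (∫ t, φ i t ∂m i) - ∫ t, ψ i t ∂m i :=
      MeasureTheory.integral_sub (hφint i) (hψint i)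
    rw [h1, hφ.2 i hi, hψ.2 i hi, sub_zero]
  have hzero : ∀ i j : Fin N, i ≠ j → (∫ t, Δ i t ∂m i) = 0 ∨ (∫ t, Δ j t ∂m j) = 0 := by
    intro i j hij
    by_cases hi : (i : ℕ) < N - 1
    · exact Or.inl (hmean i hi)
    · have hiN : (i : ℕ) = N - 1 := le_antisymm (Nat.le_pred_of_lt i.isLt) (not_lt.1 hi)
      have hjne : (j : ℕ) ≠ (i : ℕ) := fun h => hij (Fin.ext h.symm)
      have hj : (j : ℕ) < N - 1 :=
        lt_of_le_of_ne (Nat.le_pred_of_lt j.isLt) (hiN ▸ hjne)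
      exact Or.inr (hmean j hj)
  have hIexp : ∫ x, (∑ i, Δ i (x i)) ^ 2 ∂P = I :=
    SchrAux.integral_sq_sum hΔm hΔbd h2B0 hzero
  have hlow : ∀ᵐ x ∂P, κ * (∑ i, Δ i (x i)) ^ 2 ≤
      (gammaFn K φ x - gammaFn K ψ x) * (∑ i, Δ i (x i)) := by
    filter_upwards [hKb, haeφ, haeψ] with x h1 h2 h3
    have hSφ : |∑ j, φ j (x j)| ≤ N * B := SchrAux.sum_abs_le hB0 x Finset.univ fun j _ => h2 j
    have hSψ : |∑ j, ψ j (x j)| ≤ N * B := SchrAux.sum_abs_le hB0 x Finset.univ fun j _ => h3 j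
    have hr1 : Real.exp (-(N * B)) ≤ Real.exp (∑ j, φ j (x j)) :=
      Real.exp_le_exp.2 (by cases abs_le.1 hSφ; linarith)
    have hr2 : Real.exp (-(N * B)) ≤ Real.exp (∑ j, ψ j (x j)) :=
      Real.exp_le_exp.2 (by cases abs_le.1 hSψ; linarith)
    have hkey := SchrAux.exp_strict hr1 hr2
    have hSd : ∑ i, Δ i (x i) = (∑ j, φ j (x j)) - ∑ j, ψ j (x j) := by
      rw [← Finset.sum_sub_distrib]
    have hdiff : gammaFn K φ x - gammaFn K ψ x
        = K x * (Real.exp (∑ j, φ j (x j)) - Real.exp (∑ j, ψ j (x j))) := by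
      unfold gammaFn; ring
    rw [hdiff, hSd, hκ_def]
    have hnn : 0 ≤ (Real.exp (∑ j, φ j (x j)) - Real.exp (∑ j, ψ j (x j))) *
        ((∑ j, φ j (x j)) - ∑ j, ψ j (x j)) :=
      le_trans (mul_nonneg (Real.exp_pos _).le (sq_nonneg _)) hkey
    calc a * Real.exp (-(N * B)) * ((∑ j, φ j (x j)) - ∑ j, ψ j (x j)) ^ 2
        = a * (Real.exp (-(N * B)) * ((∑ j, φ j (x j)) - ∑ j, ψ j (x j)) ^ 2) := by ring
      _ ≤ a * ((Real.exp (∑ j, φ j (x j)) - Real.exp (∑ j, ψ j (x j))) *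
            ((∑ j, φ j (x j)) - ∑ j, ψ j (x j))) := mul_le_mul_of_nonneg_left hkey ha.le
      _ ≤ K x * ((Real.exp (∑ j, φ j (x j)) - Real.exp (∑ j, ψ j (x j))) *
            ((∑ j, φ j (x j)) - ∑ j, ψ j (x j))) := mul_le_mul_of_nonneg_right h1.1 hnn
      _ = K x * (Real.exp (∑ j, φ j (x j)) - Real.exp (∑ j, ψ j (x j))) *
            ((∑ j, φ j (x j)) - ∑ j, ψ j (x j)) := by ring
  have hγdbd : ∀ᵐ x ∂P, |gammaFn K φ x - gammaFn K ψ x| ≤ 2 * (b * Real.exp (N * B)) := by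
    filter_upwards [hγφbd, hγψbd] with x h1 h2
    calc |gammaFn K φ x - gammaFn K ψ x| ≤ |gammaFn K φ x| + |gammaFn K ψ x| := abs_sub _ _
      _ ≤ 2 * (b * Real.exp (N * B)) := by linarith [h1.2.2, h2.2.2]
  have hsum_bd : ∀ᵐ x ∂P, |∑ i, Δ i (x i)| ≤ N * (2 * B) := by
    filter_upwards [haeΔ] with x hx
    exact SchrAux.sum_abs_le h2B0 x Finset.univ fun j _ => hx j
  have hsumm : Measurable fun x : ∀ k, X k => ∑ i, Δ i (x i) := SchrAux.meas_sum hΔm Finset.univ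
  have hsqPint : MeasureTheory.Integrable (fun x => (∑ i, Δ i (x i)) ^ 2) P := by
    refine SchrAux.integrable_of_ae_bound ((N * (2*B)) ^ 2)
      (hsumm.pow_const 2).aestronglyMeasurable ?_
    filter_upwards [hsum_bd] with x hx
    rw [abs_pow]
    exact pow_le_pow_left₀ (abs_nonneg _) hx 2
  have hprodint : MeasureTheory.Integrable
      (fun x => (gammaFn K φ x - gammaFn K ψ x) * (∑ i, Δ i (x i))) P := by
    refine SchrAux.integrable_of_ae_bound (2 * (b * Real.exp (N * B)) * (N * (2*B)))
      (((SchrAux.meas_gamma hK hφm).sub (SchrAux.meas_gamma hK hψm)).mul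
        hsumm).aestronglyMeasurable ?_
    filter_upwards [hγdbd, hsum_bd] with x h1 h2
    rw [abs_mul]
    exact mul_le_mul h1 h2 (abs_nonneg _) (by positivity)
  have hrep : ∫ x, (gammaFn K φ x - gammaFn K ψ x) * (∑ i, Δ i (x i)) ∂P
      = ∑ i, ∫ t, Δ i t * (μ i t - ν i t) ∂m i := by
    have hterm_int : ∀ (γ : (∀ k, X k) → ℝ), Measurable γ →
        (∀ᵐ x ∂P, |γ x| ≤ b * Real.exp (N * B)) → ∀ i : Fin N,
        MeasureTheory.Integrable (fun x => Δ i (x i) * γ x) P := by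
      intro γ hγ hγb i
      refine SchrAux.integrable_of_ae_bound ((2*B) * (b * Real.exp (N*B)))
        (((hΔm i).comp (measurable_pi_apply i)).mul hγ).aestronglyMeasurable ?_
      filter_upwards [SchrAux.ae_eval_pi m i (hΔbd i), hγb] with x h1 h2
      rw [abs_mul]
      exact mul_le_mul h1 h2 (abs_nonneg _) h2B0
    have hint1 := hterm_int (gammaFn K φ) (SchrAux.meas_gamma hK hφm)
      (hγφbd.mono fun x hx => hx.2.2)
    have hint2 := hterm_int (gammaFn K ψ) (SchrAux.meas_gamma hK hψm)
      (hγψbd.mono fun x hx => hx.2.2)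
    have hsw : (fun x => (gammaFn K φ x - gammaFn K ψ x) * (∑ i, Δ i (x i)))
        = fun x => ∑ i, (Δ i (x i) * gammaFn K φ x - Δ i (x i) * gammaFn K ψ x) := by
      funext x
      have h9 : ∑ i : Fin N, (Δ i (x i) * gammaFn K φ x - Δ i (x i) * gammaFn K ψ x)
          = (∑ i, Δ i (x i)) * gammaFn K φ x - (∑ i, Δ i (x i)) * gammaFn K ψ x := by
        rw [Finset.sum_sub_distrib, Finset.sum_mul, Finset.sum_mul]
      rw [h9]; ring
    have hsub : ∀ i : Fin N, MeasureTheory.Integrable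
        (fun x => Δ i (x i) * gammaFn K φ x - Δ i (x i) * gammaFn K ψ x) P :=
      fun i => (hint1 i).sub (hint2 i)
    rw [hsw, MeasureTheory.integral_finset_sum _ fun i _ => hsub i]
    refine Finset.sum_congr rfl fun i _ => ?_
    rw [MeasureTheory.integral_sub (hint1 i) (hint2 i),
      SchrAux.integral_eval_mul_gamma ha hK hKb hφm hφB hB0 i (hΔm i) (hΔbd i),
      SchrAux.integral_eval_mul_gamma ha hK hKb hψm hψB hB0 i (hΔm i) (hΔbd i)]
    have hμTi : ∫ t, Δ i t * schrT m K φ i t ∂m i = ∫ t, Δ i t * μ i t ∂m i :=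
      MeasureTheory.integral_congr_ae ((hTφ i).mono fun t ht => by dsimp only; rw [ht])
    have hνTi : ∫ t, Δ i t * schrT m K ψ i t ∂m i = ∫ t, Δ i t * ν i t ∂m i :=
      MeasureTheory.integral_congr_ae ((hTψ i).mono fun t ht => by dsimp only; rw [ht])
    have hμi_int : MeasureTheory.Integrable (fun t => Δ i t * μ i t) (m i) := by
      refine SchrAux.integrable_of_ae_bound ((2*B) * M)
        ((hΔm i).mul (hμm i)).aestronglyMeasurable ?_
      filter_upwards [hΔbd i, hμ.2 i] with t h1 h2
      rw [abs_mul]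
      refine mul_le_mul h1 ?_ (abs_nonneg _) h2B0
      have h4 : 0 < 1 / M := by positivity
      rw [abs_le]
      constructor
      · linarith [h2.1]
      · exact h2.2
    have hνi_int : MeasureTheory.Integrable (fun t => Δ i t * ν i t) (m i) := by
      refine SchrAux.integrable_of_ae_bound ((2*B) * M)
        ((hΔm i).mul (hνm i)).aestronglyMeasurable ?_
      filter_upwards [hΔbd i, hν.2 i] with t h1 h2
      rw [abs_mul]
      refine mul_le_mul h1 ?_ (abs_nonneg _) h2B0
      have h4 : 0 < 1 / M := by positivity
      rw [abs_le]
      constructor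
      · linarith [h2.1]
      · exact h2.2
    rw [hμTi, hνTi, ← MeasureTheory.integral_sub hμi_int hνi_int]
    refine MeasureTheory.integral_congr_ae (Filter.Eventually.of_forall fun t => ?_)
    ring
  have hIbound : κ * I ≤ N * (D * δ) := by
    have h1 : κ * I = ∫ x, κ * (∑ i, Δ i (x i)) ^ 2 ∂P := by
      rw [MeasureTheory.integral_const_mul, hIexp]
    have h2 : ∫ x, κ * (∑ i, Δ i (x i)) ^ 2 ∂P
        ≤ ∫ x, (gammaFn K φ x - gammaFn K ψ x) * (∑ i, Δ i (x i)) ∂P :=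
      MeasureTheory.integral_mono_ae (hsqPint.const_mul κ) hprodint hlow
    have h3 : ∀ i : Fin N, ∫ t, Δ i t * (μ i t - ν i t) ∂m i ≤ D * δ := by
      intro i
      have hint : MeasureTheory.Integrable (fun t => Δ i t * (μ i t - ν i t)) (m i) := by
        refine SchrAux.integrable_of_ae_bound ((2*B) * (2*M))
          ((hΔm i).mul ((hμm i).sub (hνm i))).aestronglyMeasurable ?_
        filter_upwards [hΔbd i, hμ.2 i, hν.2 i] with t h1 h2 h5
        rw [abs_mul]
        refine mul_le_mul h1 ?_ (abs_nonneg _) h2B0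
        have h4 : 0 < 1 / M := by positivity
        rw [abs_le]
        constructor
        · linarith [h2.1, h5.2]
        · linarith [h2.2, h5.1]
      have h5 := MeasureTheory.integral_mono_ae hint (MeasureTheory.integrable_const (D * δ)) ?_
      · rw [MeasureTheory.integral_const] at h5
        simpa using h5
      · filter_upwards [hDbd i, hδbd i] with t h6 h7
        calc Δ i t * (μ i t - ν i t) ≤ |Δ i t * (μ i t - ν i t)| := le_abs_self _
          _ = |Δ i t| * |μ i t - ν i t| := abs_mul _ _
          _ ≤ D * δ := mul_le_mul h6 h7 (abs_nonneg _) hD0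
    have h4 : ∑ i, ∫ t, Δ i t * (μ i t - ν i t) ∂m i ≤ N * (D * δ) := by
      calc ∑ i, ∫ t, Δ i t * (μ i t - ν i t) ∂m i
          ≤ ∑ _i : Fin N, D * δ := Finset.sum_le_sum fun i _ => h3 i
        _ = N * (D * δ) := by
            rw [Finset.sum_const, nsmul_eq_mul, Finset.card_univ, Fintype.card_fin]
    rw [← hrep] at h4
    linarith [h1, h2, h4]
  -- step 6 : pointwise bootstrap bound
  set T : ℝ := ∑ j, ∫ t, |Δ j t| ∂m j with hT_def
  have hT0 : 0 ≤ T :=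
    Finset.sum_nonneg fun j _ => MeasureTheory.integral_nonneg fun t => abs_nonneg _
  have hstep6 : ∀ i, ∀ᵐ xi ∂m i, |Δ i xi| ≤ M * δ + c5 * T := by
    intro i
    have hRφ := SchrAux.Rfun_bounds hφm hφB hB0 i
    have hRψ := SchrAux.Rfun_bounds hψm hψB hB0 i
    have hAφb := SchrAux.Afun_R_bounds ha hK hKb hφm hφB hB0 i
    have hAψb := SchrAux.Afun_R_bounds ha hK hKb hψm hψB hB0 i
    have hEφm : Measurable fun y : ∀ k, X k =>
        Real.exp (∑ j ∈ Finset.univ.erase i, φ j (y j)) :=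
      Real.measurable_exp.comp (SchrAux.meas_sum hφm _)
    have hEψm : Measurable fun y : ∀ k, X k =>
        Real.exp (∑ j ∈ Finset.univ.erase i, ψ j (y j)) :=
      Real.measurable_exp.comp (SchrAux.meas_sum hψm _)
    have hEφb := SchrAux.expsum_bounds (m := m) hφB hB0 (Finset.univ.erase i)
    have hEψb := SchrAux.expsum_bounds (m := m) hψB hB0 (Finset.univ.erase i)
    have hsumΔm : Measurable fun y : ∀ k, X k => ∑ j ∈ Finset.univ.erase i, Δ j (y j) :=
      SchrAux.meas_sum hΔm _
    have hsumΔint : MeasureTheory.Integrable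
        (fun y : ∀ k, X k => |∑ j ∈ Finset.univ.erase i, Δ j (y j)|) P := by
      refine SchrAux.integrable_of_ae_bound (N * (2*B)) hsumΔm.abs.aestronglyMeasurable ?_
      filter_upwards [haeΔ] with y hy
      rw [abs_abs]
      exact SchrAux.sum_abs_le h2B0 y _ fun j _ => hy j
    have hAdiff : ∀ᵐ xi ∂m i,
        |SchrAux.Afun m K φ i xi - SchrAux.Afun m K ψ i xi| ≤ b * Real.exp (N * B) * T := by
      filter_upwards [SchrAux.ae_update_pi m i hKb] with xi hxi
      have hintφ : MeasureTheory.Integrable (fun y : ∀ k, X k =>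
          K (Function.update y i xi) * Real.exp (∑ j ∈ Finset.univ.erase i, φ j (y j))) P := by
        refine SchrAux.integrable_of_ae_bound (b * Real.exp (N * B))
          ((hK.comp measurable_update_left).mul hEφm).aestronglyMeasurable ?_
        filter_upwards [hxi, hEφb] with y h1 h2
        rw [abs_mul, abs_of_nonneg (le_trans ha.le h1.1), abs_of_nonneg (Real.exp_pos _).le]
        exact mul_le_mul h1.2 h2.2 (Real.exp_pos _).le hb0.le
      have hintψ : MeasureTheory.Integrable (fun y : ∀ k, X k =>
          K (Function.update y i xi) * Real.exp (∑ j ∈ Finset.univ.erase i, ψ j (y j))) P := by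
        refine SchrAux.integrable_of_ae_bound (b * Real.exp (N * B))
          ((hK.comp measurable_update_left).mul hEψm).aestronglyMeasurable ?_
        filter_upwards [hxi, hEψb] with y h1 h2
        rw [abs_mul, abs_of_nonneg (le_trans ha.le h1.1), abs_of_nonneg (Real.exp_pos _).le]
        exact mul_le_mul h1.2 h2.2 (Real.exp_pos _).le hb0.le
      have hd1 : SchrAux.Afun m K φ i xi - SchrAux.Afun m K ψ i xi
          = ∫ y, (K (Function.update y i xi) * Real.exp (∑ j ∈ Finset.univ.erase i, φ j (y j))
            - K (Function.update y i xi) * Real.exp (∑ j ∈ Finset.univ.erase i, ψ j (y j))) ∂P :=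
        (MeasureTheory.integral_sub hintφ hintψ).symm
      rw [hd1]
      calc |∫ y, (K (Function.update y i xi) * Real.exp (∑ j ∈ Finset.univ.erase i, φ j (y j))
            - K (Function.update y i xi) * Real.exp (∑ j ∈ Finset.univ.erase i, ψ j (y j))) ∂P|
          ≤ ∫ y, |K (Function.update y i xi) * Real.exp (∑ j ∈ Finset.univ.erase i, φ j (y j))
            - K (Function.update y i xi) * Real.exp (∑ j ∈ Finset.univ.erase i, ψ j (y j))| ∂P :=
            by
              have h0 := MeasureTheory.norm_integral_le_integral_norm (μ := P)
                (f := fun y => K (Function.update y i xi)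
                    * Real.exp (∑ j ∈ Finset.univ.erase i, φ j (y j))
                  - K (Function.update y i xi)
                    * Real.exp (∑ j ∈ Finset.univ.erase i, ψ j (y j)))
              simpa [Real.norm_eq_abs] using h0
        _ ≤ ∫ y, b * Real.exp (N * B) * |∑ j ∈ Finset.univ.erase i, Δ j (y j)| ∂P := by
            refine MeasureTheory.integral_mono_ae (hintφ.sub hintψ).abs
              (hsumΔint.const_mul _) ?_
            filter_upwards [hxi, SchrAux.ae_pi_abs_le hφB, SchrAux.ae_pi_abs_le hψB]
              with y h1 h2 h3
            have hsφ : ∑ j ∈ Finset.univ.erase i, φ j (y j) ≤ N * B :=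
              (abs_le.1 (SchrAux.sum_abs_le hB0 y _ fun j _ => h2 j)).2
            have hsψ : ∑ j ∈ Finset.univ.erase i, ψ j (y j) ≤ N * B :=
              (abs_le.1 (SchrAux.sum_abs_le hB0 y _ fun j _ => h3 j)).2
            have hdsum : (∑ j ∈ Finset.univ.erase i, φ j (y j))
                - ∑ j ∈ Finset.univ.erase i, ψ j (y j)
                = ∑ j ∈ Finset.univ.erase i, Δ j (y j) := by
              rw [← Finset.sum_sub_distrib]
            have hlip := SchrAux.exp_lip hsφ hsψ
            rw [hdsum] at hlip
            calc |K (Function.update y i xi) * Real.exp (∑ j ∈ Finset.univ.erase i, φ j (y j))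
                - K (Function.update y i xi) * Real.exp (∑ j ∈ Finset.univ.erase i, ψ j (y j))|
                = |K (Function.update y i xi)|
                  * |Real.exp (∑ j ∈ Finset.univ.erase i, φ j (y j))
                    - Real.exp (∑ j ∈ Finset.univ.erase i, ψ j (y j))| := by
                  rw [← abs_mul, mul_sub]
              _ ≤ b * (Real.exp (N * B) * |∑ j ∈ Finset.univ.erase i, Δ j (y j)|) := by
                  refine mul_le_mul ?_ hlip (abs_nonneg _) hb0.le
                  rw [abs_of_nonneg (le_trans ha.le h1.1)]
                  exact h1.2
              _ = b * Real.exp (N * B) * |∑ j ∈ Finset.univ.erase i, Δ j (y j)| := by ring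
        _ = b * Real.exp (N * B) * ∫ y, |∑ j ∈ Finset.univ.erase i, Δ j (y j)| ∂P :=
            MeasureTheory.integral_const_mul _ _
        _ ≤ b * Real.exp (N * B) * T := by
            refine mul_le_mul_of_nonneg_left ?_ (by positivity)
            have habsint : ∀ j : Fin N, MeasureTheory.Integrable
                (fun y : ∀ k, X k => |Δ j (y j)|) P := by
              intro j
              refine SchrAux.integrable_of_ae_bound (2*B)
                (((hΔm j).comp (measurable_pi_apply j)).abs.aestronglyMeasurable) ?_
              filter_upwards [SchrAux.ae_eval_pi m j (hΔbd j)] with y hy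
              rwa [abs_abs]
            calc ∫ y, |∑ j ∈ Finset.univ.erase i, Δ j (y j)| ∂P
                ≤ ∫ y, ∑ j ∈ Finset.univ.erase i, |Δ j (y j)| ∂P := by
                  refine MeasureTheory.integral_mono_ae hsumΔint
                    (MeasureTheory.integrable_finset_sum _ fun j _ => habsint j)
                    (Filter.Eventually.of_forall fun y => Finset.abs_sum_le_sum_abs _ _)
              _ = ∑ j ∈ Finset.univ.erase i, ∫ y, |Δ j (y j)| ∂P :=
                  MeasureTheory.integral_finset_sum _ fun j _ => habsint j
              _ = ∑ j ∈ Finset.univ.erase i, ∫ t, |Δ j t| ∂m j :=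
                  Finset.sum_congr rfl fun j _ =>
                    SchrAux.integral_eval_pi m j (hΔm j).abs.aestronglyMeasurable
              _ ≤ T := Finset.sum_le_sum_of_subset_of_nonneg (Finset.subset_univ _)
                  fun j _ _ => MeasureTheory.integral_nonneg fun t => abs_nonneg _
    filter_upwards [hAdiff, hAφb, hAψb, hTφ i, hTψ i, hμ.2 i, hν.2 i, hδbd i]
      with xi h1 h2 h3 h4 h5 h6 h7 h8
    have hAφge : κ ≤ SchrAux.Afun m K φ i xi := by
      rw [hκ_def]
      calc a * Real.exp (-(N * B)) ≤ a * SchrAux.Rfun m φ i :=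
            mul_le_mul_of_nonneg_left hRφ.1 ha.le
        _ ≤ SchrAux.Afun m K φ i xi := h2.1
    have hAψge : κ ≤ SchrAux.Afun m K ψ i xi := by
      rw [hκ_def]
      calc a * Real.exp (-(N * B)) ≤ a * SchrAux.Rfun m ψ i :=
            mul_le_mul_of_nonneg_left hRψ.1 ha.le
        _ ≤ SchrAux.Afun m K ψ i xi := h3.1
    have hAφpos : 0 < SchrAux.Afun m K φ i xi := lt_of_lt_of_le hκ0 hAφge
    have hAψpos : 0 < SchrAux.Afun m K ψ i xi := lt_of_lt_of_le hκ0 hAψge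
    have hμpos : 0 < μ i xi := lt_of_lt_of_le (by positivity) h6.1
    have hνpos : 0 < ν i xi := lt_of_lt_of_le (by positivity) h7.1
    have hlogφ : φ i xi = Real.log (μ i xi) - Real.log (SchrAux.Afun m K φ i xi) := by
      have hidφ : Real.exp (φ i xi) * SchrAux.Afun m K φ i xi = μ i xi := by
        rw [← SchrAux.schrT_eq]; exact h4
      rw [← hidφ, Real.log_mul (Real.exp_pos _).ne' hAφpos.ne', Real.log_exp]
      ring
    have hlogψ : ψ i xi = Real.log (ν i xi) - Real.log (SchrAux.Afun m K ψ i xi) := by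
      have hidψ : Real.exp (ψ i xi) * SchrAux.Afun m K ψ i xi = ν i xi := by
        rw [← SchrAux.schrT_eq]; exact h5
      rw [← hidψ, Real.log_mul (Real.exp_pos _).ne' hAψpos.ne', Real.log_exp]
      ring
    have hΔeq : Δ i xi = (Real.log (μ i xi) - Real.log (ν i xi))
        - (Real.log (SchrAux.Afun m K φ i xi) - Real.log (SchrAux.Afun m K ψ i xi)) := by
      show φ i xi - ψ i xi = _
      rw [hlogφ, hlogψ]
      ring
    have hbound1 : |Real.log (μ i xi) - Real.log (ν i xi)| ≤ M * δ := by
      have h9 := SchrAux.log_lip (r := 1 / M) (by positivity) h6.1 h7.1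
      have h10 : |μ i xi - ν i xi| / (1 / M) = M * |μ i xi - ν i xi| := by
        field_simp
      rw [h10] at h9
      exact h9.trans (mul_le_mul_of_nonneg_left h8 hM0.le)
    have hbound2 : |Real.log (SchrAux.Afun m K φ i xi) - Real.log (SchrAux.Afun m K ψ i xi)| ≤ c5 * T := by
      have h9 := SchrAux.log_lip hκ0 hAφge hAψge
      have h10 : |SchrAux.Afun m K φ i xi - SchrAux.Afun m K ψ i xi| / κ ≤ b * Real.exp (N * B) * T / κ :=
        (div_le_div_iff_of_pos_right hκ0).2 h1
      have h11 : b * Real.exp (N * B) * T / κ = c5 * T := by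
        rw [hc5_def, hκ_def, div_mul_eq_mul_div]
      linarith [h9, h10]
    calc |Δ i xi| ≤ |Real.log (μ i xi) - Real.log (ν i xi)|
          + |Real.log (SchrAux.Afun m K φ i xi) - Real.log (SchrAux.Afun m K ψ i xi)| := by
          rw [hΔeq]; exact abs_sub _ _
      _ ≤ M * δ + c5 * T := add_le_add hbound1 hbound2
  -- conclusion
  rcases eq_or_lt_of_le hD0 with hDz | hDpos
  · calc D = 0 := hDz.symm
      _ ≤ C * δ := by positivity
  · set ε : ℝ := D / (2 * c5 * N) with hε_def
    have hε : 0 < ε := by positivity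
    have hIsum : I ≤ N * (D * δ) / κ := by
      rw [le_div_iff₀ hκ0]
      linarith [hIbound]
    have hTb : T ≤ N * (ε / 2) + (1 / (2 * ε)) * I := by
      have hperj : ∀ j : Fin N, ∫ t, |Δ j t| ∂m j
          ≤ ε / 2 + (1 / (2 * ε)) * ∫ t, (Δ j t) ^ 2 ∂m j := by
        intro j
        have h1 : ∫ t, |Δ j t| ∂m j
            ≤ ∫ t, (ε / 2 + (1 / (2 * ε)) * (Δ j t) ^ 2) ∂m j := by
          refine MeasureTheory.integral_mono_ae (hΔint j).abs
            ((MeasureTheory.integrable_const _).add ((hsqint j).const_mul _)) ?_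
          refine Filter.Eventually.of_forall fun t => ?_
          calc |Δ j t| ≤ ε / 2 + (Δ j t) ^ 2 / (2 * ε) := SchrAux.abs_le_amgm _ _ hε
            _ = ε / 2 + (1 / (2 * ε)) * (Δ j t) ^ 2 := by ring
        rwa [MeasureTheory.integral_add (MeasureTheory.integrable_const _)
          ((hsqint j).const_mul _), MeasureTheory.integral_const,
          MeasureTheory.integral_const_mul, probReal_univ, one_smul] at h1
      calc T ≤ ∑ j : Fin N, (ε / 2 + (1 / (2 * ε)) * ∫ t, (Δ j t) ^ 2 ∂m j) :=
            Finset.sum_le_sum fun j _ => hperj j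
        _ = N * (ε / 2) + (1 / (2 * ε)) * I := by
            rw [Finset.sum_add_distrib, Finset.sum_const, nsmul_eq_mul, Finset.card_univ,
              Fintype.card_fin, ← Finset.mul_sum]
    have hcT : c5 * T ≤ D / 4 + c5 ^ 2 * N ^ 2 / κ * δ := by
      have h2 : (1 / (2 * ε)) * I ≤ (1 / (2 * ε)) * (N * (D * δ) / κ) :=
        mul_le_mul_of_nonneg_left hIsum (by positivity)
      have e1 : c5 * (N * (ε / 2)) = D / 4 := by
        rw [hε_def]
        field_simp
        ring
      have e2 : c5 * ((1 / (2 * ε)) * (N * (D * δ) / κ)) = c5 ^ 2 * N ^ 2 / κ * δ := by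
        rw [hε_def]
        field_simp
      calc c5 * T ≤ c5 * (N * (ε / 2) + (1 / (2 * ε)) * (N * (D * δ) / κ)) := by
            refine mul_le_mul_of_nonneg_left ?_ hc50.le
            linarith [hTb, h2]
        _ = D / 4 + c5 ^ 2 * N ^ 2 / κ * δ := by rw [mul_add, e1, e2]
    have hRB0 : 0 ≤ M * δ + D / 4 + c5 ^ 2 * N ^ 2 / κ * δ := by positivity
    have hsup : SΔ ≤ ENNReal.ofReal (M * δ + D / 4 + c5 ^ 2 * N ^ 2 / κ * δ) := by
      refine iSup_le fun i => ?_
      have hae : ∀ᵐ x ∂m i, ‖φ i x - ψ i x‖ ≤ M * δ + D / 4 + c5 ^ 2 * N ^ 2 / κ * δ := by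
        filter_upwards [hstep6 i] with x hx
        rw [Real.norm_eq_abs]
        calc |φ i x - ψ i x| = |Δ i x| := rfl
          _ ≤ M * δ + c5 * T := hx
          _ ≤ M * δ + D / 4 + c5 ^ 2 * N ^ 2 / κ * δ := by linarith [hcT]
      have h3 := MeasureTheory.eLpNorm_le_of_ae_bound (p := (⊤ : ℝ≥0∞)) hae
      simpa using h3
    have hDle : D ≤ M * δ + D / 4 + c5 ^ 2 * N ^ 2 / κ * δ :=
      ENNReal.toReal_le_of_le_ofReal hRB0 hsup
    have hexpC : C * δ = (4 / 3) * (M * δ) + (4 / 3) * (c5 ^ 2 * N ^ 2 / κ * δ)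
        + (4 / 3) * δ := by
      rw [hC_def]
      ring
    have hlast : 0 ≤ (4 / 3) * δ := by positivity
    linarith [hDle, hexpC, hlast]
end
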